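/- arXiv:2207.03165 — 4 statements merged into one kernel-verified Lean document; each statement's English description precedes it below -/
import Mathlib

section
/- Let k ≥ 2 be a natural number. Then n(k,3) = 2k+1; that is, every element of the alternating group A_{2k+1} can be written as a product of k many 3-cycles of S_{2k+1}, and for every n > 2k+1 there exists an element of A_n that cannot be written as a product of k many 3-cycles of S_n. -/
open Equiv

section Helpers
open Equiv.Perm

variable {α : Type*} [Fintype α] [DecidableEq α]

/-- `P` is a set of "sources" of pairwise disjoint edges `{x, σ x}`. -/
def IsMatch (σ : Perm α) (P : Finset α) : Prop :=
  (∀ x ∈ P, σ x ≠ x) ∧ ∀ x ∈ P, ∀ y ∈ P, x ≠ y → x ≠ σ y ∧ σ x ≠ y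

lemma isMatch_inv {σ : Perm α} {P : Finset α} (h : IsMatch σ P) :
    IsMatch σ⁻¹ (P.image σ) := by
  obtain ⟨h1, h2⟩ := h
  constructor
  · rintro x hx
    simp only [Finset.mem_image] at hx
    obtain ⟨y, hy, rfl⟩ := hx
    simp only [Perm.inv_def, Equiv.symm_apply_apply]
    exact fun hh => h1 y hy hh.symm
  · rintro x hx y hy hxy
    simp only [Finset.mem_image] at hx hy
    obtain ⟨a, ha, rfl⟩ := hx
    obtain ⟨b, hb, rfl⟩ := hy
    simp only [Perm.inv_def, Equiv.symm_apply_apply]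
    have hab : a ≠ b := fun h => hxy (by rw [h])
    obtain ⟨c1, c2⟩ := h2 a ha b hb hab
    exact ⟨c2, by simpa using c1⟩

lemma perm_maps_to {τ : Perm α} {S : Finset α} (hτ : ∀ x ∉ S, τ x = x) :
    ∀ s ∈ S, τ s ∈ S := by
  intro s hs
  by_contra hns
  have h1 : τ (τ s) = τ s := hτ _ hns
  have h2 : τ s = s := τ.injective h1
  rw [h2] at hns
  exact hns hs

lemma perm_inv_fix {τ : Perm α} {S : Finset α} (hτ : ∀ x ∉ S, τ x = x) :
    ∀ x ∉ S, τ⁻¹ x = x := by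
  intro x hx
  by_cases h : τ⁻¹ x ∈ S
  · exact absurd (by rw [← Equiv.apply_symm_apply τ x]; exact perm_maps_to hτ _ h) hx
  · have h1 := hτ _ h
    rw [Perm.inv_def, Equiv.apply_symm_apply] at h1
    exact h1.symm

set_option linter.unusedSectionVars false

lemma key_step {σ τ : Perm α} {S P : Finset α} (hS : S.card ≤ 3)
    (hτ : ∀ x ∉ S, τ x = x) (hP : IsMatch (σ * τ) P) :
    ∃ Q : Finset α, IsMatch σ Q ∧ P.card ≤ Q.card + 1 := by
  obtain ⟨h1, h2⟩ := hP
  set B := P ∩ S with hBdef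
  have hBP : B ⊆ P := Finset.inter_subset_left
  have hBS : B ⊆ S := Finset.inter_subset_right
  have hPnB : ∀ x ∈ P, x ∉ B → x ∉ S := fun x hx hxb hxs =>
    hxb (Finset.mem_inter.mpr ⟨hx, hxs⟩)
  have happ : ∀ x ∉ S, σ x = (σ * τ) x := by
    intro x hx; simp [Perm.mul_apply, hτ x hx]
  by_cases hc1 : B.card ≤ 1
  · -- drop the (at most one) source in S
    refine ⟨P \ B, ⟨?_, ?_⟩, ?_⟩
    · intro x hx
      obtain ⟨hxP, hxB⟩ := Finset.mem_sdiff.mp hx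
      rw [happ x (hPnB x hxP hxB)]
      exact h1 x hxP
    · intro x hx y hy hxy
      obtain ⟨hxP, hxB⟩ := Finset.mem_sdiff.mp hx
      obtain ⟨hyP, hyB⟩ := Finset.mem_sdiff.mp hy
      rw [happ x (hPnB x hxP hxB), happ y (hPnB y hyP hyB)]
      exact h2 x hxP y hyP hxy
    · have := Finset.card_sdiff_of_subset hBP
      have := Finset.card_le_card hBP
      omega
  · by_cases hc3 : B.card = 3
    · -- B = S ⊆ P : keep P itself
      have hBS' : B = S := Finset.eq_of_subset_of_card_le hBS (by omega)
      have hSP : ∀ s ∈ S, s ∈ P := fun s hs => hBP (hBS' ▸ hs)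
      have hτinv := perm_inv_fix hτ
      have hτinvS : ∀ s ∈ S, τ⁻¹ s ∈ S := perm_maps_to hτinv
      have hστ : ∀ s ∈ S, ∀ t ∈ S, (σ * τ) s ≠ t := by
        intro s hs t ht
        by_cases hst : s = t
        · subst hst; exact h1 s (hSP s hs)
        · exact (h2 s (hSP s hs) t (hSP t ht) hst).2
      have hσS : ∀ t ∈ S, ∀ s ∈ S, σ t ≠ s := by
        intro t ht s hs
        have hu : τ⁻¹ t ∈ S := hτinvS t ht
        have : σ t = (σ * τ) (τ⁻¹ t) := by simp [Perm.mul_apply]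
        rw [this]
        exact hστ _ hu s hs
      refine ⟨P, ⟨?_, ?_⟩, by omega⟩
      · intro x hx
        by_cases hxS : x ∈ S
        · exact hσS x hxS x hxS
        · rw [happ x hxS]; exact h1 x hx
      · intro x hx y hy hxy
        by_cases hxS : x ∈ S <;> by_cases hyS : y ∈ S
        · exact ⟨fun h => hσS y hyS x hxS h.symm, hσS x hxS y hyS⟩
        · refine ⟨by rw [happ y hyS]; exact (h2 x hx y hy hxy).1, ?_⟩
          have hu : τ⁻¹ x ∈ S := hτinvS x hxS
          have huy : τ⁻¹ x ≠ y := fun h => hyS (h ▸ hu)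
          have : σ x = (σ * τ) (τ⁻¹ x) := by simp [Perm.mul_apply]
          rw [this]
          exact (h2 _ (hSP _ hu) y hy huy).2
        · constructor
          · have hv : τ⁻¹ y ∈ S := hτinvS y hyS
            have hxv : x ≠ τ⁻¹ y := fun h => hxS (h ▸ hv)
            have : σ y = (σ * τ) (τ⁻¹ y) := by simp [Perm.mul_apply]
            rw [this]
            exact (h2 x hx _ (hSP _ hv) hxv).1
          · rw [happ x hxS]; exact (h2 x hx y hy hxy).2
        · rw [happ x hxS, happ y hyS]; exact h2 x hx y hy hxy
    · -- B.card = 2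
      have hc2 : B.card = 2 := by
        have := Finset.card_le_card hBS
        omega
      -- find w ∈ B with τ w ∈ B
      have hex : ∃ w ∈ B, τ w ∈ B := by
        by_contra hno
        push_neg at hno
        obtain ⟨u, v, huv, hBuv⟩ := Finset.card_eq_two.mp hc2
        have hu : u ∈ B := by rw [hBuv]; simp
        have hv : v ∈ B := by rw [hBuv]; simp
        have htu : τ u ∈ S \ B := Finset.mem_sdiff.mpr ⟨perm_maps_to hτ u (hBS hu), hno u hu⟩
        have htv : τ v ∈ S \ B := Finset.mem_sdiff.mpr ⟨perm_maps_to hτ v (hBS hv), hno v hv⟩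
        have hne : τ u ≠ τ v := fun h => huv (τ.injective h)
        have hsub : ({τ u, τ v} : Finset α) ⊆ S \ B := by
          intro x hx
          rcases Finset.mem_insert.mp hx with h | h
          · exact h ▸ htu
          · exact (Finset.mem_singleton.mp h) ▸ htv
        have h2' : ({τ u, τ v} : Finset α).card = 2 := Finset.card_pair hne
        have := Finset.card_le_card hsub
        have := Finset.card_sdiff_of_subset hBS
        omega
      obtain ⟨w, hwB, hzB⟩ := hex
      set z := τ w with hz
      have hwP : w ∈ P := hBP hwB
      have hwS : w ∈ S := hBS hwB
      have hzP : z ∈ P := hBP hzB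
      have hzS : z ∈ S := hBS hzB
      have hσz : σ z = (σ * τ) w := by simp [Perm.mul_apply, hz]
      refine ⟨insert z (P \ B), ⟨?_, ?_⟩, ?_⟩
      · intro x hx
        rcases Finset.mem_insert.mp hx with rfl | hx'
        · rw [hσz]
          by_cases hwz : w = z
          · rw [hwz]; exact h1 z hzP
          · exact (h2 w hwP z hzP hwz).2
        · obtain ⟨hxP, hxB⟩ := Finset.mem_sdiff.mp hx'
          rw [happ x (hPnB x hxP hxB)]
          exact h1 x hxP
      · intro x hx y hy hxy
        rcases Finset.mem_insert.mp hx with rfl | hx' <;>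
          rcases Finset.mem_insert.mp hy with rfl | hy'
        · exact absurd rfl hxy
        · obtain ⟨hyP, hyB⟩ := Finset.mem_sdiff.mp hy'
          have hyS := hPnB y hyP hyB
          constructor
          · rw [happ y hyS]
            exact (h2 z hzP y hyP hxy).1
          · rw [hσz]
            have hwy : w ≠ y := fun h => hyS (h ▸ hwS)
            exact (h2 w hwP y hyP hwy).2
        · obtain ⟨hxP, hxB⟩ := Finset.mem_sdiff.mp hx'
          have hxS := hPnB x hxP hxB
          constructor
          · rw [hσz]
            have hwx : w ≠ x := fun h => hxS (h ▸ hwS)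
            exact fun h => (h2 w hwP x hxP hwx).2 h.symm
          · rw [happ x hxS]
            exact (h2 x hxP z hzP hxy).2
        · obtain ⟨hxP, hxB⟩ := Finset.mem_sdiff.mp hx'
          obtain ⟨hyP, hyB⟩ := Finset.mem_sdiff.mp hy'
          rw [happ x (hPnB x hxP hxB), happ y (hPnB y hyP hyB)]
          exact h2 x hxP y hyP hxy
      · have hznB : z ∉ P \ B := fun h => (Finset.mem_sdiff.mp h).2 hzB
        rw [Finset.card_insert_of_notMem hznB, Finset.card_sdiff_of_subset hBP]
        have := Finset.card_le_card hBP
        omega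

lemma count_lemma : ∀ L : List (Perm α), (∀ τ ∈ L, τ.support.card ≤ 3) →
    ∀ P : Finset α, IsMatch L.prod P → P.card ≤ L.length := by
  intro L
  induction L with
  | nil =>
    intro _ P hP
    have : P = ∅ := Finset.eq_empty_iff_forall_notMem.mpr
      (fun x hx => hP.1 x hx (by simp))
    simp [this]
  | cons τ L ih =>
    intro hL P hP
    rw [List.prod_cons] at hP
    have h1 : IsMatch (τ * L.prod)⁻¹ (P.image (τ * L.prod)) := isMatch_inv hP
    rw [mul_inv_rev] at h1
    have hτ3 : τ.support.card ≤ 3 := hL τ (by simp)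
    have hτfix : ∀ x ∉ τ.support, τ⁻¹ x = x := by
      intro x hx
      rw [← Equiv.Perm.support_inv] at hx
      exact Equiv.Perm.notMem_support.mp hx
    obtain ⟨Q, hQ, hcard⟩ := key_step hτ3 hτfix h1
    have h2 : IsMatch L.prod (Q.image ⇑(L.prod⁻¹)) := by
      have := isMatch_inv hQ
      rwa [inv_inv] at this
    have h3 := ih (fun τ' hτ' => hL τ' (by simp [hτ'])) _ h2
    have e1 : (P.image ⇑(τ * L.prod)).card = P.card :=
      Finset.card_image_of_injective _ (Equiv.injective _)
    have e2 : (Q.image ⇑(L.prod⁻¹)).card = Q.card :=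
      Finset.card_image_of_injective _ (Equiv.injective _)
    simp only [List.length_cons]
    omega

end Helpers

/-- `σ ∈ S_n` is a product of `k` many `l`-cycles. -/
def IsProdOfCycles (n k l : ℕ) (σ : Equiv.Perm (Fin n)) : Prop :=
  ∃ c : Fin k → Equiv.Perm (Fin n),
    (∀ i, (c i).IsCycle ∧ (c i).support.card = l) ∧ σ = (List.ofFn c).prod

set_option maxHeartbeats 800000 in
lemma part2 (k n : ℕ) (hk : 2 ≤ k) (hn : 2 * k + 1 < n) :
    ∃ σ ∈ alternatingGroup (Fin n), ¬ IsProdOfCycles n k 3 σ := by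
  obtain ⟨m, rfl⟩ : ∃ m, n = m + 1 := ⟨n - 1, by omega⟩
  obtain ⟨j, hjv⟩ : ∃ j : Fin (m+1), (j : ℕ) = 2 * k + 1 := by
    exact ⟨⟨2 * k + 1, hn⟩, rfl⟩
  obtain ⟨z0, hz0v⟩ : ∃ z : Fin (m+1), (z : ℕ) = 0 := ⟨⟨0, by omega⟩, rfl⟩
  obtain ⟨z2, hz2v⟩ : ∃ z : Fin (m+1), (z : ℕ) = 2 := ⟨⟨2, by omega⟩, rfl⟩
  obtain ⟨σ₀, hσ₀⟩ : ∃ s : Perm (Fin (m+1)), s = Fin.cycleRange j * Equiv.swap z0 z2 :=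
    ⟨_, rfl⟩
  have hz02 : z0 ≠ z2 := by simp [Fin.ext_iff, hz0v, hz2v]
  refine ⟨σ₀, ?_, ?_⟩
  · rw [Equiv.Perm.mem_alternatingGroup, hσ₀, Equiv.Perm.sign_mul,
      Fin.sign_cycleRange, Equiv.Perm.sign_swap hz02]
    rw [hjv, Odd.neg_one_pow ⟨k, by ring⟩]
    simp
  · rintro ⟨c, hc, hprod⟩
    obtain ⟨g, hgval⟩ : ∃ g : Fin (k + 1) → Fin (m + 1), ∀ i : Fin (k + 1),
        ((g i : Fin (m+1)) : ℕ) = if (i : ℕ) ≤ 1 then (i : ℕ) else 2 * (i : ℕ) :=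
      ⟨fun i => ⟨if (i : ℕ) ≤ 1 then (i : ℕ) else 2 * (i : ℕ), by
        have := i.isLt; split_ifs <;> omega⟩, fun i => rfl⟩
    have hσval : ∀ i : Fin (k + 1), ((σ₀ (g i) : Fin (m+1)) : ℕ) =
        if (i : ℕ) = 0 then 3 else if (i : ℕ) = 1 then 2 else 2 * (i : ℕ) + 1 := by
      intro i
      have hik : (i : ℕ) ≤ k := Nat.lt_succ_iff.mp i.isLt
      by_cases h0 : (i : ℕ) = 0
      · have hgi : g i = z0 := by
          apply Fin.ext; rw [hgval i, h0, hz0v]; simp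
        rw [hgi, hσ₀, Equiv.Perm.mul_apply, Equiv.swap_apply_left,
          Fin.coe_cycleRange_of_lt (by rw [Fin.lt_def, hjv, hz2v]; omega)]
        rw [hz2v, h0]
        norm_num
      · by_cases h1 : (i : ℕ) = 1
        · have hgi : g i = (⟨1, by omega⟩ : Fin (m+1)) := by
            apply Fin.ext; rw [hgval i, h1]; simp
          rw [hgi, hσ₀, Equiv.Perm.mul_apply,
            Equiv.swap_apply_of_ne_of_ne (by simp [Fin.ext_iff, hz0v])
              (by simp [Fin.ext_iff, hz2v]),
            Fin.coe_cycleRange_of_lt (by rw [Fin.lt_def, hjv]; simp; omega)]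
          simp [h0, h1]
        · have hgi : g i = (⟨2 * (i : ℕ), by omega⟩ : Fin (m+1)) := by
            apply Fin.ext; rw [hgval i]; simp only [if_neg (by omega : ¬ (i:ℕ) ≤ 1)]
          rw [hgi, hσ₀, Equiv.Perm.mul_apply,
            Equiv.swap_apply_of_ne_of_ne (by rw [ne_eq, Fin.ext_iff, hz0v]; simp only [Fin.val_mk]; omega)
              (by rw [ne_eq, Fin.ext_iff, hz2v]; simp only [Fin.val_mk]; omega),
            Fin.coe_cycleRange_of_lt (by rw [Fin.lt_def, hjv]; simp; omega)]
          simp [h0, h1]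
    obtain ⟨P, hP⟩ : ∃ P : Finset (Fin (m + 1)), P = Finset.image g Finset.univ :=
      ⟨_, rfl⟩
    have hginj : Function.Injective g := by
      intro a b hab
      have h := congrArg Fin.val hab
      rw [hgval a, hgval b] at h
      have ha := a.isLt; have hb := b.isLt
      apply Fin.ext
      split_ifs at h <;> omega
    have hPcard : P.card = k + 1 := by
      rw [hP, Finset.card_image_of_injective _ hginj, Finset.card_univ,
        Fintype.card_fin]
    have hmatch : IsMatch σ₀ P := by
      have key : ∀ a : Fin (k+1), ∀ b : Fin (k+1), σ₀ (g a) ≠ g b := by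
        intro a b hab
        have h := congrArg Fin.val hab
        rw [hσval a, hgval b] at h
        have ha := Nat.lt_succ_iff.mp a.isLt
        have hb := Nat.lt_succ_iff.mp b.isLt
        split_ifs at h <;> omega
      constructor
      · intro x hx
        rw [hP] at hx
        obtain ⟨i, _, rfl⟩ := Finset.mem_image.mp hx
        exact key i i
      · intro x hx y hy hxy
        rw [hP] at hx hy
        obtain ⟨a, _, rfl⟩ := Finset.mem_image.mp hx
        obtain ⟨b, _, rfl⟩ := Finset.mem_image.mp hy
        exact ⟨fun h => key b a h.symm, key a b⟩
    have hL3 : ∀ τ ∈ List.ofFn c, τ.support.card ≤ 3 := by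
      intro τ hτ
      rw [List.mem_ofFn] at hτ
      obtain ⟨i, rfl⟩ := hτ
      exact le_of_eq (hc i).2
    have := count_lemma (List.ofFn c) hL3 P (by rwa [← hprod])
    rw [List.length_ofFn] at this
    omega

lemma decomp {α : Type*} [Fintype α] [DecidableEq α] :
    ∀ (m : ℕ) (σ : Perm α), σ.support.card ≤ m → Equiv.Perm.sign σ = 1 →
    ∃ L : List (Perm α), (∀ c ∈ L, c.IsCycle ∧ c.support.card = 3) ∧
      σ = L.prod ∧ 2 * L.length ≤ σ.support.card := by
  intro m
  induction m with
  | zero =>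
    intro σ hcard _
    have : σ = 1 := by
      rw [← Equiv.Perm.card_support_eq_zero]; omega
    exact ⟨[], by simp, by simp [this], by simp⟩
  | succ m ih =>
    intro σ hcard hsign
    by_cases h1 : σ = 1
    · exact ⟨[], by simp, by simp [h1], by simp⟩
    obtain ⟨a0, ha0⟩ : ∃ a, σ a ≠ a := by
      by_contra hno
      push_neg at hno
      exact h1 (Equiv.ext hno)
    by_cases hA : ∃ a, σ a ≠ a ∧ σ (σ a) ≠ a
    · -- point in a cycle of length ≥ 3
      obtain ⟨a, ha1, ha2⟩ := hA
      obtain ⟨b, hb⟩ : ∃ b, b = σ a := ⟨_, rfl⟩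
      obtain ⟨d, hd⟩ : ∃ d, d = σ b := ⟨_, rfl⟩
      have hba : b ≠ a := hb ▸ ha1
      have hda : d ≠ a := by rw [hd, hb]; exact ha2
      have hdb : d ≠ b := by
        rw [hd, hb]
        intro h
        exact ha1 (σ.injective h)
      -- τ is the 3-cycle (a b d)
      obtain ⟨τ, hτdef⟩ : ∃ τ : Perm α, τ = Equiv.swap a d * Equiv.swap a b := ⟨_, rfl⟩
      have hτ3 : Equiv.Perm.IsThreeCycle τ := by
        rw [hτdef]
        exact Equiv.Perm.isThreeCycle_swap_mul_swap_same hda.symm hba.symm hdb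
      have hτa : τ a = b := by
        rw [hτdef, Equiv.Perm.mul_apply, Equiv.swap_apply_left,
          Equiv.swap_apply_of_ne_of_ne hba (Ne.symm hdb)]
      have hτb : τ b = d := by
        rw [hτdef, Equiv.Perm.mul_apply, Equiv.swap_apply_right,
          Equiv.swap_apply_left]
      have hτd : τ d = a := by
        rw [hτdef, Equiv.Perm.mul_apply, Equiv.swap_apply_of_ne_of_ne hda hdb,
          Equiv.swap_apply_right]
      have hτfix : ∀ x, x ≠ a → x ≠ b → x ≠ d → τ x = x := by
        intro x hxa hxb hxd
        rw [hτdef, Equiv.Perm.mul_apply, Equiv.swap_apply_of_ne_of_ne hxa hxb,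
          Equiv.swap_apply_of_ne_of_ne hxa hxd]
      obtain ⟨σ', hσ'⟩ : ∃ s : Perm α, s = τ⁻¹ * σ := ⟨_, rfl⟩
      have hσ'a : σ' a = a := by
        rw [hσ', Equiv.Perm.mul_apply, ← hb, ← hτa]
        simp
      have hσ'b : σ' b = b := by
        rw [hσ', Equiv.Perm.mul_apply, ← hd, ← hτb]
        simp
      have hmema : a ∈ σ.support := Equiv.Perm.mem_support.mpr ha1
      have hmemb : b ∈ σ.support := Equiv.Perm.mem_support.mpr (by rw [← hd]; exact hdb)
      have hmemd : d ∈ σ.support := by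
        rw [Equiv.Perm.mem_support]
        intro h
        exact hdb (σ.injective (h.trans hd))
      have hout : ∀ x, x ∉ σ.support → σ' x = x := by
        intro x hx
        have hxfix : σ x = x := Equiv.Perm.notMem_support.mp hx
        have hxa : x ≠ a := fun h => hx (h ▸ hmema)
        have hxb : x ≠ b := fun h => hx (h ▸ hmemb)
        have hxd : x ≠ d := fun h => hx (h ▸ hmemd)
        rw [hσ', Equiv.Perm.mul_apply, hxfix, Equiv.Perm.inv_def,
          Equiv.symm_apply_eq]
        exact (hτfix x hxa hxb hxd).symm
      have hsub : σ'.support ⊆ (σ.support.erase a).erase b := by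
        intro x hx
        have hxmove : σ' x ≠ x := Equiv.Perm.mem_support.mp hx
        rw [Finset.mem_erase, Finset.mem_erase]
        refine ⟨fun h => hxmove (h ▸ hσ'b), fun h => hxmove (h ▸ hσ'a), ?_⟩
        by_contra h
        exact hxmove (hout x h)
      have hbe : b ∈ σ.support.erase a := Finset.mem_erase.mpr ⟨hba, hmemb⟩
      have hcard2 : σ'.support.card + 2 ≤ σ.support.card := by
        have h1 := Finset.card_le_card hsub
        rw [Finset.card_erase_of_mem hbe, Finset.card_erase_of_mem hmema] at h1
        have h2 : 1 ≤ (σ.support.erase a).card := Finset.card_pos.mpr ⟨b, hbe⟩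
        have h3 := Finset.card_erase_of_mem hmema
        omega
      have hsign' : Equiv.Perm.sign σ' = 1 := by
        rw [hσ', Equiv.Perm.sign_mul, Equiv.Perm.sign_inv, hτ3.sign, hsign]
        simp
      obtain ⟨L', hL', hprod', hlen'⟩ := ih σ' (by omega) hsign'
      refine ⟨τ :: L', ?_, ?_, ?_⟩
      · intro x hx
        rcases List.mem_cons.mp hx with rfl | hx'
        · exact ⟨hτ3.isCycle, hτ3.card_support⟩
        · exact hL' x hx'
      · rw [List.prod_cons, ← hprod', hσ']
        group
      · simp only [List.length_cons]
        omega
    · -- σ is an involution: peel off a pair of 2-cycles with two 3-cycles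
      push_neg at hA
      obtain ⟨b, hb⟩ : ∃ b, b = σ a0 := ⟨_, rfl⟩
      have hba : b ≠ a0 := hb ▸ ha0
      have hσb : σ b = a0 := by rw [hb]; exact hA a0 ha0
      obtain ⟨a', ha', ha'a, ha'b⟩ : ∃ x, σ x ≠ x ∧ x ≠ a0 ∧ x ≠ b := by
        by_contra hno
        push_neg at hno
        have hswap : σ = Equiv.swap a0 b := by
          apply Equiv.ext
          intro x
          by_cases hxa : x = a0
          · rw [hxa, ← hb, Equiv.swap_apply_left]
          · by_cases hxb : x = b
            · rw [hxb, hσb, Equiv.swap_apply_right]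
            · rw [Equiv.swap_apply_of_ne_of_ne hxa hxb]
              by_contra hmoves
              exact hxb (hno x hmoves hxa)
        rw [hswap, Equiv.Perm.sign_swap hba.symm] at hsign
        exact absurd hsign (by decide)
      obtain ⟨b', hb'⟩ : ∃ y, y = σ a' := ⟨_, rfl⟩
      have hσb' : σ b' = a' := by rw [hb']; exact hA a' ha'
      have hb'a' : b' ≠ a' := hb' ▸ ha'
      have hb'a : b' ≠ a0 := by
        intro h
        rw [h] at hσb'
        exact ha'b (hσb'.symm.trans hb.symm)
      have hb'b : b' ≠ b := by
        intro h
        rw [hb', hb] at h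
        exact ha'a (σ.injective h)
      -- τ₁ = (a0 a' b), τ₂ = (a0 a' b')
      obtain ⟨τ₁, hτ₁def⟩ : ∃ t : Perm α, t = Equiv.swap a0 b * Equiv.swap a0 a' := ⟨_, rfl⟩
      obtain ⟨τ₂, hτ₂def⟩ : ∃ t : Perm α, t = Equiv.swap a0 b' * Equiv.swap a0 a' := ⟨_, rfl⟩
      have hτ₁3 : Equiv.Perm.IsThreeCycle τ₁ := by
        rw [hτ₁def]
        exact Equiv.Perm.isThreeCycle_swap_mul_swap_same hba.symm ha'a.symm
          (fun h => ha'b h.symm)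
      have hτ₂3 : Equiv.Perm.IsThreeCycle τ₂ := by
        rw [hτ₂def]
        exact Equiv.Perm.isThreeCycle_swap_mul_swap_same hb'a.symm ha'a.symm hb'a'
      have hτ₁a0 : τ₁ a0 = a' := by
        rw [hτ₁def, Equiv.Perm.mul_apply, Equiv.swap_apply_left,
          Equiv.swap_apply_of_ne_of_ne ha'a ha'b]
      have hτ₁a' : τ₁ a' = b := by
        rw [hτ₁def, Equiv.Perm.mul_apply, Equiv.swap_apply_right,
          Equiv.swap_apply_left]
      have hτ₁b : τ₁ b = a0 := by
        rw [hτ₁def, Equiv.Perm.mul_apply,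
          Equiv.swap_apply_of_ne_of_ne hba (fun h => ha'b h.symm),
          Equiv.swap_apply_right]
      have hτ₁fix : ∀ x, x ≠ a0 → x ≠ b → x ≠ a' → τ₁ x = x := by
        intro x h1x h2x h3x
        rw [hτ₁def, Equiv.Perm.mul_apply, Equiv.swap_apply_of_ne_of_ne h1x h3x,
          Equiv.swap_apply_of_ne_of_ne h1x h2x]
      have hτ₂a0 : τ₂ a0 = a' := by
        rw [hτ₂def, Equiv.Perm.mul_apply, Equiv.swap_apply_left,
          Equiv.swap_apply_of_ne_of_ne ha'a hb'a'.symm]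
      have hτ₂a' : τ₂ a' = b' := by
        rw [hτ₂def, Equiv.Perm.mul_apply, Equiv.swap_apply_right,
          Equiv.swap_apply_left]
      have hτ₂b' : τ₂ b' = a0 := by
        rw [hτ₂def, Equiv.Perm.mul_apply,
          Equiv.swap_apply_of_ne_of_ne hb'a hb'a',
          Equiv.swap_apply_right]
      have hτ₂fix : ∀ x, x ≠ a0 → x ≠ b' → x ≠ a' → τ₂ x = x := by
        intro x h1x h2x h3x
        rw [hτ₂def, Equiv.Perm.mul_apply, Equiv.swap_apply_of_ne_of_ne h1x h3x,
          Equiv.swap_apply_of_ne_of_ne h1x h2x]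
      -- inverse values
      have iτ₁b : τ₁⁻¹ b = a' := by rw [← hτ₁a']; simp
      have iτ₁a0 : τ₁⁻¹ a0 = b := by rw [← hτ₁b]; simp
      have iτ₁a' : τ₁⁻¹ a' = a0 := by rw [← hτ₁a0]; simp
      have iτ₁b' : τ₁⁻¹ b' = b' := by
        nth_rewrite 1 [← hτ₁fix b' hb'a hb'b hb'a']; simp
      have iτ₂a' : τ₂⁻¹ a' = a0 := by rw [← hτ₂a0]; simp
      have iτ₂b' : τ₂⁻¹ b' = a' := by rw [← hτ₂a']; simp
      have iτ₂a0 : τ₂⁻¹ a0 = b' := by rw [← hτ₂b']; simp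
      have iτ₂b : τ₂⁻¹ b = b := by
        nth_rewrite 1 [← hτ₂fix b hba hb'b.symm (fun h => ha'b h.symm)]; simp
      obtain ⟨σ', hσ'⟩ : ∃ s : Perm α, s = τ₂⁻¹ * (τ₁⁻¹ * σ) := ⟨_, rfl⟩
      have happly : ∀ x, σ' x = τ₂⁻¹ (τ₁⁻¹ (σ x)) := by
        intro x; rw [hσ']; simp [Equiv.Perm.mul_apply]
      have hσ'a0 : σ' a0 = a0 := by rw [happly, ← hb, iτ₁b, iτ₂a']
      have hσ'b : σ' b = b := by rw [happly, hσb, iτ₁a0, iτ₂b]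
      have hσ'a' : σ' a' = a' := by rw [happly, ← hb', iτ₁b', iτ₂b']
      have hσ'b' : σ' b' = b' := by rw [happly, hσb', iτ₁a', iτ₂a0]
      have hmema0 : a0 ∈ σ.support := Equiv.Perm.mem_support.mpr ha0
      have hmemb : b ∈ σ.support :=
        Equiv.Perm.mem_support.mpr (by rw [hσb]; exact fun h => hba h.symm)
      have hmema' : a' ∈ σ.support := Equiv.Perm.mem_support.mpr ha'
      have hmemb' : b' ∈ σ.support := Equiv.Perm.mem_support.mpr
        (by rw [hσb']; exact fun h => hb'a' h.symm)
      have hout : ∀ x, x ∉ σ.support → σ' x = x := by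
        intro x hx
        have hxfix : σ x = x := Equiv.Perm.notMem_support.mp hx
        have hxa : x ≠ a0 := fun h => hx (h ▸ hmema0)
        have hxb : x ≠ b := fun h => hx (h ▸ hmemb)
        have hxa' : x ≠ a' := fun h => hx (h ▸ hmema')
        have hxb' : x ≠ b' := fun h => hx (h ▸ hmemb')
        rw [happly, hxfix]
        nth_rewrite 1 [← hτ₁fix x hxa hxb hxa']
        rw [Perm.inv_def τ₁, Equiv.symm_apply_apply]
        nth_rewrite 1 [← hτ₂fix x hxa hxb' hxa']
        rw [Perm.inv_def τ₂, Equiv.symm_apply_apply]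
      have hsub : σ'.support ⊆
          (((σ.support.erase a0).erase b).erase a').erase b' := by
        intro x hx
        have hxmove : σ' x ≠ x := Equiv.Perm.mem_support.mp hx
        rw [Finset.mem_erase, Finset.mem_erase, Finset.mem_erase, Finset.mem_erase]
        refine ⟨fun h => hxmove (h ▸ hσ'b'), fun h => hxmove (h ▸ hσ'a'),
          fun h => hxmove (h ▸ hσ'b), fun h => hxmove (h ▸ hσ'a0), ?_⟩
        by_contra h
        exact hxmove (hout x h)
      have p2 : b ∈ σ.support.erase a0 := Finset.mem_erase.mpr ⟨hba, hmemb⟩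
      have p3 : a' ∈ (σ.support.erase a0).erase b :=
        Finset.mem_erase.mpr ⟨ha'b, Finset.mem_erase.mpr ⟨ha'a, hmema'⟩⟩
      have p4 : b' ∈ ((σ.support.erase a0).erase b).erase a' :=
        Finset.mem_erase.mpr ⟨hb'a', Finset.mem_erase.mpr
          ⟨hb'b, Finset.mem_erase.mpr ⟨hb'a, hmemb'⟩⟩⟩
      have hcard4 : σ'.support.card + 4 ≤ σ.support.card := by
        have h1 := Finset.card_le_card hsub
        rw [Finset.card_erase_of_mem p4, Finset.card_erase_of_mem p3,
          Finset.card_erase_of_mem p2, Finset.card_erase_of_mem hmema0] at h1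
        have q4 : 1 ≤ (((σ.support.erase a0).erase b).erase a').card :=
          Finset.card_pos.mpr ⟨b', p4⟩
        have q3 : 1 ≤ ((σ.support.erase a0).erase b).card :=
          Finset.card_pos.mpr ⟨a', p3⟩
        have q2 : 1 ≤ (σ.support.erase a0).card := Finset.card_pos.mpr ⟨b, p2⟩
        have e2 := Finset.card_erase_of_mem p2
        have e3 := Finset.card_erase_of_mem p3
        have e1 := Finset.card_erase_of_mem hmema0
        omega
      have hsign' : Equiv.Perm.sign σ' = 1 := by
        rw [hσ', Equiv.Perm.sign_mul, Equiv.Perm.sign_mul, Equiv.Perm.sign_inv,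
          Equiv.Perm.sign_inv, hτ₁3.sign, hτ₂3.sign, hsign]
        simp
      obtain ⟨L', hL', hprod', hlen'⟩ := ih σ' (by omega) hsign'
      refine ⟨τ₁ :: τ₂ :: L', ?_, ?_, ?_⟩
      · intro x hx
        rcases List.mem_cons.mp hx with rfl | hx'
        · exact ⟨hτ₁3.isCycle, hτ₁3.card_support⟩
        rcases List.mem_cons.mp hx' with rfl | hx''
        · exact ⟨hτ₂3.isCycle, hτ₂3.card_support⟩
        · exact hL' x hx''
      · rw [List.prod_cons, List.prod_cons, ← hprod', hσ']
        group
      · simp only [List.length_cons]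
        omega

lemma grow {α : Type*} [Fintype α] [DecidableEq α] :
    ∀ (j : ℕ) (L : List (Perm α)), (∀ c ∈ L, c.IsCycle ∧ c.support.card = 3) →
      L ≠ [] →
    ∃ L' : List (Perm α), (∀ c ∈ L', c.IsCycle ∧ c.support.card = 3) ∧
      L'.prod = L.prod ∧ L'.length = L.length + j ∧ L' ≠ [] := by
  intro j
  induction j with
  | zero => exact fun L hL hne => ⟨L, hL, rfl, rfl, hne⟩
  | succ j ihj =>
    intro L hL hne
    obtain ⟨L', hL', hprod, hlen, hne'⟩ := ihj L hL hne
    cases L' with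
    | nil => exact absurd rfl hne'
    | cons c rest =>
      have hc := hL' c (List.mem_cons_self)
      have horder : orderOf c = 3 := by rw [hc.1.orderOf, hc.2]
      have h3 : c ^ 3 = 1 := by rw [← horder]; exact pow_orderOf_eq_one c
      have hcc : c⁻¹ * c⁻¹ = c := by
        calc c⁻¹ * c⁻¹ = c⁻¹ * c⁻¹ * c ^ 3 := by rw [h3, mul_one]
          _ = c := by group
      refine ⟨c⁻¹ :: c⁻¹ :: rest, ?_, ?_, ?_, by simp⟩
      · intro x hx
        rcases List.mem_cons.mp hx with rfl | hx'
        · exact ⟨hc.1.inv, by rw [Equiv.Perm.support_inv]; exact hc.2⟩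
        rcases List.mem_cons.mp hx' with rfl | hx''
        · exact ⟨hc.1.inv, by rw [Equiv.Perm.support_inv]; exact hc.2⟩
        · exact hL' x (List.mem_cons_of_mem c hx'')
      · rw [← hprod]
        simp only [List.prod_cons, ← mul_assoc, hcc]
      · simp only [List.length_cons] at hlen ⊢
        omega

lemma part1 (k : ℕ) (hk : 2 ≤ k) (σ : Perm (Fin (2*k+1)))
    (hσ : σ ∈ alternatingGroup (Fin (2*k+1))) : IsProdOfCycles (2*k+1) k 3 σ := by
  have hsign : Equiv.Perm.sign σ = 1 := Equiv.Perm.mem_alternatingGroup.mp hσ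
  have hsupp : σ.support.card ≤ 2*k+1 := by
    have := Finset.card_le_univ σ.support
    simpa using this
  obtain ⟨L, hL, hprod, hlen⟩ := decomp (2*k+1) σ hsupp hsign
  have hlenk : L.length ≤ k := by omega
  obtain ⟨L₀, hL₀, hprod₀, hlen₀, hne₀⟩ :
      ∃ L₀ : List (Perm (Fin (2*k+1))),
        (∀ c ∈ L₀, c.IsCycle ∧ c.support.card = 3) ∧ L₀.prod = σ ∧
        L₀.length ≤ k ∧ L₀ ≠ [] := by
    cases L with
    | cons c rest =>
      exact ⟨c :: rest, hL, hprod.symm, hlenk, by simp⟩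
    | nil =>
      have hσ1 : σ = 1 := by rw [hprod]; rfl
      obtain ⟨x0, hx0⟩ : ∃ x : Fin (2*k+1), (x : ℕ) = 0 := ⟨⟨0, by omega⟩, rfl⟩
      obtain ⟨x1, hx1⟩ : ∃ x : Fin (2*k+1), (x : ℕ) = 1 := ⟨⟨1, by omega⟩, rfl⟩
      obtain ⟨x2, hx2⟩ : ∃ x : Fin (2*k+1), (x : ℕ) = 2 := ⟨⟨2, by omega⟩, rfl⟩
      have h01 : x0 ≠ x1 := fun h => by rw [Fin.ext_iff, hx0, hx1] at h; omega
      have h02 : x0 ≠ x2 := fun h => by rw [Fin.ext_iff, hx0, hx2] at h; omega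
      have h12 : x1 ≠ x2 := fun h => by rw [Fin.ext_iff, hx1, hx2] at h; omega
      obtain ⟨t, htdef⟩ : ∃ t : Perm (Fin (2*k+1)),
          t = Equiv.swap x0 x1 * Equiv.swap x0 x2 := ⟨_, rfl⟩
      have ht : Equiv.Perm.IsThreeCycle t := by
        rw [htdef]
        exact Equiv.Perm.isThreeCycle_swap_mul_swap_same h01 h02 h12
      refine ⟨[t, t⁻¹], ?_, ?_, by simp; omega, by simp⟩
      · intro x hx
        rcases List.mem_cons.mp hx with rfl | hx'
        · exact ⟨ht.isCycle, ht.card_support⟩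
        rcases List.mem_cons.mp hx' with rfl | hx''
        · exact ⟨ht.inv.isCycle, ht.inv.card_support⟩
        · exact absurd hx'' (List.not_mem_nil)
      · rw [hσ1]
        simp
  obtain ⟨L₁, hL₁, hprod₁, hlen₁, -⟩ := grow (k - L₀.length) L₀ hL₀ hne₀
  have hlenk1 : L₁.length = k := by omega
  refine ⟨fun i => L₁.get (Fin.cast hlenk1.symm i),
    fun i => hL₁ _ (L₁.get_mem _), ?_⟩
  have hofn : List.ofFn (fun i : Fin k => L₁.get (Fin.cast hlenk1.symm i)) = L₁ := by
    apply List.ext_getElem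
    · simp [hlenk1]
    · intro i h1 h2
      simp [List.getElem_ofFn]
  rw [hofn, hprod₁, hprod₀]

theorem n_k_3_eq_two_k_add_one (k : ℕ) (hk : 2 ≤ k) :
    (∀ σ ∈ alternatingGroup (Fin (2 * k + 1)), IsProdOfCycles (2 * k + 1) k 3 σ) ∧
    (∀ n : ℕ, 2 * k + 1 < n →
      ∃ σ ∈ alternatingGroup (Fin n), ¬ IsProdOfCycles n k 3 σ) := by
  exact ⟨fun σ hσ => part1 k hk σ hσ, fun n hn => part2 k n hk hn⟩
end

section
/- Given natural numbers n, l ≥ 2, every element of A_n can be written as a product of two l-cycles of S_n if and only if ⌊3n/4⌋ ≤ l ≤ n, or n = 4 and l = 2. -/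
open Equiv Equiv.Perm Finset

namespace Bertram

-- strip variable dup: prim contains variable decl


variable {α : Type*} [DecidableEq α] [Fintype α]

private lemma grow_orbit {c : Perm α} {a b : α} (ha : a ∈ c.support) (hb : b ∉ c.support) :
    ∀ j : ℕ, (∀ i, 1 ≤ i → i ≤ j → (c ^ i) a ≠ a) →
      ((c * swap a b) ^ (j + 1)) b = (c ^ j) (c a) := by
  have hcb : c b = b := notMem_support.mp hb
  intro j
  induction j with
  | zero =>
    intro _
    simp [mul_apply, swap_apply_right, hcb]
  | succ j IH =>
    intro H
    have hIH := IH (fun i h1 h2 => H i h1 (h2.trans (Nat.le_succ j)))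
    have hyspec : (c ^ j) (c a) = (c ^ (j + 1)) a := by
      rw [pow_succ, mul_apply]
    have hy_supp : (c ^ (j + 1)) a ∈ c.support := pow_apply_mem_support.mpr ha
    have hya : (c ^ (j + 1)) a ≠ a := H (j + 1) (Nat.le_add_left _ _) le_rfl
    have hyb : (c ^ (j + 1)) a ≠ b := fun h => hb (h ▸ hy_supp)
    calc ((c * swap a b) ^ (j + 1 + 1)) b
        = (c * swap a b) (((c * swap a b) ^ (j + 1)) b) := by
          rw [pow_succ', mul_apply]
      _ = (c * swap a b) ((c ^ (j + 1)) a) := by rw [hIH, hyspec]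
      _ = c ((c ^ (j + 1)) a) := by
          rw [mul_apply, swap_apply_of_ne_of_ne hya hyb]
      _ = (c ^ (j + 1)) (c a) := by
          rw [← mul_apply, ← mul_apply, ← pow_succ', ← pow_succ]

/-- P1: growing a cycle on the right by a fresh point. -/
lemma grow_right {c : Perm α} (hc : c.IsCycle) {a b : α} (ha : a ∈ c.support)
    (hb : b ∉ c.support) :
    (c * swap a b).IsCycle ∧ (c * swap a b).support = insert b c.support := by
  have hab : a ≠ b := fun h => hb (h ▸ ha)
  have hca : c a ≠ a := mem_support.mp ha
  have hcamem : c a ∈ c.support := apply_mem_support.mpr ha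
  have hcab : c a ≠ b := fun h => hb (h ▸ hcamem)
  have hcb : c b = b := notMem_support.mp hb
  have hc'b : (c * swap a b) b = c a := by simp [mul_apply, swap_apply_right]
  have hc'a : (c * swap a b) a = b := by simp [mul_apply, swap_apply_left, hcb]
  have hc'x : ∀ x, x ≠ a → x ≠ b → (c * swap a b) x = c x := fun x hxa hxb => by
    simp [mul_apply, swap_apply_of_ne_of_ne hxa hxb]
  have hsupp : (c * swap a b).support = insert b c.support := by
    ext z
    rcases eq_or_ne z a with rfl | hza
    · rw [mem_support, hc'a, mem_insert]
      exact iff_of_true (Ne.symm hab) (Or.inr ha)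
    rcases eq_or_ne z b with rfl | hzb
    · rw [mem_support, hc'b, mem_insert]
      exact iff_of_true hcab (Or.inl rfl)
    · rw [mem_support, hc'x z hza hzb, mem_insert, ← mem_support]
      simp [hzb]
  refine ⟨⟨b, ?_, ?_⟩, hsupp⟩
  · rw [hc'b]; exact hcab
  · intro y hy
    rcases eq_or_ne y b with rfl | hyb
    · exact ⟨0, rfl⟩
    have hy' : y ∈ (c * swap a b).support := mem_support.mpr hy
    have hymem : y ∈ c.support := by
      rw [hsupp] at hy'
      rcases mem_insert.mp hy' with h | h
      · exact absurd h hyb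
      · exact h
    have hcc : c (c a) ≠ c a := mem_support.mp (apply_mem_support.mpr ha)
    obtain ⟨k, hk⟩ := hc.exists_pow_eq hcc (mem_support.mp hymem)
    have hex : ∃ k, (c ^ k) (c a) = y := ⟨k, hk⟩
    set k0 := Nat.find hex with hk0def
    have hk0 : (c ^ k0) (c a) = y := Nat.find_spec hex
    have hmin : ∀ i, 1 ≤ i → i ≤ k0 → (c ^ i) a ≠ a := by
      intro i h1 h2 hia
      have hfix : (c ^ i) (c a) = c a := by
        rw [← mul_apply, ← pow_succ, pow_succ', mul_apply, hia]
      have hlt : k0 - i < k0 := by omega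
      refine Nat.find_min hex hlt ?_
      have : (c ^ (k0 - i + i)) (c a) = y := by rw [Nat.sub_add_cancel h2]; exact hk0
      rw [pow_add, mul_apply, hfix] at this
      exact this
    have := grow_orbit ha hb k0 hmin
    exact ⟨(k0 + 1 : ℕ), by rw [zpow_natCast, this, hk0]⟩

/-- P2: growing a cycle on the left by a fresh point. -/
lemma grow_left {c : Perm α} (hc : c.IsCycle) {a b : α} (ha : a ∈ c.support)
    (hb : b ∉ c.support) :
    (swap a b * c).IsCycle ∧ (swap a b * c).support = insert b c.support := by
  have h := grow_right hc.inv (a := a) (b := b) (by simpa using ha) (by simpa using hb)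
  have h1 : swap a b * c = (c⁻¹ * swap a b)⁻¹ := by
    rw [mul_inv_rev, swap_inv, inv_inv]
  rw [h1]
  refine ⟨h.1.inv, ?_⟩
  rw [support_inv]
  simpa using h.2

/-- A cycle of card ≥ 3 has no 2-orbits. -/
lemma sq_ne_self {c : Perm α} (hc : c.IsCycle) {x : α} (hx : c x ≠ x)
    (h3 : 3 ≤ c.support.card) : c (c x) ≠ x := by
  intro h
  have := hc.eq_swap_of_apply_apply_eq_self hx h
  rw [this, card_support_swap (Ne.symm hx)] at h3
  omega

/-- P3: shrinking a cycle (left form), packaged from mathlib. -/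
lemma shrink_left {c : Perm α} (hc : c.IsCycle) {x : α} (hx : c x ≠ x)
    (h3 : 3 ≤ c.support.card) :
    (swap x (c x) * c).IsCycle ∧ (swap x (c x) * c).support = c.support \ {x} :=
  ⟨hc.swap_mul hx (sq_ne_self hc hx h3), support_swap_mul_eq c x (sq_ne_self hc hx h3)⟩

/-- P4: the product of two cycles sharing exactly one point is a cycle. -/
lemma merge_one_point : ∀ k : ℕ, ∀ {c γ : Perm α}, c.support.card ≤ k → c.IsCycle → γ.IsCycle →
    ∀ {a : α}, c.support ∩ γ.support = {a} →
    (c * γ).IsCycle ∧ (c * γ).support = c.support ∪ γ.support := by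
  intro k
  induction k with
  | zero =>
    intro c γ hk hc _ _ _
    have := hc.two_le_card_support
    omega
  | succ k IH =>
    intro c γ hk hc hγ a hinter
    have haboth : a ∈ c.support ∩ γ.support := hinter ▸ mem_singleton_self a
    have hac : a ∈ c.support := (mem_inter.mp haboth).1
    have haγ : a ∈ γ.support := (mem_inter.mp haboth).2
    rcases eq_or_lt_of_le hc.two_le_card_support with h2 | h3
    · -- c is a swap
      obtain ⟨x, y, hxy, hcsw⟩ := card_support_eq_two.mp h2.symm
      have hsx : c.support = {x, y} := by rw [hcsw]; exact support_swap hxy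
      have hax : a = x ∨ a = y := by
        have := hac
        rw [hsx, mem_insert, mem_singleton] at this
        exact this
      have main : ∀ u v : α, u ≠ v → c = swap u v → v ∈ γ.support → u ∉ γ.support →
          (c * γ).IsCycle ∧ (c * γ).support = c.support ∪ γ.support := by
        intro u v huv hcuv hv hu
        have h := grow_left hγ hv hu
        rw [swap_comm v u] at h
        rw [hcuv]
        refine ⟨h.1, ?_⟩
        rw [h.2, support_swap huv]
        ext z
        simp only [mem_insert, mem_union, mem_singleton]
        constructor
        · rintro (rfl | h)
          · exact Or.inl (Or.inl rfl)
          · exact Or.inr h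
        · rintro ((rfl | rfl) | h)
          · exact Or.inl rfl
          · exact Or.inr hv
          · exact Or.inr h
      rcases hax with rfl | rfl
      · have hy : y ∉ γ.support := by
          intro hy
          have : y ∈ c.support ∩ γ.support := by
            rw [hsx]; exact mem_inter.mpr ⟨by simp, hy⟩
          rw [hinter, mem_singleton] at this
          exact hxy this.symm
        exact main y a (Ne.symm hxy) (by rw [hcsw, swap_comm]) haγ hy
      · have hx : x ∉ γ.support := by
          intro hx
          have : x ∈ c.support ∩ γ.support := by
            rw [hsx]; exact mem_inter.mpr ⟨by simp, hx⟩
          rw [hinter, mem_singleton] at this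
          exact hxy this
        exact main x a hxy hcsw haγ hx
    · have h3 : 3 ≤ c.support.card := h3
      have : ∃ x ∈ c.support, x ≠ a := by
        by_contra h
        push_neg at h
        have hsub : c.support ⊆ {a} := fun z hz => mem_singleton.mpr (h z hz)
        have := card_le_card hsub
        rw [card_singleton] at this
        omega
      obtain ⟨x, hxc, hxa⟩ := this
      have hcx : c x ≠ x := mem_support.mp hxc
      obtain ⟨hc'', hsupp''⟩ := shrink_left hc hcx h3
      set c'' := swap x (c x) * c with hc''def
      have hinter'' : c''.support ∩ γ.support = {a} := by
        rw [hsupp'']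
        ext z
        simp only [mem_inter, mem_sdiff, mem_singleton]
        constructor
        · rintro ⟨⟨hz1, _⟩, hz2⟩
          have : z ∈ c.support ∩ γ.support := mem_inter.mpr ⟨hz1, hz2⟩
          rw [hinter, mem_singleton] at this
          exact this
        · rintro rfl
          exact ⟨⟨hac, Ne.symm hxa⟩, haγ⟩
      have hcard'' : c''.support.card ≤ k := by
        rw [hsupp'', card_sdiff_of_subset (by simpa using hxc), card_singleton]
        omega
      obtain ⟨hcyc, hsup⟩ := IH hcard'' hc'' hγ hinter''
      have hxγ : x ∉ γ.support := by
        intro hx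
        have : x ∈ c.support ∩ γ.support := mem_inter.mpr ⟨hxc, hx⟩
        rw [hinter, mem_singleton] at this
        exact hxa this
      have hxnot : x ∉ (c'' * γ).support := by
        rw [hsup, mem_union, hsupp'', mem_sdiff]
        rintro (⟨_, h⟩ | h)
        · exact h (mem_singleton_self x)
        · exact hxγ h
      have hcxin : c x ∈ (c'' * γ).support := by
        rw [hsup, mem_union, hsupp'', mem_sdiff, mem_singleton]
        exact Or.inl ⟨apply_mem_support.mpr hxc, hcx⟩
      have heq : c * γ = swap x (c x) * (c'' * γ) := by
        rw [hc''def, ← mul_assoc, ← mul_assoc, swap_mul_self, one_mul]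
      have h := grow_left hcyc hcxin hxnot
      rw [swap_comm (c x) x] at h
      rw [heq]
      refine ⟨h.1, ?_⟩
      rw [h.2, hsup, hsupp'']
      ext z
      simp only [mem_insert, mem_union, mem_sdiff, mem_singleton]
      by_cases hzx : z = x
      · subst hzx; simp [hxc]
      · tauto




variable {α : Type*} [DecidableEq α] [Fintype α]

-- assume primitives (tested separately)
/-- Splitting: multiplying a cycle by a swap of two of its points gives at most 2 cycles,
supported inside the cycle's support. -/
lemma split_card_le_two {c : Perm α} (hc : c.IsCycle) {a b : α} (ha : a ∈ c.support)
    (hb : b ∈ c.support) (hab : a ≠ b) :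
    Multiset.card (c * swap a b).cycleType ≤ 2 ∧ (c * swap a b).support ⊆ c.support := by
  set σ := c * swap a b with hσ
  have hσa : σ a = c b := by simp [hσ, mul_apply, swap_apply_left]
  have hσb : σ b = c a := by simp [hσ, mul_apply, swap_apply_right]
  have hσx : ∀ x, x ≠ a → x ≠ b → σ x = c x := fun x h1 h2 => by
    simp [hσ, mul_apply, swap_apply_of_ne_of_ne h1 h2]
  have hsub : σ.support ⊆ c.support := by
    intro z hz
    rw [mem_support] at hz
    rcases eq_or_ne z a with rfl | hza
    · exact ha
    rcases eq_or_ne z b with rfl | hzb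
    · exact hb
    · rw [mem_support]; rw [hσx z hza hzb] at hz; exact hz
  have claim1 : ∀ j : ℕ, σ.SameCycle a ((c ^ j) a) ∨ σ.SameCycle b ((c ^ j) a) := by
    intro j
    induction j with
    | zero => exact Or.inl (SameCycle.refl _ _)
    | succ j IH =>
      have hstep : (c ^ (j + 1)) a = c ((c ^ j) a) := by rw [pow_succ', mul_apply]
      rcases eq_or_ne ((c ^ j) a) a with h | hne1
      · rw [hstep, h, ← hσb]
        exact Or.inr ⟨1, by simp⟩
      rcases eq_or_ne ((c ^ j) a) b with h | hne2
      · rw [hstep, h, ← hσa]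
        exact Or.inl ⟨1, by simp⟩
      · rw [hstep, ← hσx _ hne1 hne2]
        rcases IH with h | h
        · exact Or.inl (sameCycle_apply_right.mpr h)
        · exact Or.inr (sameCycle_apply_right.mpr h)
  have claim2 : ∀ y ∈ σ.support, σ.SameCycle a y ∨ σ.SameCycle b y := by
    intro y hy
    obtain ⟨j, hj⟩ := hc.exists_pow_eq (mem_support.mp ha) (mem_support.mp (hsub hy))
    rw [← hj]; exact claim1 j
  refine ⟨?_, hsub⟩
  have hfac : σ.cycleFactorsFinset ⊆ {σ.cycleOf a, σ.cycleOf b} := by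
    intro f hf
    have hfc : f.IsCycle := (mem_cycleFactorsFinset_iff.mp hf).1
    have hfne : f.support.Nonempty := card_pos.mp (by have := hfc.two_le_card_support; omega)
    obtain ⟨y, hy⟩ := hfne
    have hyσ : y ∈ σ.support := mem_cycleFactorsFinset_support_le hf hy
    have hfy : f = σ.cycleOf y := cycle_is_cycleOf hy hf
    rcases claim2 y hyσ with h | h
    · rw [mem_insert]; left; rw [hfy, h.cycleOf_eq]
    · rw [mem_insert, mem_singleton]; right; rw [hfy, h.cycleOf_eq]
  calc Multiset.card σ.cycleType = σ.cycleFactorsFinset.card := by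
        rw [cycleType_def, Multiset.card_map]; rfl
    _ ≤ ({σ.cycleOf a, σ.cycleOf b} : Finset (Perm α)).card := card_le_card hfac
    _ ≤ 2 := card_insert_le _ _ |>.trans (by simp)

/-- T2 : multiplying by a swap with one endpoint fixed. -/
lemma T2 (π : Perm α) {a b : α} (hb : π b = b) (hab : a ≠ b) :
    (π * swap a b).support.card + Multiset.card π.cycleType
      = π.support.card + Multiset.card (π * swap a b).cycleType + 1 := by
  by_cases ha : π a = a
  · have hd : π.Disjoint (swap a b) := by
      intro x
      rcases eq_or_ne x a with rfl | hxa
      · exact Or.inl ha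
      rcases eq_or_ne x b with rfl | hxb
      · exact Or.inl hb
      · exact Or.inr (swap_apply_of_ne_of_ne hxa hxb)
    have hds := disjoint_iff_disjoint_support.mp hd
    rw [hd.cycleType_mul, (isCycle_swap hab).cycleType, hd.support_mul,
        card_union_of_disjoint hds, card_support_swap hab]
    simp
    omega
  · set c := π.cycleOf a with hcdef
    have hamem : a ∈ π.support := mem_support.mpr ha
    have hcfac : c ∈ π.cycleFactorsFinset := cycleOf_mem_cycleFactorsFinset_iff.mpr hamem
    have hccyc : c.IsCycle := (mem_cycleFactorsFinset_iff.mp hcfac).1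
    have hd1 : (π * c⁻¹).Disjoint c := disjoint_mul_inv_of_mem_cycleFactorsFinset hcfac
    set ρ := π * c⁻¹ with hρdef
    have hπeq : π = ρ * c := by rw [hρdef, inv_mul_cancel_right]
    have hac : a ∈ c.support := mem_support_cycleOf_iff.mpr ⟨SameCycle.refl _ _, hamem⟩
    have hbπ : b ∉ π.support := notMem_support.mpr hb
    have hcsub : c.support ⊆ π.support := mem_cycleFactorsFinset_support_le hcfac
    have hbc : b ∉ c.support := fun h => hbπ (hcsub h)
    obtain ⟨hgc, hgs⟩ := grow_right hccyc hac hbc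
    have hbρ : b ∉ ρ.support := by
      intro h
      exact hbπ (by rw [hπeq, hd1.support_mul]; exact mem_union_left _ h)
    have hds1 := disjoint_iff_disjoint_support.mp hd1
    have hds2 : _root_.Disjoint ρ.support (c * swap a b).support := by
      rw [hgs]
      exact Finset.disjoint_insert_right.mpr ⟨hbρ, hds1⟩
    have hd2 : ρ.Disjoint (c * swap a b) := disjoint_iff_disjoint_support.mpr hds2
    have heq2 : π * swap a b = ρ * (c * swap a b) := by rw [hπeq, mul_assoc]
    have e1 : π.support.card = ρ.support.card + c.support.card := by
      rw [hπeq, hd1.support_mul, card_union_of_disjoint hds1]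
    have e2 : Multiset.card π.cycleType = Multiset.card ρ.cycleType + 1 := by
      rw [hπeq, hd1.cycleType_mul, Multiset.card_add, hccyc.cycleType]
      simp
    have e3 : (π * swap a b).support.card = ρ.support.card + c.support.card + 1 := by
      rw [heq2, hd2.support_mul, card_union_of_disjoint hds2, hgs,
          card_insert_of_notMem hbc]
      omega
    have e4 : Multiset.card (π * swap a b).cycleType = Multiset.card ρ.cycleType + 1 := by
      rw [heq2, hd2.cycleType_mul, Multiset.card_add, hgc.cycleType]
      simp
    omega

/-- T1 : multiplying by any swap changes the length by at most one. -/
lemma T1 (π : Perm α) {a b : α} (hab : a ≠ b) :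
    (π * swap a b).support.card + Multiset.card π.cycleType
      ≤ π.support.card + Multiset.card (π * swap a b).cycleType + 1 := by
  by_cases hb : π b = b
  · exact le_of_eq (T2 π hb hab)
  by_cases ha : π a = a
  · rw [swap_comm]; exact le_of_eq (T2 π ha hab.symm)
  have hamem : a ∈ π.support := mem_support.mpr ha
  have hbmem : b ∈ π.support := mem_support.mpr hb
  by_cases hsc : π.SameCycle a b
  · -- split case
    set c := π.cycleOf a with hcdef
    have hcfac : c ∈ π.cycleFactorsFinset := cycleOf_mem_cycleFactorsFinset_iff.mpr hamem
    have hccyc : c.IsCycle := (mem_cycleFactorsFinset_iff.mp hcfac).1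
    have hd1 : (π * c⁻¹).Disjoint c := disjoint_mul_inv_of_mem_cycleFactorsFinset hcfac
    set ρ := π * c⁻¹ with hρdef
    have hπeq : π = ρ * c := by rw [hρdef, inv_mul_cancel_right]
    have hac : a ∈ c.support := mem_support_cycleOf_iff.mpr ⟨SameCycle.refl _ _, hamem⟩
    have hbc : b ∈ c.support := mem_support_cycleOf_iff.mpr ⟨hsc, hamem⟩
    obtain ⟨hparts, hsub⟩ := split_card_le_two hccyc hac hbc hab
    have hds1 := disjoint_iff_disjoint_support.mp hd1
    have hds2 : _root_.Disjoint ρ.support (c * swap a b).support :=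
      Finset.disjoint_of_subset_right hsub hds1
    have hd2 : ρ.Disjoint (c * swap a b) := disjoint_iff_disjoint_support.mpr hds2
    have heq2 : π * swap a b = ρ * (c * swap a b) := by rw [hπeq, mul_assoc]
    have e1 : π.support.card = ρ.support.card + c.support.card := by
      rw [hπeq, hd1.support_mul, card_union_of_disjoint hds1]
    have e2 : Multiset.card π.cycleType = Multiset.card ρ.cycleType + 1 := by
      rw [hπeq, hd1.cycleType_mul, Multiset.card_add, hccyc.cycleType]; simp
    have e3 : (π * swap a b).support.card
        = ρ.support.card + (c * swap a b).support.card := by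
      rw [heq2, hd2.support_mul, card_union_of_disjoint hds2]
    have e4 : Multiset.card (π * swap a b).cycleType
        = Multiset.card ρ.cycleType + Multiset.card (c * swap a b).cycleType := by
      rw [heq2, hd2.cycleType_mul, Multiset.card_add]
    have e5 : (c * swap a b).support.card ≤ c.support.card := card_le_card hsub
    omega
  · -- merge case
    set ca := π.cycleOf a with hcadef
    set cb := π.cycleOf b with hcbdef
    have hcafac : ca ∈ π.cycleFactorsFinset := cycleOf_mem_cycleFactorsFinset_iff.mpr hamem
    have hcacyc : ca.IsCycle := (mem_cycleFactorsFinset_iff.mp hcafac).1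
    have hcbfacπ : cb ∈ π.cycleFactorsFinset := cycleOf_mem_cycleFactorsFinset_iff.mpr hbmem
    have hcbcyc : cb.IsCycle := (mem_cycleFactorsFinset_iff.mp hcbfacπ).1
    have haca : a ∈ ca.support := mem_support_cycleOf_iff.mpr ⟨SameCycle.refl _ _, hamem⟩
    have hbcb : b ∈ cb.support := mem_support_cycleOf_iff.mpr ⟨SameCycle.refl _ _, hbmem⟩
    have hbca : b ∉ ca.support := fun h => hsc (mem_support_cycleOf_iff.mp h).1
    have hdscacb : _root_.Disjoint cb.support ca.support := by
      rw [Finset.disjoint_left]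
      intro y hyb hya
      exact hsc (((mem_support_cycleOf_iff.mp hya).1).trans
        ((mem_support_cycleOf_iff.mp hyb).1).symm)
    have hd1 : (π * ca⁻¹).Disjoint ca := disjoint_mul_inv_of_mem_cycleFactorsFinset hcafac
    set ρ₁ := π * ca⁻¹ with hρ₁def
    have hπeq : π = ρ₁ * ca := by rw [hρ₁def, inv_mul_cancel_right]
    have hds1 := disjoint_iff_disjoint_support.mp hd1
    have hcbfac : cb ∈ ρ₁.cycleFactorsFinset := by
      rw [mem_cycleFactorsFinset_iff]
      refine ⟨hcbcyc, fun y hy => ?_⟩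
      have h1 : cb y = π y := (mem_cycleFactorsFinset_iff.mp hcbfacπ).2 y hy
      have hyca : y ∉ ca.support := fun h => (Finset.disjoint_left.mp hdscacb) hy h
      have hfix : ca⁻¹ y = y := by
        rw [← support_inv] at hyca; exact notMem_support.mp hyca
      rw [hρ₁def, mul_apply, hfix, h1]
    have hd2 : (ρ₁ * cb⁻¹).Disjoint cb := disjoint_mul_inv_of_mem_cycleFactorsFinset hcbfac
    set ρ₂ := ρ₁ * cb⁻¹ with hρ₂def
    have hρ₁eq : ρ₁ = ρ₂ * cb := by rw [hρ₂def, inv_mul_cancel_right]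
    have hds2 := disjoint_iff_disjoint_support.mp hd2
    obtain ⟨hgc, hgs⟩ := grow_right hcacyc haca hbca
    have hintercba : cb.support ∩ (ca * swap a b).support = {b} := by
      rw [hgs]
      ext z
      simp only [mem_inter, mem_insert, mem_singleton]
      constructor
      · rintro ⟨hz1, rfl | hz2⟩
        · rfl
        · exact absurd hz2 (Finset.disjoint_left.mp hdscacb hz1)
      · rintro rfl
        exact ⟨hbcb, Or.inl rfl⟩
    obtain ⟨hDc, hDs⟩ := merge_one_point cb.support.card le_rfl hcbcyc hgc hintercba
    set D := cb * (ca * swap a b) with hDdef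
    have hDsupp : D.support = cb.support ∪ ca.support := by
      rw [hDs, hgs]
      ext z
      simp only [mem_union, mem_insert]
      constructor
      · rintro (h | rfl | h)
        · exact Or.inl h
        · exact Or.inl hbcb
        · exact Or.inr h
      · rintro (h | h)
        · exact Or.inl h
        · exact Or.inr (Or.inr h)
    have heq2 : π * swap a b = ρ₂ * D := by
      rw [hπeq, hρ₁eq, hDdef, mul_assoc, mul_assoc]
    have hsubρ₂ : ρ₂.support ⊆ ρ₁.support := by
      intro z hz
      rw [hρ₁eq, hd2.support_mul]
      exact mem_union_left _ hz
    have hdsD : _root_.Disjoint ρ₂.support D.support := by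
      rw [hDsupp, Finset.disjoint_union_right]
      exact ⟨hds2, Finset.disjoint_of_subset_left hsubρ₂ hds1⟩
    have hdD : ρ₂.Disjoint D := disjoint_iff_disjoint_support.mpr hdsD
    have e1 : π.support.card = ρ₂.support.card + cb.support.card + ca.support.card := by
      rw [hπeq, hd1.support_mul, card_union_of_disjoint hds1, hρ₁eq, hd2.support_mul,
        card_union_of_disjoint hds2]
    have e2 : Multiset.card π.cycleType = Multiset.card ρ₂.cycleType + 2 := by
      rw [hπeq, hd1.cycleType_mul, hρ₁eq, hd2.cycleType_mul, hcacyc.cycleType, hcbcyc.cycleType]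
      simp
    have e3 : (π * swap a b).support.card
        = ρ₂.support.card + cb.support.card + ca.support.card := by
      rw [heq2, hdD.support_mul, card_union_of_disjoint hdsD, hDsupp,
        card_union_of_disjoint hdscacb]
      omega
    have e4 : Multiset.card (π * swap a b).cycleType = Multiset.card ρ₂.cycleType + 1 := by
      rw [heq2, hdD.cycleType_mul, hDc.cycleType]
      simp
    omega




variable {α : Type*} [DecidableEq α] [Fintype α]

lemma key_base (π : Perm α) {x y : α} (hxy : x ≠ y) (hx : x ∈ π.support) :
    π.support.card + Multiset.card (π * swap x y).cycleType
        + 2 * ((swap x y).support \ π.support).card + 1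
      ≤ (π * swap x y).support.card + Multiset.card π.cycleType + 2 := by
  have hsupp : (swap x y).support = {x, y} := support_swap hxy
  by_cases hy : y ∈ π.support
  · have hsd : (swap x y).support \ π.support = ∅ := by
      rw [hsupp]; ext z
      simp only [mem_sdiff, mem_insert, mem_singleton, notMem_empty, iff_false, not_and]
      rintro (rfl | rfl) h
      · exact h hx
      · exact h hy
    rw [hsd]
    have := T1 (π * swap x y) hxy
    rw [mul_assoc, swap_mul_self, mul_one] at this
    simp only [card_empty, Nat.mul_zero, Nat.add_zero]
    omega
  · have hsd : (swap x y).support \ π.support = {y} := by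
      rw [hsupp]; ext z
      simp only [mem_sdiff, mem_insert, mem_singleton]
      constructor
      · rintro ⟨rfl | rfl, h⟩
        · exact absurd hx h
        · rfl
      · rintro rfl; exact ⟨Or.inr rfl, hy⟩
    have := T2 π (notMem_support.mp hy) hxy
    rw [hsd]
    simp only [card_singleton, Nat.mul_one]
    omega

/-- Key counting lemma (Ree-type bound for a product with a cycle). -/
lemma key_count : ∀ q : ℕ, ∀ (π β : Perm α), β.IsCycle → β.support.card = q →
    ∀ b₁, b₁ ∈ π.support → b₁ ∈ β.support →
    π.support.card + Multiset.card (π * β).cycleType + 2 * ((β.support \ π.support).card) + 1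
      ≤ (π * β).support.card + Multiset.card π.cycleType + q := by
  intro q
  induction q using Nat.strong_induction_on with
  | _ q IH =>
  intro π β hβ hq b₁ hb₁π hb₁β
  have h2 : 2 ≤ q := hq ▸ hβ.two_le_card_support
  rcases eq_or_lt_of_le h2 with h2' | h3
  · -- base: β is a swap
    obtain ⟨x, y, hxy, hsw⟩ := card_support_eq_two.mp (hq.trans h2'.symm)
    rw [← h2']
    have hb₁xy : b₁ = x ∨ b₁ = y := by
      have := hb₁β
      rw [hsw, support_swap hxy, mem_insert, mem_singleton] at this
      exact this
    rcases hb₁xy with rfl | rfl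
    · rw [hsw]; exact key_base π hxy hb₁π
    · rw [hsw, swap_comm x b₁]; exact key_base π hxy.symm hb₁π
  · -- inductive step: q ≥ 3
    have h3' : 3 ≤ β.support.card := by omega
    set x := β⁻¹ b₁ with hxdef
    have hxβ : x ∈ β.support := by
      have h1 : b₁ ∈ β⁻¹.support := by rwa [support_inv]
      have := apply_mem_support.mpr h1
      rwa [support_inv] at this
    have hb₁x : b₁ ≠ x := by
      intro h
      have : β b₁ = b₁ := by
        conv_lhs => rw [h, hxdef]
        exact β.apply_symm_apply b₁
      exact (mem_support.mp hb₁β) this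
    set w := β⁻¹ x with hwdef
    have hwx : w ≠ x := by
      intro h
      have : β⁻¹ x = x := h
      exact (mem_support.mp hxβ) (by conv_lhs => rw [← this, ← mul_apply, mul_inv_cancel, one_apply])
    have hβinvx : β⁻¹ x ≠ x := fun h => hwx h
    have hinv3 : 3 ≤ β⁻¹.support.card := by rwa [support_inv]
    obtain ⟨hγc, hγs⟩ := shrink_left hβ.inv hβinvx hinv3
    rw [support_inv] at hγs
    set β' := β * swap x w with hβ'def
    have hβ'eq : β' = (swap x (β⁻¹ x) * β⁻¹)⁻¹ := by
      rw [mul_inv_rev, inv_inv, swap_inv, hβ'def, hwdef]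
    have hβ'cyc : β'.IsCycle := by rw [hβ'eq]; exact hγc.inv
    have hβ's : β'.support = β.support \ {x} := by
      rw [hβ'eq, support_inv, hγs]
    have hβeq : β = β' * swap x w := by
      rw [hβ'def, mul_assoc, swap_mul_self, mul_one]
    have hβ'card : β'.support.card = q - 1 := by
      rw [hβ's, card_sdiff_of_subset (by simpa using hxβ), card_singleton, hq]
    have hb₁β' : b₁ ∈ β'.support := by
      rw [hβ's, mem_sdiff, mem_singleton]
      exact ⟨hb₁β, hb₁x⟩
    have IHres := IH (q - 1) (by omega) π β' hβ'cyc hβ'card b₁ hb₁π hb₁β'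
    have hmuleq : π * β = (π * β') * swap x w := by
      rw [mul_assoc, ← hβeq]
    by_cases hxπ : x ∈ π.support
    · -- x already in the support of π: sdiff unchanged, use T1
      have hT := T1 (π * β) (a := x) (b := w) (Ne.symm hwx)
      have hre : (π * β) * swap x w = π * β' := by rw [mul_assoc, ← hβ'def]
      rw [hre] at hT
      have hsd : β.support \ π.support = β'.support \ π.support := by
        rw [hβ's]
        ext z
        simp only [mem_sdiff, mem_singleton]
        constructor
        · rintro ⟨h1, h2⟩
          exact ⟨⟨h1, fun h => h2 (h ▸ hxπ)⟩, h2⟩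
        · rintro ⟨⟨h1, _⟩, h2⟩
          exact ⟨h1, h2⟩
      rw [hsd]
      omega
    · -- x is fresh: sdiff grows by one, use T2
      have hfix : (π * β') x = x := by
        have h1 : β' x = x := by
          apply notMem_support.mp
          rw [hβ's, mem_sdiff, mem_singleton]
          rintro ⟨_, h⟩; exact h rfl
        rw [mul_apply, h1]
        exact notMem_support.mp hxπ
      have hT := T2 (π * β') (a := w) (b := x) hfix hwx
      rw [swap_comm w x, ← hmuleq] at hT
      have hsd : β.support \ π.support = insert x (β'.support \ π.support) := by
        rw [hβ's]
        ext z
        simp only [mem_sdiff, mem_insert, mem_singleton]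
        constructor
        · rintro ⟨h1, h2⟩
          rcases eq_or_ne z x with rfl | hzx
          · exact Or.inl rfl
          · exact Or.inr ⟨⟨h1, hzx⟩, h2⟩
        · rintro (rfl | ⟨⟨h1, _⟩, h2⟩)
          · exact ⟨hxβ, hxπ⟩
          · exact ⟨h1, h2⟩
      have hxnot : x ∉ β'.support \ π.support := by
        rw [hβ's, mem_sdiff]
        rintro ⟨h1, _⟩
        rw [mem_sdiff, mem_singleton] at h1
        exact h1.2 rfl
      rw [hsd, card_insert_of_notMem hxnot]
      omega




variable {α : Type*} [DecidableEq α] [Fintype α]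

/-- One rebalancing move. -/
lemma rebalance_step {p q : Perm α} (hp : p.IsCycle) (hq : q.IsCycle)
    (hint : (p.support ∩ q.support).Nonempty) (hbig : q.support.card < p.support.card) :
    ∃ p' q' : Perm α, p'.IsCycle ∧ q'.IsCycle ∧ p' * q' = p * q ∧
      (p'.support ∩ q'.support).Nonempty ∧
      p'.support.card + 1 = p.support.card ∧ q'.support.card = q.support.card + 1 := by
  obtain ⟨x₀, hx₀⟩ := hint
  rw [mem_inter] at hx₀
  have hnsub : ¬ p.support ⊆ q.support := fun h => by
    have := card_le_card h; omega
  obtain ⟨y, hyp, hyq⟩ := Finset.not_subset.mp hnsub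
  obtain ⟨j, hj⟩ := hp.exists_pow_eq (mem_support.mp hx₀.1) (mem_support.mp hyp)
  have hex : ∃ i, (p ^ i) x₀ ∉ q.support := ⟨j, hj ▸ hyq⟩
  set k := Nat.find hex with hkdef
  have hk : (p ^ k) x₀ ∉ q.support := Nat.find_spec hex
  have hk0 : k ≠ 0 := by
    intro h
    rw [h, pow_zero] at hk
    exact hk (by simpa using hx₀.2)
  set a := (p ^ (k - 1)) x₀ with hadef
  have haq : a ∈ q.support := by
    have := Nat.find_min hex (show k - 1 < k by omega)
    exact not_not.mp this
  have hpa : p a ∉ q.support := by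
    have hstep : p a = (p ^ k) x₀ := by
      rw [hadef, ← mul_apply, ← pow_succ']
      congr 2
      omega
    rw [hstep]; exact hk
  have hap : a ∈ p.support := mem_support.mpr (fun h => hpa (h.symm ▸ haq))
  have hpamem : p a ∈ p.support := apply_mem_support.mpr hap
  have h3 : 3 ≤ p.support.card := by
    have := hq.two_le_card_support; omega
  have key : p * swap a (p a) = swap (p a) (p (p a)) * p := mul_swap_eq_swap_mul p a (p a)
  obtain ⟨hp1c, hp1s⟩ := shrink_left hp (x := p a) (mem_support.mp hpamem) h3
  rw [← key] at hp1c hp1s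
  obtain ⟨hq1c, hq1s⟩ := grow_left hq haq hpa
  refine ⟨p * swap a (p a), swap a (p a) * q, hp1c, hq1c, ?_, ?_, ?_, ?_⟩
  · rw [mul_assoc, ← mul_assoc (swap a (p a)), swap_mul_self, one_mul]
  · refine ⟨a, mem_inter.mpr ⟨?_, ?_⟩⟩
    · rw [hp1s, mem_sdiff, mem_singleton]
      exact ⟨hap, fun h => (mem_support.mp hap) h.symm⟩
    · rw [hq1s]; exact mem_insert_of_mem haq
  · rw [hp1s, card_sdiff_of_subset (by simpa using hpamem), card_singleton]
    omega
  · rw [hq1s, card_insert_of_notMem hpa]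

/-- Swapping the roles of the two factors by conjugation. -/
lemma conj_pair {p q : Perm α} (hp : p.IsCycle) (hq : q.IsCycle)
    (hint : (p.support ∩ q.support).Nonempty) :
    ∃ p' q' : Perm α, p'.IsCycle ∧ q'.IsCycle ∧ p' * q' = p * q ∧
      (p'.support ∩ q'.support).Nonempty ∧
      p'.support.card = q.support.card ∧ q'.support.card = p.support.card := by
  obtain ⟨x, hx⟩ := hint
  rw [mem_inter] at hx
  refine ⟨p * q * p⁻¹, p, hq.conj, hp, by group, ⟨p x, mem_inter.mpr ⟨?_, ?_⟩⟩,
    card_support_conj, rfl⟩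
  · rw [support_conj]
    exact mem_map_of_mem _ hx.2
  · exact apply_mem_support.mpr hx.1

lemma rebalance : ∀ d : ℕ, ∀ p q : Perm α, p.IsCycle → q.IsCycle →
    (p.support ∩ q.support).Nonempty →
    (p.support.card = q.support.card + 2 * d ∨ q.support.card = p.support.card + 2 * d) →
    ∃ p' q' : Perm α, p'.IsCycle ∧ q'.IsCycle ∧ p' * q' = p * q ∧
      (p'.support ∩ q'.support).Nonempty ∧ p'.support.card = q'.support.card ∧
      p'.support.card + q'.support.card = p.support.card + q.support.card := by
  intro d
  induction d with
  | zero =>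
    intro p q hp hq hint hcard
    exact ⟨p, q, hp, hq, rfl, hint, by omega, rfl⟩
  | succ d IH =>
    have main : ∀ p q : Perm α, p.IsCycle → q.IsCycle → (p.support ∩ q.support).Nonempty →
        p.support.card = q.support.card + 2 * (d + 1) →
        ∃ p' q' : Perm α, p'.IsCycle ∧ q'.IsCycle ∧ p' * q' = p * q ∧
          (p'.support ∩ q'.support).Nonempty ∧ p'.support.card = q'.support.card ∧
          p'.support.card + q'.support.card = p.support.card + q.support.card := by
      intro p q hp hq hint hbig
      obtain ⟨p₁, q₁, h1, h2, h3, h4, h5, h6⟩ := rebalance_step hp hq hint (by omega)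
      obtain ⟨p', q', g1, g2, g3, g4, g5, g6⟩ := IH p₁ q₁ h1 h2 h4 (Or.inl (by omega))
      exact ⟨p', q', g1, g2, g3.trans h3, g4, g5, by omega⟩
    intro p q hp hq hint hcard
    rcases hcard with hbig | hbig
    · exact main p q hp hq hint hbig
    · obtain ⟨p₂, q₂, h1, h2, h3, h4, h5, h6⟩ := conj_pair hp hq hint
      obtain ⟨p', q', g1, g2, g3, g4, g5, g6⟩ := main p₂ q₂ h1 h2 h4 (by omega)
      exact ⟨p', q', g1, g2, g3.trans h3, g4, g5, by omega⟩

lemma growpair : ∀ k : ℕ, ∀ p q : Perm α, p.IsCycle → q.IsCycle →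
    (p.support ∩ q.support).Nonempty → p.support.card = q.support.card →
    p.support.card + k ≤ Fintype.card α →
    ∃ p' q' : Perm α, p'.IsCycle ∧ q'.IsCycle ∧ p' * q' = p * q ∧
      p'.support.card = p.support.card + k ∧ q'.support.card = p.support.card + k := by
  intro k
  induction k with
  | zero =>
    intro p q hp hq _ hcard _
    exact ⟨p, q, hp, hq, rfl, by omega, by omega⟩
  | succ k IH =>
    intro p q hp hq hint hcard hn
    by_cases hss : p.support = q.support
    · have hlt : p.support.card < Fintype.card α := by omega
      have hzz : ∃ z, z ∉ p.support := by
        by_contra h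
        push_neg at h
        have : p.support = univ := eq_univ_iff_forall.mpr h
        rw [this, card_univ] at hlt
        omega
      obtain ⟨z, hz⟩ := hzz
      obtain ⟨a, ha⟩ := hint
      rw [mem_inter] at ha
      obtain ⟨hp1, hp1s⟩ := grow_right hp ha.1 hz
      have hzq : z ∉ q.support := by rwa [← hss]
      obtain ⟨hq1, hq1s⟩ := grow_left hq ha.2 hzq
      have hints : ((p * swap a z).support ∩ (swap a z * q).support).Nonempty :=
        ⟨z, mem_inter.mpr ⟨by rw [hp1s]; exact mem_insert_self _ _,
          by rw [hq1s]; exact mem_insert_self _ _⟩⟩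
      obtain ⟨p', q', g1, g2, g3, g4, g5⟩ := IH (p * swap a z) (swap a z * q) hp1 hq1 hints
        (by rw [hp1s, hq1s, card_insert_of_notMem hz, card_insert_of_notMem hzq]; omega)
        (by rw [hp1s, card_insert_of_notMem hz]; omega)
      refine ⟨p', q', g1, g2, ?_, ?_, ?_⟩
      · rw [g3, mul_assoc, ← mul_assoc (swap a z), swap_mul_self, one_mul]
      · rw [g4, hp1s, card_insert_of_notMem hz]; omega
      · rw [g5, hp1s, card_insert_of_notMem hz]; omega
    · have h1 : ∃ u, u ∈ q.support ∧ u ∉ p.support := by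
        by_contra h
        push_neg at h
        exact hss (Finset.eq_of_subset_of_card_le h (by omega)).symm
      have h2 : ∃ a, a ∈ p.support ∧ a ∉ q.support := by
        by_contra h
        push_neg at h
        exact hss (Finset.eq_of_subset_of_card_le h (by omega))
      obtain ⟨u, huq, hup⟩ := h1
      obtain ⟨a, hap, haq⟩ := h2
      obtain ⟨hp1, hp1s⟩ := grow_right hp hap hup
      obtain ⟨hq1, hq1s⟩ := grow_left hq huq haq
      rw [swap_comm u a] at hq1 hq1s
      obtain ⟨w, hw⟩ := hint
      rw [mem_inter] at hw
      have hints : ((p * swap a u).support ∩ (swap a u * q).support).Nonempty :=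
        ⟨w, mem_inter.mpr ⟨by rw [hp1s]; exact mem_insert_of_mem hw.1,
          by rw [hq1s]; exact mem_insert_of_mem hw.2⟩⟩
      obtain ⟨p', q', g1, g2, g3, g4, g5⟩ := IH (p * swap a u) (swap a u * q) hp1 hq1 hints
        (by rw [hp1s, hq1s, card_insert_of_notMem hup, card_insert_of_notMem haq]; omega)
        (by rw [hp1s, card_insert_of_notMem hup]; omega)
      refine ⟨p', q', g1, g2, ?_, ?_, ?_⟩
      · rw [g3, mul_assoc, ← mul_assoc (swap a u), swap_mul_self, one_mul]
      · rw [g4, hp1s, card_insert_of_notMem hup]; omega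
      · rw [g5, hp1s, card_insert_of_notMem hup]; omega




variable {α : Type*} [DecidableEq α] [Fintype α]

def FPred (σ : Perm α) : Prop :=
  σ = 1 ∨ σ.IsSwap ∨ ∃ p q : Perm α, p.IsCycle ∧ q.IsCycle ∧ σ = p * q ∧
    p.support.card + q.support.card = σ.support.card + Multiset.card σ.cycleType ∧
    (p.support ∩ q.support).Nonempty ∧ p.support ∪ q.support = σ.support

lemma fpred_cycle {σ : Perm α} (hσ : σ.IsCycle) : FPred σ := by
  rcases eq_or_lt_of_le hσ.two_le_card_support with h2 | h3
  · exact Or.inr (Or.inl (card_support_eq_two.mp h2.symm))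
  · right; right
    have h3 : 3 ≤ σ.support.card := h3
    obtain ⟨a, ha⟩ := card_pos.mp (show 0 < σ.support.card by omega)
    have hσa : σ a ≠ a := mem_support.mp ha
    have hσamem : σ a ∈ σ.support := apply_mem_support.mpr ha
    have key : σ * swap a (σ a) = swap (σ a) (σ (σ a)) * σ := mul_swap_eq_swap_mul σ a (σ a)
    obtain ⟨hpc, hps⟩ := shrink_left hσ (x := σ a) (mem_support.mp hσamem) h3
    rw [← key] at hpc hps
    have hane : a ≠ σ a := fun h => hσa h.symm
    refine ⟨σ * swap a (σ a), swap a (σ a), hpc, isCycle_swap hane, ?_, ?_, ?_, ?_⟩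
    · rw [mul_assoc, swap_mul_self, mul_one]
    · rw [hps, card_sdiff_of_subset (by simpa using hσamem), card_singleton,
        card_support_swap hane, hσ.cycleType]
      simp only [Multiset.coe_singleton, Multiset.card_singleton]
      omega
    · refine ⟨a, mem_inter.mpr ⟨?_, ?_⟩⟩
      · rw [hps, mem_sdiff, mem_singleton]; exact ⟨ha, hane⟩
      · rw [support_swap hane]; exact mem_insert_self _ _
    · rw [hps, support_swap hane]
      ext z
      simp only [mem_union, mem_sdiff, mem_singleton, mem_insert]
      constructor
      · rintro (⟨h, _⟩ | (rfl | rfl))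
        · exact h
        · exact ha
        · exact hσamem
      · intro hz
        rcases eq_or_ne z (σ a) with rfl | hne
        · exact Or.inr (Or.inr rfl)
        · exact Or.inl ⟨hz, hne⟩

lemma fpred_all (σ : Perm α) : FPred σ := by
  induction σ using cycle_induction_on with
  | base_one => exact Or.inl rfl
  | base_cycles σ hσ => exact fpred_cycle hσ
  | induction_disjoint c τ hd hc _ hτ =>
    rcases hτ with rfl | hsw | ⟨p', q', hp', hq', rfl, hsum, hin, hun⟩
    · rw [mul_one]; exact fpred_cycle hc
    · -- τ is a swap
      obtain ⟨x, y, hxy, rfl⟩ := hsw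
      right; right
      obtain ⟨a, ha⟩ := card_pos.mp
        (show 0 < c.support.card by have := hc.two_le_card_support; omega)
      have hds := disjoint_iff_disjoint_support.mp hd
      have hsxy : (swap x y).support = {x, y} := support_swap hxy
      have hxc : x ∉ c.support := by
        intro h
        exact (Finset.disjoint_left.mp hds h) (by rw [hsxy]; exact mem_insert_self _ _)
      have hyc : y ∉ c.support := by
        intro h
        exact (Finset.disjoint_left.mp hds h)
          (by rw [hsxy, mem_insert, mem_singleton]; exact Or.inr rfl)
      obtain ⟨hpc, hps⟩ := grow_right hc ha hxc
      have hax : a ≠ x := fun h => hxc (h ▸ ha)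
      have hay : a ≠ y := fun h => hyc (h ▸ ha)
      have hxsw : x ∈ (swap x y).support := by rw [hsxy]; exact mem_insert_self _ _
      have hasw : a ∉ (swap x y).support := by
        rw [hsxy, mem_insert, mem_singleton]
        rintro (h | h)
        · exact hax h
        · exact hay h
      obtain ⟨hqc, hqs⟩ := grow_left (isCycle_swap hxy) hxsw hasw
      rw [swap_comm x a] at hqc hqs
      refine ⟨c * swap a x, swap a x * swap x y, hpc, hqc, ?_, ?_, ?_, ?_⟩
      · simp only [mul_assoc, swap_mul_self_mul]
      · rw [hps, hqs, hd.cycleType_mul, hd.support_mul, card_union_of_disjoint hds,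
          hc.cycleType, (isCycle_swap hxy).cycleType,
          card_insert_of_notMem hxc, card_insert_of_notMem hasw,
          card_support_swap hxy]
        simp only [Multiset.coe_singleton, Multiset.card_add, Multiset.card_singleton]
      · exact ⟨x, mem_inter.mpr ⟨by rw [hps]; exact mem_insert_self _ _,
          by rw [hqs]; exact mem_insert_of_mem hxsw⟩⟩
      · rw [hps, hqs, hd.support_mul, hsxy]
        ext z
        simp only [mem_union, mem_insert, mem_singleton]
        constructor
        · rintro ((rfl | h) | (rfl | h))
          · exact Or.inr (Or.inl rfl)
          · exact Or.inl h
          · exact Or.inl ha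
          · exact Or.inr h
        · rintro (h | (rfl | rfl))
          · exact Or.inl (Or.inr h)
          · exact Or.inl (Or.inl rfl)
          · exact Or.inr (Or.inr (Or.inr rfl))
    · -- τ = p' * q' with the full invariant
      right; right
      obtain ⟨a, hain⟩ := hin
      rw [mem_inter] at hain
      obtain ⟨b, hb⟩ := card_pos.mp
        (show 0 < c.support.card by have := hc.two_le_card_support; omega)
      have hds := disjoint_iff_disjoint_support.mp hd
      have hsubp : p'.support ⊆ (p' * q').support := by
        rw [← hun]; exact subset_union_left
      have hsubq : q'.support ⊆ (p' * q').support := by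
        rw [← hun]; exact subset_union_right
      have hbp : b ∉ p'.support := fun h => (Finset.disjoint_left.mp hds hb) (hsubp h)
      have hbq : b ∉ q'.support := fun h => (Finset.disjoint_left.mp hds hb) (hsubq h)
      obtain ⟨hp1, hp1s⟩ := grow_right hp' hain.1 hbp
      have hintercp : c.support ∩ (p' * swap a b).support = {b} := by
        rw [hp1s]
        ext z
        simp only [mem_inter, mem_insert, mem_singleton]
        constructor
        · rintro ⟨hz1, rfl | hz2⟩
          · rfl
          · exact absurd (hsubp hz2) (Finset.disjoint_left.mp hds hz1)
        · rintro rfl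
          exact ⟨hb, Or.inl rfl⟩
      obtain ⟨hPc, hPs⟩ := merge_one_point c.support.card le_rfl hc hp1 hintercp
      obtain ⟨hQc, hQs⟩ := grow_left hq' hain.2 hbq
      refine ⟨c * (p' * swap a b), swap a b * q', hPc, hQc, ?_, ?_, ?_, ?_⟩
      · simp only [mul_assoc, swap_mul_self_mul]
      · have e1 := Finset.card_union_add_card_inter c.support (p' * swap a b).support
        rw [hintercp, card_singleton] at e1
        have e2 : (p' * swap a b).support.card = p'.support.card + 1 := by
          rw [hp1s, card_insert_of_notMem hbp]
        have e3 : (swap a b * q').support.card = q'.support.card + 1 := by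
          rw [hQs, card_insert_of_notMem hbq]
        have e4 : (c * (p' * q')).support.card
            = c.support.card + (p' * q').support.card := by
          rw [hd.support_mul, card_union_of_disjoint hds]
        have e5 : Multiset.card (c * (p' * q')).cycleType
            = 1 + Multiset.card (p' * q').cycleType := by
          rw [hd.cycleType_mul, Multiset.card_add, hc.cycleType]
          simp only [Multiset.coe_singleton, Multiset.card_singleton]
        rw [hPs]
        omega
      · refine ⟨b, mem_inter.mpr ⟨?_, ?_⟩⟩
        · rw [hPs]; exact mem_union_left _ hb
        · rw [hQs]; exact mem_insert_self _ _
      · rw [hPs, hp1s, hQs, hd.support_mul, ← hun]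
        ext z
        simp only [mem_union, mem_insert]
        constructor
        · rintro ((h | (rfl | h)) | (rfl | h))
          · exact Or.inl h
          · exact Or.inl hb
          · exact Or.inr (Or.inl h)
          · exact Or.inl hb
          · exact Or.inr (Or.inr h)
        · rintro (h | (h | h))
          · exact Or.inl (Or.inl h)
          · exact Or.inl (Or.inr (Or.inr h))
          · exact Or.inr (Or.inr h)

lemma exists_cycle_card {l : ℕ} (h2 : 2 ≤ l) (hl : l ≤ Fintype.card α) :
    ∃ c : Perm α, c.IsCycle ∧ c.support.card = l := by
  obtain ⟨s, _, hs⟩ := Finset.exists_subset_card_eq (s := (univ : Finset α)) (n := l) (by simpa using hl)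
  have hnd := s.nodup_toList
  have hlen : s.toList.length = l := by rw [Finset.length_toList, hs]
  have hone : ∀ x : α, s.toList ≠ [x] := by
    intro x h
    have := congrArg List.length h
    rw [hlen] at this
    simp at this
    omega
  refine ⟨s.toList.formPerm, List.isCycle_formPerm hnd (by omega), ?_⟩
  rw [List.support_formPerm_of_nodup _ hnd hone, List.toFinset_card_of_nodup hnd, hlen]

/-- Main sufficiency lemma. -/
lemma suff {σ : Perm α} (hsgn : sign σ = 1) {l : ℕ} (h2 : 2 ≤ l)
    (hml : σ.support.card + Multiset.card σ.cycleType ≤ 2 * l) (hln : l ≤ Fintype.card α) :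
    ∃ p q : Perm α, p.IsCycle ∧ q.IsCycle ∧ p.support.card = l ∧ q.support.card = l ∧
      σ = p * q := by
  rcases eq_or_ne σ 1 with rfl | hne
  · obtain ⟨c, hc, hcl⟩ := exists_cycle_card h2 hln
    exact ⟨c, c⁻¹, hc, hc.inv, hcl, by rw [support_inv]; exact hcl, by simp⟩
  have hnsw : ¬ σ.IsSwap := by
    rintro ⟨x, y, hxy, rfl⟩
    rw [sign_swap hxy] at hsgn
    exact absurd hsgn (by decide)
  rcases fpred_all σ with rfl | hsw | ⟨p, q, hp, hq, heq, hsum, hint, -⟩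
  · exact absurd rfl hne
  · exact absurd hsw hnsw
  have heven : Even (σ.support.card + Multiset.card σ.cycleType) := by
    have hs := sign_of_cycleType σ
    rw [hsgn, sum_cycleType] at hs
    by_contra hodd
    rw [Nat.not_even_iff_odd] at hodd
    rw [hodd.neg_one_pow] at hs
    exact absurd hs (by decide)
  obtain ⟨t, ht⟩ := heven
  have hro : ∃ d, (p.support.card = q.support.card + 2 * d ∨
      q.support.card = p.support.card + 2 * d) := by
    rcases le_total q.support.card p.support.card with hle | hle
    · exact ⟨(p.support.card - q.support.card) / 2, Or.inl (by omega)⟩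
    · exact ⟨(q.support.card - p.support.card) / 2, Or.inr (by omega)⟩
  obtain ⟨d, hd⟩ := hro
  obtain ⟨p₁, q₁, h1, h2', h3, h4, h5, h6⟩ := rebalance d p q hp hq hint hd
  have ht1 : p₁.support.card = t := by omega
  obtain ⟨p₂, q₂, g1, g2, g3, g4, g5⟩ := growpair (l - t) p₁ q₁ h1 h2' h4 h5
    (by omega)
  refine ⟨p₂, q₂, g1, g2, by omega, by omega, ?_⟩
  rw [heq, ← h3, ← g3]




variable {α : Type*} [DecidableEq α] [Fintype α]

/-- σ with big invariant and no cycle of length l is not a product of two l-cycles. -/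
lemma not_prod_of_big {n l : ℕ} (σ : Perm (Fin n))
    (hml : 2 * l < σ.support.card + Multiset.card σ.cycleType)
    (hnl : ∃ w ∈ σ.cycleType, w ≠ l) (p q : Perm (Fin n)) (hp : p.IsCycle) (hq : q.IsCycle)
    (hpl : p.support.card = l) (hql : q.support.card = l) (hσ : σ = p * q) : False := by
  by_cases hd : p.Disjoint q
  · have hct := hd.cycleType_mul
    rw [← hσ, hp.cycleType, hq.cycleType, hpl, hql] at hct
    obtain ⟨w, hw, hwl⟩ := hnl
    rw [hct] at hw
    rcases Multiset.mem_add.mp hw with h | h <;>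
      exact hwl (Multiset.mem_singleton.mp h)
  · have hint : (p.support ∩ q.support).Nonempty := by
      rw [disjoint_iff_disjoint_support] at hd
      rwa [← Finset.not_disjoint_iff_nonempty_inter]
    obtain ⟨b₁, hb₁⟩ := hint
    rw [mem_inter] at hb₁
    have key := key_count q.support.card p q hq rfl b₁ hb₁.1 hb₁.2
    have hrp : Multiset.card p.cycleType = 1 := card_cycleType_eq_one.mpr hp
    have hsub : σ.support ⊆ p.support ∪ q.support := by rw [hσ]; exact support_mul_le p q
    have hcard : σ.support.card ≤ l + (q.support \ p.support).card := by
      calc σ.support.card ≤ (p.support ∪ q.support).card := card_le_card hsub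
        _ = (p.support ∪ (q.support \ p.support)).card := by
            rw [Finset.union_sdiff_self_eq_union]
        _ ≤ p.support.card + (q.support \ p.support).card := card_union_le _ _
        _ = l + (q.support \ p.support).card := by rw [hpl]
    rw [← hσ] at key
    omega

/-- Support/cycleType of a product of disjoint cycles given by lists. -/
lemma mem_foldr_union {L : List (List α)} {x : α} :
    x ∈ (L.map List.toFinset).foldr (· ∪ ·) ∅ ↔ ∃ b ∈ L, x ∈ b := by
  induction L with
  | nil => simp
  | cons b L IH =>
    simp only [List.map_cons, List.foldr_cons, mem_union, List.mem_toFinset, IH,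
      List.mem_cons]
    constructor
    · rintro (h | ⟨b', hb', hx⟩)
      · exact ⟨b, Or.inl rfl, h⟩
      · exact ⟨b', Or.inr hb', hx⟩
    · rintro ⟨b', rfl | hb', hx⟩
      · exact Or.inl hx
      · exact Or.inr ⟨b', hb', hx⟩

lemma blocks_spec : ∀ L : List (List α), (∀ b ∈ L, 2 ≤ b.length) → (∀ b ∈ L, b.Nodup) →
    L.Pairwise List.Disjoint →
    ((L.map List.formPerm).prod).cycleType = ((L.map List.length : List ℕ) : Multiset ℕ) := by
  intro L
  induction L with
  | nil => intro _ _ _; simp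
  | cons b L IH =>
    intro hlen hnd hdisj
    -- auxiliary: support of the tail product
    have htail : ∀ (M : List (List α)), (∀ b ∈ M, 2 ≤ b.length) → (∀ b ∈ M, b.Nodup) →
        M.Pairwise List.Disjoint →
        ((M.map List.formPerm).prod).support = (M.map List.toFinset).foldr (· ∪ ·) ∅ := by
      intro M
      induction M with
      | nil => intro _ _ _; simp
      | cons c M IHM =>
        intro h1 h2 h3
        have hc2 : 2 ≤ c.length := h1 c (List.mem_cons_self)
        have hcnd : c.Nodup := h2 c (List.mem_cons_self)
        have hone : ∀ x : α, c ≠ [x] := fun x h => by rw [h] at hc2; simp at hc2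
        have hcs : c.formPerm.support = c.toFinset :=
          List.support_formPerm_of_nodup _ hcnd hone
        have hrest := IHM (fun b hb => h1 b (List.mem_cons_of_mem _ hb))
          (fun b hb => h2 b (List.mem_cons_of_mem _ hb)) (List.Pairwise.of_cons h3)
        have hdisj' : ∀ b' ∈ M, c.Disjoint b' := (List.pairwise_cons.mp h3).1
        have hds : _root_.Disjoint c.formPerm.support ((M.map List.formPerm).prod).support := by
          rw [hcs, hrest, Finset.disjoint_left]
          intro x hx hx'
          obtain ⟨b', hb', hxb'⟩ := mem_foldr_union.mp hx'
          exact hdisj' b' hb' (List.mem_toFinset.mp hx) hxb'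
        have hd : c.formPerm.Disjoint (M.map List.formPerm).prod :=
          disjoint_iff_disjoint_support.mpr hds
        rw [List.map_cons, List.prod_cons, hd.support_mul, hrest, hcs, List.map_cons,
          List.foldr_cons]
    have hb2 : 2 ≤ b.length := hlen b (List.mem_cons_self)
    have hbnd : b.Nodup := hnd b (List.mem_cons_self)
    have hone : ∀ x : α, b ≠ [x] := fun x h => by rw [h] at hb2; simp at hb2
    have hbsup : b.formPerm.support = b.toFinset := List.support_formPerm_of_nodup _ hbnd hone
    have hrest := htail L (fun b hb => hlen b (List.mem_cons_of_mem _ hb))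
      (fun b hb => hnd b (List.mem_cons_of_mem _ hb)) (List.Pairwise.of_cons hdisj)
    have hdisj' : ∀ b' ∈ L, b.Disjoint b' := (List.pairwise_cons.mp hdisj).1
    have hds : _root_.Disjoint b.formPerm.support ((L.map List.formPerm).prod).support := by
      rw [hbsup, hrest, Finset.disjoint_left]
      intro x hx hx'
      obtain ⟨b', hb', hxb'⟩ := mem_foldr_union.mp hx'
      exact hdisj' b' hb' (List.mem_toFinset.mp hx) hxb'
    have hd : b.formPerm.Disjoint (L.map List.formPerm).prod :=
      disjoint_iff_disjoint_support.mpr hds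
    have hcyc : b.formPerm.IsCycle := List.isCycle_formPerm hbnd hb2
    have hIH := IH (fun b hb => hlen b (List.mem_cons_of_mem _ hb))
      (fun b hb => hnd b (List.mem_cons_of_mem _ hb)) (List.Pairwise.of_cons hdisj)
    rw [List.map_cons, List.prod_cons, hd.cycleType_mul, hcyc.cycleType, hIH, hbsup,
      List.toFinset_card_of_nodup hbnd, List.map_cons]
    simp

/-- Building a permutation of `Fin n` with prescribed cycle type from ℕ-lists. -/
lemma build_bad {n : ℕ} (hn : 0 < n) (NL : List (List ℕ))
    (hlen : ∀ b ∈ NL, 2 ≤ b.length) (hnd : ∀ b ∈ NL, b.Nodup)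
    (hlt : ∀ b ∈ NL, ∀ x ∈ b, x < n) (hdisj : NL.Pairwise List.Disjoint) :
    ∃ σ : Perm (Fin n), σ.cycleType = ((NL.map List.length : List ℕ) : Multiset ℕ) := by
  set f : ℕ → Fin n := fun m => ⟨m % n, Nat.mod_lt m hn⟩ with hf
  have hinj : ∀ a < n, ∀ b < n, f a = f b → a = b := by
    intro a ha b hb h
    have := congrArg Fin.val h
    simpa [hf, Nat.mod_eq_of_lt ha, Nat.mod_eq_of_lt hb] using this
  set L : List (List (Fin n)) := NL.map (List.map f) with hL
  have h1 : ∀ b ∈ L, 2 ≤ b.length := by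
    intro b hb
    obtain ⟨b', hb', rfl⟩ := List.mem_map.mp hb
    rw [List.length_map]
    exact hlen b' hb'
  have h2 : ∀ b ∈ L, b.Nodup := by
    intro b hb
    obtain ⟨b', hb', rfl⟩ := List.mem_map.mp hb
    refine (hnd b' hb').map_on ?_
    intro x hx y hy hxy
    exact hinj x (hlt b' hb' x hx) y (hlt b' hb' y hy) hxy
  have h3 : L.Pairwise List.Disjoint := by
    rw [hL, List.pairwise_map]
    refine hdisj.imp_of_mem ?_
    intro b b' hb hb' hbd
    intro x hx hx'
    obtain ⟨u, hu, rfl⟩ := List.mem_map.mp hx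
    obtain ⟨v, hv, huv⟩ := List.mem_map.mp hx'
    have := hinj v (hlt b' hb' v hv) u (hlt b hb u hu) huv
    exact hbd hu (this ▸ hv)
  refine ⟨(L.map List.formPerm).prod, ?_⟩
  rw [blocks_spec L h1 h2 h3, hL, List.map_map]
  congr 1
  apply List.map_congr_left
  intro b _
  simp

/-- The standard pair blocks. -/
def pairsL (o K : ℕ) : List (List ℕ) := (List.range K).map (fun i => [o + 2*i, o + 2*i + 1])

lemma pairsL_lengths (o K : ℕ) : (pairsL o K).map List.length = List.replicate K 2 := by
  rw [pairsL, List.map_map]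
  rw [show (List.length ∘ fun i => [o + 2*i, o + 2*i + 1]) = fun _ => 2 from rfl]
  rw [List.map_const', List.length_range]

lemma pairsL_mem {o K : ℕ} {b : List ℕ} (hb : b ∈ pairsL o K) :
    ∃ i < K, b = [o + 2*i, o + 2*i + 1] := by
  obtain ⟨i, hi, rfl⟩ := List.mem_map.mp hb
  exact ⟨i, List.mem_range.mp hi, rfl⟩

lemma pairsL_pairwise (o K : ℕ) : (pairsL o K).Pairwise List.Disjoint := by
  rw [pairsL, List.pairwise_map]
  have := List.pairwise_lt_range (n := K)
  refine this.imp_of_mem ?_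
  intro i j _ _ hij
  intro x hx hx'
  simp only [List.mem_cons, List.not_mem_nil, or_false] at hx hx'
  omega


end Bertram


open Bertram

namespace Bertram

variable {α : Type*} [DecidableEq α] [Fintype α]

lemma package {n l : ℕ} {σ p q : Perm (Fin n)} (hp : p.IsCycle)
    (hq : q.IsCycle) (hpl : p.support.card = l) (hql : q.support.card = l)
    (hσ : σ = p * q) : IsProdOfCycles n 2 l σ := by
  refine ⟨![p, q], ?_, ?_⟩
  · intro i
    fin_cases i
    · exact ⟨hp, hpl⟩
    · exact ⟨hq, hql⟩
  · simpa [List.ofFn_succ] using hσ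

lemma unpack {n l : ℕ} {σ : Perm (Fin n)} (h : IsProdOfCycles n 2 l σ) :
    ∃ p q : Perm (Fin n), p.IsCycle ∧ q.IsCycle ∧
      p.support.card = l ∧ q.support.card = l ∧ σ = p * q := by
  obtain ⟨c, hc, hσ⟩ := h
  exact ⟨c 0, c 1, (hc 0).1, (hc 1).1, (hc 0).2, (hc 1).2, by simpa [List.ofFn_succ] using hσ⟩

lemma even_inv {σ : Perm α} (h : sign σ = 1) :
    Even (σ.support.card + Multiset.card σ.cycleType) := by
  have hs := sign_of_cycleType σ
  rw [h, sum_cycleType] at hs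
  by_contra hodd
  rw [Nat.not_even_iff_odd] at hodd
  rw [hodd.neg_one_pow] at hs
  exact absurd hs (by decide)

lemma two_r_le_m (σ : Perm α) : 2 * Multiset.card σ.cycleType ≤ σ.support.card := by
  have := Multiset.card_nsmul_le_sum (s := σ.cycleType)
    (fun x hx => (two_le_of_mem_cycleType hx : 2 ≤ x))
  rwa [sum_cycleType, smul_eq_mul, mul_comm] at this

lemma pairsL_basic {o K : ℕ} : (∀ b ∈ pairsL o K, 2 ≤ b.length) ∧
    (∀ b ∈ pairsL o K, b.Nodup) ∧
    (∀ b ∈ pairsL o K, ∀ x ∈ b, o ≤ x ∧ x < o + 2*K) := by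
  refine ⟨?_, ?_, ?_⟩ <;> intro b hb <;> obtain ⟨i, hi, rfl⟩ := pairsL_mem hb
  · simp
  · simp
  · intro x hx
    simp only [List.mem_cons, List.not_mem_nil, or_false] at hx
    omega

lemma two_mem_pairsL_lengths {o K : ℕ} (hK : 0 < K) :
    (2:ℕ) ∈ (pairsL o K).map List.length := by
  rw [pairsL_lengths]
  exact List.mem_replicate.mpr ⟨by omega, rfl⟩

end Bertram

theorem product_of_two_l_cycles_iff (n l : ℕ) (hn : 2 ≤ n) (hl : 2 ≤ l) :
    (∀ σ ∈ alternatingGroup (Fin n), IsProdOfCycles n 2 l σ) ↔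
      (3 * n / 4 ≤ l ∧ l ≤ n) ∨ (n = 4 ∧ l = 2) := by
  have hcardn : Fintype.card (Fin n) = n := Fintype.card_fin n
  constructor
  · intro H
    by_cases hc4 : n = 4 ∧ l = 2
    · exact Or.inr hc4
    left
    obtain ⟨p0, q0, hp0, hq0, hpl0, hql0, -⟩ := unpack (H 1 (one_mem _))
    have hln : l ≤ n := by
      have := Finset.card_le_univ p0.support
      rw [hcardn, hpl0] at this
      exact this
    refine ⟨?_, hln⟩
    by_contra hlt
    push_neg at hlt
    have hbad : ∃ σ : Perm (Fin n), sign σ = 1 ∧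
        2 * l < σ.support.card + Multiset.card σ.cycleType ∧
        ∃ w ∈ σ.cycleType, w ≠ l := by
      rcases eq_or_lt_of_le hl with hl2 | hl3
      · -- l = 2 case : use a 5-cycle
        have hn5 : 5 ≤ n := by
          by_contra h
          push_neg at h
          have h4 : n = 4 := by omega
          exact hc4 ⟨h4, hl2.symm⟩
        obtain ⟨σ, hσ⟩ := build_bad (show 0 < n by omega) [[0,1,2,3,4]]
          (by intro b hb; simp only [List.mem_singleton] at hb; subst hb; simp)
          (by intro b hb; simp only [List.mem_singleton] at hb; subst hb; decide)
          (by intro b hb x hx; simp only [List.mem_singleton] at hb; subst hb;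
              simp only [List.mem_cons, List.not_mem_nil, or_false] at hx; omega)
          (by simp)
        have hsum : σ.support.card = 5 := by
          rw [← sum_cycleType, hσ]; simp
        have hcard : Multiset.card σ.cycleType = 1 := by rw [hσ]; simp
        refine ⟨σ, ?_, by omega, ⟨5, ?_, by omega⟩⟩
        · rw [sign_of_cycleType, sum_cycleType, hsum, hcard]
          decide
        · rw [hσ]; simp
      · -- 3 ≤ l
        have hl3' : 3 ≤ l := hl3
        have hn6 : 6 ≤ n := by omega
        obtain ⟨hP1, hP2, hP3⟩ := @pairsL_basic 0 (2 * (n / 4))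
        obtain ⟨hQ1, hQ2, hQ3⟩ := @pairsL_basic 4 (2 * (n / 4) - 1)
        obtain ⟨hR1, hR2, hR3⟩ := @pairsL_basic 3 (2 * (n / 4))
        rcases (show n % 4 ≤ 1 ∨ n % 4 = 2 ∨ n % 4 = 3 by omega) with hs | hs | hs
        · -- n ≡ 0,1 mod 4 : all transpositions
          have hK : 0 < 2 * (n / 4) := by omega
          obtain ⟨σ, hσ⟩ := build_bad (show 0 < n by omega) (pairsL 0 (2 * (n / 4)))
            hP1 hP2 (fun b hb x hx => by have := hP3 b hb x hx; omega)
            (pairsL_pairwise _ _)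
          rw [pairsL_lengths] at hσ
          have hsum : σ.support.card = 2 * (2 * (n / 4)) := by
            rw [← sum_cycleType, hσ]
            simp [List.sum_replicate, mul_comm]
          have hcard : Multiset.card σ.cycleType = 2 * (n / 4) := by
            rw [hσ]; simp
          refine ⟨σ, ?_, by omega, ⟨2, ?_, by omega⟩⟩
          · rw [sign_of_cycleType, sum_cycleType, hsum, hcard]
            have : Even (2 * (2 * (n / 4)) + 2 * (n / 4)) := by
              rw [Nat.even_iff]; omega
            exact this.neg_one_pow
          · rw [hσ]
            exact List.mem_replicate.mpr ⟨by omega, rfl⟩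
        · -- n ≡ 2 mod 4 : one 4-cycle plus transpositions
          have hK : 0 < 2 * (n / 4) - 1 := by omega
          obtain ⟨σ, hσ⟩ := build_bad (show 0 < n by omega)
            ([0,1,2,3] :: pairsL 4 (2 * (n / 4) - 1))
            (by
              intro b hb
              rcases List.mem_cons.mp hb with rfl | hb'
              · simp
              · exact hQ1 b hb')
            (by
              intro b hb
              rcases List.mem_cons.mp hb with rfl | hb'
              · decide
              · exact hQ2 b hb')
            (by
              intro b hb x hx
              rcases List.mem_cons.mp hb with rfl | hb'
              · simp only [List.mem_cons, List.not_mem_nil, or_false] at hx; omega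
              · have := hQ3 b hb' x hx; omega)
            (by
              rw [List.pairwise_cons]
              refine ⟨?_, pairsL_pairwise _ _⟩
              intro b' hb' x hx hx'
              have h1 := hQ3 b' hb' x hx'
              simp only [List.mem_cons, List.not_mem_nil, or_false] at hx
              omega)
          rw [List.map_cons, pairsL_lengths] at hσ
          have hsum : σ.support.card = 4 + 2 * (2 * (n / 4) - 1) := by
            rw [← sum_cycleType, hσ]
            simp [List.sum_replicate, mul_comm]
          have hcard : Multiset.card σ.cycleType = 1 + (2 * (n / 4) - 1) := by
            rw [hσ]; simp; omega
          refine ⟨σ, ?_, by omega, ⟨2, ?_, by omega⟩⟩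
          · rw [sign_of_cycleType, sum_cycleType, hsum, hcard]
            have : Even (4 + 2 * (2 * (n / 4) - 1) + (1 + (2 * (n / 4) - 1))) := by
              rw [Nat.even_iff]; omega
            exact this.neg_one_pow
          · rw [hσ]
            simp only [Multiset.mem_coe, List.mem_cons]
            exact Or.inr (List.mem_replicate.mpr ⟨by omega, rfl⟩)
        · -- n ≡ 3 mod 4 : one 3-cycle plus transpositions
          have hK : 0 < 2 * (n / 4) := by omega
          obtain ⟨σ, hσ⟩ := build_bad (show 0 < n by omega)
            ([0,1,2] :: pairsL 3 (2 * (n / 4)))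
            (by
              intro b hb
              rcases List.mem_cons.mp hb with rfl | hb'
              · simp
              · exact hR1 b hb')
            (by
              intro b hb
              rcases List.mem_cons.mp hb with rfl | hb'
              · decide
              · exact hR2 b hb')
            (by
              intro b hb x hx
              rcases List.mem_cons.mp hb with rfl | hb'
              · simp only [List.mem_cons, List.not_mem_nil, or_false] at hx; omega
              · have := hR3 b hb' x hx; omega)
            (by
              rw [List.pairwise_cons]
              refine ⟨?_, pairsL_pairwise _ _⟩
              intro b' hb' x hx hx'
              have h1 := hR3 b' hb' x hx'
              simp only [List.mem_cons, List.not_mem_nil, or_false] at hx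
              omega)
          rw [List.map_cons, pairsL_lengths] at hσ
          have hsum : σ.support.card = 3 + 2 * (2 * (n / 4)) := by
            rw [← sum_cycleType, hσ]
            simp [List.sum_replicate, mul_comm]
          have hcard : Multiset.card σ.cycleType = 1 + 2 * (n / 4) := by
            rw [hσ]; simp; omega
          refine ⟨σ, ?_, by omega, ⟨2, ?_, by omega⟩⟩
          · rw [sign_of_cycleType, sum_cycleType, hsum, hcard]
            have : Even (3 + 2 * (2 * (n / 4)) + (1 + 2 * (n / 4))) := by
              rw [Nat.even_iff]; omega
            exact this.neg_one_pow
          · rw [hσ]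
            simp only [Multiset.mem_coe, List.mem_cons]
            exact Or.inr (List.mem_replicate.mpr ⟨by omega, rfl⟩)
    obtain ⟨σ, hsgn, hml, hnl⟩ := hbad
    obtain ⟨p, q, hp, hq, hpl, hql, heq⟩ :=
      unpack (H σ (mem_alternatingGroup.mpr hsgn))
    exact not_prod_of_big σ hml hnl p q hp hq hpl hql heq
  · intro hright σ hσmem
    rw [mem_alternatingGroup] at hσmem
    have h2r := two_r_le_m σ
    have hmn : σ.support.card ≤ n := by
      have := Finset.card_le_univ σ.support
      rwa [hcardn] at this
    have heven := even_inv hσmem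
    obtain ⟨t, ht⟩ := heven
    rcases hright with ⟨h34, hln⟩ | ⟨rfl, rfl⟩
    · have h2 : t ≤ 3 * n / 4 := Nat.le_div_iff_mul_le (by norm_num) |>.mpr (by omega)
      have hml : σ.support.card + Multiset.card σ.cycleType ≤ 2 * l := by omega
      obtain ⟨p, q, hp, hq, hpl, hql, heq⟩ := suff hσmem hl hml (by rw [hcardn]; exact hln)
      exact package hp hq hpl hql heq
    · by_cases hsmall : σ.support.card + Multiset.card σ.cycleType ≤ 4
      · obtain ⟨p, q, hp, hq, hpl, hql, heq⟩ := suff hσmem hl (by omega) (by rw [hcardn]; omega)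
        exact package hp hq hpl hql heq
      · push_neg at hsmall
        have hm4 : σ.support.card = 4 ∧ Multiset.card σ.cycleType = 2 := by omega
        have hparts : ∀ w ∈ σ.cycleType, w = 2 := by
          intro w hw
          have h2w := two_le_of_mem_cycleType hw
          have hco := Multiset.cons_erase hw
          have hsumw : w + (σ.cycleType.erase w).sum = 4 := by
            have h1 : (w ::ₘ σ.cycleType.erase w).sum = σ.cycleType.sum := by rw [hco]
            rw [Multiset.sum_cons] at h1
            rw [h1, sum_cycleType, hm4.1]
          have hcardw : Multiset.card (σ.cycleType.erase w) = 1 := by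
            have := congrArg Multiset.card hco
            rw [Multiset.card_cons] at this
            omega
          have hrest : 2 ≤ (σ.cycleType.erase w).sum := by
            have := Multiset.card_nsmul_le_sum (s := σ.cycleType.erase w)
              (fun x hx => (two_le_of_mem_cycleType (Multiset.mem_of_mem_erase hx) : 2 ≤ x))
            rw [hcardw] at this
            simpa using this
          omega
        obtain ⟨a, ha⟩ := card_pos.mp (show 0 < σ.support.card by omega)
        set c := σ.cycleOf a with hcdef
        have hcfac : c ∈ σ.cycleFactorsFinset := cycleOf_mem_cycleFactorsFinset_iff.mpr ha
        have hccyc : c.IsCycle := (mem_cycleFactorsFinset_iff.mp hcfac).1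
        have hck : c.support.card ∈ σ.cycleType := by
          have hle := cycleType_le_of_mem_cycleFactorsFinset hcfac
          rw [hccyc.cycleType] at hle
          exact Multiset.mem_of_le hle (by simp)
        have hc2 : c.support.card = 2 := hparts _ hck
        have hρtype : (σ * c⁻¹).cycleType = σ.cycleType - c.cycleType :=
          cycleType_mul_inv_mem_cycleFactorsFinset_eq_sub hcfac
        have hρcard : Multiset.card (σ * c⁻¹).cycleType = 1 := by
          rw [hρtype, Multiset.card_sub (cycleType_le_of_mem_cycleFactorsFinset hcfac),
            hccyc.cycleType]
          simp [hm4.2]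
        have hρcyc : (σ * c⁻¹).IsCycle := card_cycleType_eq_one.mp hρcard
        have hρ2 : (σ * c⁻¹).support.card = 2 := by
          have hmem : (σ * c⁻¹).support.card ∈ (σ * c⁻¹).cycleType := by
            rw [hρcyc.cycleType]; simp
          have hle : (σ * c⁻¹).cycleType ≤ σ.cycleType := by
            rw [hρtype]; exact tsub_le_self
          exact hparts _ (Multiset.mem_of_le hle hmem)
        exact package hρcyc hccyc hρ2 hc2 (by rw [inv_mul_cancel_right])
end

section
/- For every integer l > 2, n(2,l) = ⌊4l/3⌋ + 1; that is, every element of A_{⌊4l/3⌋+1} is a product of two l-cycles of S_{⌊4l/3⌋+1}, and for every n > ⌊4l/3⌋+1 there exists an element of A_n that is not a product of two l-cycles of S_n. -/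
open Equiv

namespace PAux

open List

variable {α : Type*} [DecidableEq α]

theorem swap_juggle {a b c : α} (hab : a ≠ b) (hac : a ≠ c) (hbc : b ≠ c) :
    Equiv.swap a b * Equiv.swap b c = Equiv.swap a c * Equiv.swap a b := by
  ext x
  simp only [Equiv.Perm.mul_apply, Equiv.swap_apply_def]
  split_ifs <;> simp_all

theorem swap_commute {a b c d : α} (hca : c ≠ a) (hcb : c ≠ b) (hda : d ≠ a) (hdb : d ≠ b) :
    Commute (Equiv.swap a b) (Equiv.swap c d) := by
  unfold Commute SemiconjBy
  ext x
  simp only [Equiv.Perm.mul_apply, Equiv.swap_apply_def]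
  split_ifs <;> simp_all

/-- Identity I : splitting a cycle at a shared point. -/
theorem formPerm_split (as bs : List α) (m : α) :
    formPerm (as ++ m :: bs) = formPerm (as ++ [m]) * formPerm (m :: bs) := by
  induction as with
  | nil => simp
  | cons a as ih =>
    cases as with
    | nil => simp [formPerm_cons_cons, formPerm_pair]
    | cons a' as' =>
      simp only [cons_append, formPerm_cons_cons] at ih ⊢
      rw [ih, mul_assoc]

/-- L2 : inserting `y` right before `x` in a cycle list equals `swap x y *`. -/
theorem formPerm_insert_before (B₁ B₂ : List α) (x y : α)
    (hy : y ∉ B₁ ++ x :: B₂) (hnd : Nodup (B₁ ++ x :: B₂)) :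
    formPerm (B₁ ++ y :: x :: B₂) = Equiv.swap x y * formPerm (B₁ ++ x :: B₂) := by
  induction B₁ with
  | nil =>
    simp only [nil_append, formPerm_cons_cons, swap_comm x y]
  | cons b B₁ ih =>
    simp only [mem_cons, cons_append, not_or] at hy
    have hnd' : Nodup (B₁ ++ x :: B₂) := (nodup_cons.mp hnd).2
    have hb : b ∉ B₁ ++ x :: B₂ := (nodup_cons.mp hnd).1
    cases B₁ with
    | nil =>
      have hbx : b ≠ x := by simpa using fun h => (hb (by simp [h]))
      have hby : b ≠ y := fun h => hy.1 h.symm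
      have hxy : x ≠ y := by
        intro h; exact hy.2 (by simp [h.symm])
      simp only [nil_append, cons_append, formPerm_cons_cons]
      rw [← mul_assoc, ← mul_assoc]
      congr 1
      ext z
      simp only [Equiv.Perm.mul_apply, Equiv.swap_apply_def]
      split_ifs <;> simp_all
    | cons b' B₁ =>
      have ihe := ih hy.2 hnd'
      simp only [cons_append, formPerm_cons_cons] at ihe ⊢
      rw [ihe, ← mul_assoc, ← mul_assoc]
      congr 1
      have hbx : b ≠ x := by simp [mem_append] at hb; tauto
      have hb'x : b' ≠ x := by
        have := (nodup_cons.mp hnd').1; simp [mem_append] at this ⊢; tauto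
      have hby : b ≠ y := fun h => hy.1 h.symm
      have hb'y : b' ≠ y := by
        have := hy.2; simp [mem_append] at this; tauto
      exact (swap_commute hbx.symm hb'x.symm hby.symm hb'y.symm).eq

/-- L1 : inserting `x` right after `y` in a cycle list equals `* swap x y`. -/
theorem formPerm_insert_after (A₁ A₂ : List α) (x y : α)
    (hx : x ∉ A₁ ++ y :: A₂) (hnd : Nodup (A₁ ++ y :: A₂)) :
    formPerm (A₁ ++ y :: x :: A₂) = formPerm (A₁ ++ y :: A₂) * Equiv.swap x y := by
  have h1 : (A₁ ++ y :: x :: A₂).reverse = A₂.reverse ++ x :: y :: A₁.reverse := by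
    simp
  have h2 : (A₁ ++ y :: A₂).reverse = A₂.reverse ++ y :: A₁.reverse := by simp
  have hx' : x ∉ A₂.reverse ++ y :: A₁.reverse := by
    rw [← h2, mem_reverse]; exact hx
  have hnd' : Nodup (A₂.reverse ++ y :: A₁.reverse) := by
    rw [← h2]; exact nodup_reverse.mpr hnd
  have key := formPerm_insert_before (A₂.reverse) (A₁.reverse) y x hx' hnd'
  have e1 : formPerm ((A₁ ++ y :: x :: A₂).reverse) = Equiv.swap y x *
      formPerm ((A₁ ++ y :: A₂).reverse) := by rw [h1, h2]; exact key
  rw [formPerm_reverse, formPerm_reverse] at e1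
  have := congrArg (·⁻¹) e1
  simp only [mul_inv_rev, inv_inv] at this
  rw [this]
  simp [Equiv.swap_comm x y, Equiv.swap_inv]

/-- Identity III : concatenating two disjoint cycle lists. -/
theorem formPerm_concat (B D : List α) (x y : α)
    (hnd : Nodup (x :: B ++ y :: D)) :
    formPerm (x :: B ++ y :: D) =
      Equiv.swap x y * formPerm (x :: B) * formPerm (y :: D) := by
  induction B generalizing x with
  | nil => simp [formPerm_cons_cons]
  | cons b B ih =>
    have hnd' : Nodup (b :: B ++ y :: D) := (nodup_cons.mp hnd).2
    have hx : x ∉ b :: B ++ y :: D := (nodup_cons.mp hnd).1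
    have hxb : x ≠ b := by simp [mem_append] at hx; tauto
    have hxy : x ≠ y := by simp [mem_append] at hx; tauto
    have hby : b ≠ y := by
      have := (nodup_cons.mp hnd').1; simp [mem_append] at this; tauto
    have ihe := ih b hnd'
    simp only [cons_append, formPerm_cons_cons] at ihe ⊢
    rw [ihe, ← mul_assoc, ← mul_assoc, ← mul_assoc]
    congr 1
    congr 1
    exact swap_juggle hxb hxy hby

theorem formPerm_commute_of_disjoint {A B : List α} (h : ∀ x ∈ A, x ∉ B) :
    Commute (formPerm A) (formPerm B) := by
  have hd : Equiv.Perm.Disjoint (formPerm A) (formPerm B) := by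
    intro x
    by_cases hx : x ∈ A
    · right; exact formPerm_apply_of_notMem (h x hx)
    · left; exact formPerm_apply_of_notMem hx
  exact hd.commute

theorem formPerm_last_to_head (as : List α) (m : α) (h : as ++ [m] ≠ []) :
    formPerm (as ++ [m]) m = (as ++ [m]).head h := by
  cases as with
  | nil => simp
  | cons a as =>
    have hl : ((a :: as) ++ [m]).getLast (by simp) = m := getLast_append_singleton _
    have key := formPerm_apply_getLast a (as ++ [m])
    have e : (a :: (as ++ [m])).getLast (cons_ne_nil _ _) = m := by
      exact hl
    rw [e] at key
    simpa using key

theorem cycle_split (L : List α) (hnd : L.Nodup) (p : ℕ) (hp1 : 1 ≤ p) (hp2 : p ≤ L.length) :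
    ∃ A B : List α, A.Nodup ∧ B.Nodup ∧ A.length = p ∧
      A.length + B.length = L.length + 1 ∧
      (∀ x ∈ A, x ∈ L) ∧ (∀ x ∈ B, x ∈ L) ∧
      formPerm A * formPerm B = formPerm L ∧
      ∃ (hA : A ≠ []) (hB : B ≠ []), B.head hB ∈ A ∧ formPerm A (B.head hB) = A.head hA := by
  set i := p - 1 with hi_def
  have hi : i < L.length := by omega
  have hsplit : L = L.take i ++ L[i] :: L.drop (i + 1) := by
    conv_lhs => rw [← List.take_append_drop i L]
    rw [List.drop_eq_getElem_cons hi]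
  set as := L.take i with has
  set m := L[i] with hm
  set bs := L.drop (i + 1) with hbs
  have hlenas : as.length = i := by rw [has, List.length_take]; omega
  have hlenbs : bs.length = L.length - (i + 1) := by rw [hbs, List.length_drop]
  have hnd' : Nodup (as ++ m :: bs) := hsplit ▸ hnd
  obtain ⟨nas, nmbs, dsj⟩ := List.nodup_append'.mp hnd'
  refine ⟨as ++ [m], m :: bs, ?_, nmbs, ?_, ?_, ?_, ?_, ?_, ?_⟩
  · exact List.nodup_append'.mpr ⟨nas, nodup_singleton m,
      fun x hx hx' => dsj hx (by simp [mem_singleton.mp hx'])⟩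
  · simp [hlenas]; omega
  · simp [hlenas, hlenbs]; omega
  · intro x hx
    rw [hsplit]
    rcases mem_append.mp hx with h | h
    · exact mem_append_left _ h
    · simp [mem_singleton.mp h]
  · intro x hx
    rw [hsplit]
    exact mem_append_right _ hx
  · rw [← formPerm_split]
    exact congrArg formPerm hsplit.symm
  · refine ⟨by simp, by simp, ?_, ?_⟩
    · simp
    · exact formPerm_last_to_head as m (by simp)

theorem length_le_sum_of_ne_nil (cs : List (List α)) (h : ∀ L ∈ cs, L ≠ []) :
    cs.length ≤ (cs.map List.length).sum := by
  induction cs with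
  | nil => simp
  | cons L cs ih =>
    have hL : 1 ≤ L.length := by
      have := h L (mem_cons_self)
      cases L with
      | nil => simp at this
      | cons a l => simp
    have := ih fun M hM => h M (mem_cons_of_mem _ hM)
    simp only [map_cons, sum_cons, length_cons]
    omega

theorem base_construction (cs : List (List α)) :
    (∀ L ∈ cs, L.Nodup) → (∀ L ∈ cs, L ≠ []) →
    List.Pairwise (fun L M => ∀ x ∈ L, x ∉ M) cs →
    ∀ p : ℕ, cs.length ≤ p → p ≤ (cs.map List.length).sum → cs ≠ [] →
    ∃ A B : List α, A.Nodup ∧ B.Nodup ∧ A.length = p ∧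
      A.length + B.length = (cs.map List.length).sum + cs.length ∧
      (∀ x ∈ A, ∃ L ∈ cs, x ∈ L) ∧ (∀ x ∈ B, ∃ L ∈ cs, x ∈ L) ∧
      formPerm A * formPerm B = (cs.map formPerm).prod ∧
      ∃ (hA : A ≠ []) (hB : B ≠ []), B.head hB ∈ A ∧ formPerm A (B.head hB) = A.head hA := by
  induction cs with
  | nil => intro _ _ _ p _ _ hne; exact absurd rfl hne
  | cons L cs ih =>
    intro hnd hne hpw p hp1 hp2 _
    rcases eq_or_ne cs [] with rfl | hcs
    · -- single cycle case
      obtain ⟨A, B, h1, h2, h3, h4, h5, h6, h7, h8⟩ :=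
        cycle_split L (hnd L (mem_cons_self)) p (by simpa using hp1) (by simpa using hp2)
      refine ⟨A, B, h1, h2, h3, by simpa using h4, ?_, ?_, by simpa using h7, h8⟩
      · exact fun x hx => ⟨L, mem_cons_self, h5 x hx⟩
      · exact fun x hx => ⟨L, mem_cons_self, h6 x hx⟩
    · -- inductive case
      have hndL := hnd L (mem_cons_self)
      have hnd_cs : ∀ M ∈ cs, M.Nodup := fun M hM => hnd M (mem_cons_of_mem _ hM)
      have hne_cs : ∀ M ∈ cs, M ≠ [] := fun M hM => hne M (mem_cons_of_mem _ hM)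
      have hpw_cs : List.Pairwise (fun L M => ∀ x ∈ L, x ∉ M) cs := (pairwise_cons.mp hpw).2
      have hdisj : ∀ M ∈ cs, ∀ x ∈ L, x ∉ M := (pairwise_cons.mp hpw).1
      have hLne : L ≠ [] := hne L (mem_cons_self)
      have hL1 : 1 ≤ L.length := List.length_pos_iff.mpr hLne
      set Sr := (cs.map List.length).sum with hSr_def
      have hSr : cs.length ≤ Sr := length_le_sum_of_ne_nil cs hne_cs
      have hcs1 : 1 ≤ cs.length := List.length_pos_iff.mpr hcs
      set p₁ := max 1 (p - Sr) with hp₁_def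
      have hp₁a : 1 ≤ p₁ := le_max_left _ _
      have hp₁b : p₁ ≤ L.length := by
        simp only [length_cons, map_cons, sum_cons] at hp1 hp2
        omega
      have hp₁c : p₁ ≤ p := by
        simp only [length_cons] at hp1
        omega
      obtain ⟨Ac, Bc, ndAc, ndBc, lenAc, lensc, memAc, memBc, prodc, hAcne, hBcne, hBh, hinvc⟩ :=
        cycle_split L hndL p₁ hp₁a hp₁b
      have hprc1 : cs.length ≤ p - p₁ := by
        simp only [length_cons] at hp1
        omega
      have hprc2 : p - p₁ ≤ Sr := by
        simp only [length_cons, map_cons, sum_cons] at hp2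
        omega
      obtain ⟨Ar, Br, ndAr, ndBr, lenAr, lensr, memAr, memBr, prodr, hArne, hBrne, hBhr, hinvr⟩ :=
        ih hnd_cs hne_cs hpw_cs (p - p₁) hprc1 hprc2 hcs
      -- membership helpers
      have memAcL : ∀ x ∈ Ac, x ∈ L := memAc
      have hAcAr : ∀ x ∈ Ac, x ∉ Ar := by
        intro x hx hx'
        obtain ⟨M, hM, hxM⟩ := memAr x hx'
        exact hdisj M hM x (memAc x hx) hxM
      have hAcBr : ∀ x ∈ Ac, x ∉ Br := by
        intro x hx hx'
        obtain ⟨M, hM, hxM⟩ := memBr x hx'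
        exact hdisj M hM x (memAc x hx) hxM
      have hBcAr : ∀ x ∈ Bc, x ∉ Ar := by
        intro x hx hx'
        obtain ⟨M, hM, hxM⟩ := memAr x hx'
        exact hdisj M hM x (memBc x hx) hxM
      have hBcBr : ∀ x ∈ Bc, x ∉ Br := by
        intro x hx hx'
        obtain ⟨M, hM, hxM⟩ := memBr x hx'
        exact hdisj M hM x (memBc x hx) hxM
      obtain ⟨ac, Act, rfl⟩ := exists_cons_of_ne_nil hAcne
      obtain ⟨mc, Bct, rfl⟩ := exists_cons_of_ne_nil hBcne
      obtain ⟨ar, Art, rfl⟩ := exists_cons_of_ne_nil hArne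
      obtain ⟨hr, Brt, rfl⟩ := exists_cons_of_ne_nil hBrne
      -- nodup of concatenations
      have ndA2 : Nodup ((ac :: Act) ++ (ar :: Art)) := by
        rw [List.nodup_append']
        exact ⟨ndAc, ndAr, fun x hx hx' => hAcAr x hx hx'⟩
      have ndB2 : Nodup ((mc :: Bct) ++ (hr :: Brt)) := by
        rw [List.nodup_append']
        exact ⟨ndBc, ndBr, fun x hx hx' => hBcBr x hx hx'⟩
      -- formPerm of the concatenations
      have hconcA : formPerm ((ac :: Act) ++ (ar :: Art)) =
          Equiv.swap ac ar * formPerm (ac :: Act) * formPerm (ar :: Art) :=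
        formPerm_concat Act Art ac ar ndA2
      have hconcB : formPerm ((mc :: Bct) ++ (hr :: Brt)) =
          Equiv.swap mc hr * formPerm (mc :: Bct) * formPerm (hr :: Brt) :=
        formPerm_concat Bct Brt mc hr ndB2
      have hrotA : formPerm ((ar :: Art) ++ (ac :: Act)) =
          formPerm ((ac :: Act) ++ (ar :: Art)) :=
        (formPerm_eq_of_isRotated ndA2 (isRotated_append)).symm
      -- key evaluation facts
      have hmcL : mc ∈ L := memBc mc (mem_cons_self)
      have hmcAc : mc ∈ ac :: Act := by simpa using hBh
      have hmcAr : mc ∉ ar :: Art := by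
        intro hx'
        obtain ⟨M, hM, hxM⟩ := memAr mc hx'
        exact hdisj M hM mc hmcL hxM
      have hinvc' : formPerm (ac :: Act) mc = ac := by simpa using hinvc
      have hinvr' : formPerm (ar :: Art) hr = ar := by simpa using hinvr
      have hhrAc : hr ∉ ac :: Act := by
        intro hx
        obtain ⟨M, hM, hxM⟩ := memBr hr (mem_cons_self)
        exact hdisj M hM hr (memAc hr hx) hxM
      have harAc : ar ∉ ac :: Act := by
        intro hx
        obtain ⟨M, hM, hxM⟩ := memAr ar (mem_cons_self)
        exact hdisj M hM ar (memAc ar hx) hxM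
      set αc := formPerm (ac :: Act)
      set αr := formPerm (ar :: Art)
      set βc := formPerm (mc :: Bct)
      set βr := formPerm (hr :: Brt)
      have hF1 : (αc * αr) mc = ac := by
        rw [Equiv.Perm.mul_apply, formPerm_apply_of_notMem hmcAr, hinvc']
      have hF2 : (αc * αr) hr = ar := by
        rw [Equiv.Perm.mul_apply, hinvr', formPerm_apply_of_notMem harAc]
      have key : Equiv.swap ac ar * (αc * αr) = (αc * αr) * Equiv.swap mc hr := by
        rw [← hF1, ← hF2, Equiv.swap_apply_apply]
        group
      have hcom : Commute αr βc := by
        apply formPerm_commute_of_disjoint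
        intro x hx hx'
        obtain ⟨M, hM, hxM⟩ := memAr x hx
        exact hdisj M hM x (memBc x hx') hxM
      refine ⟨(ar :: Art) ++ (ac :: Act), (mc :: Bct) ++ (hr :: Brt), ?_, ndB2, ?_, ?_, ?_, ?_,
        ?_, ?_⟩
      · rw [List.nodup_append']
        exact ⟨ndAr, ndAc, fun x hx hx' => hAcAr x hx' hx⟩
      · simp only [List.length_append] at lenAc lenAr ⊢
        omega
      · simp only [List.length_append, length_cons, map_cons, sum_cons] at lensc lensr ⊢
        omega
      · intro x hx
        rcases mem_append.mp hx with h | h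
        · obtain ⟨M, hM, hxM⟩ := memAr x h
          exact ⟨M, mem_cons_of_mem _ hM, hxM⟩
        · exact ⟨L, mem_cons_self, memAc x h⟩
      · intro x hx
        rcases mem_append.mp hx with h | h
        · exact ⟨L, mem_cons_self, memBc x h⟩
        · obtain ⟨M, hM, hxM⟩ := memBr x h
          exact ⟨M, mem_cons_of_mem _ hM, hxM⟩
      · -- the product identity
        rw [hrotA, hconcA, hconcB]
        have expand : Equiv.swap ac ar * αc * αr * (Equiv.swap mc hr * βc * βr) =
            (Equiv.swap ac ar * (αc * αr)) * Equiv.swap mc hr * (βc * βr) := by group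
        rw [expand, key]
        have cancel : αc * αr * Equiv.swap mc hr * Equiv.swap mc hr * (βc * βr) =
            αc * (αr * (βc * βr)) := by
          rw [mul_assoc (αc * αr), Equiv.swap_mul_self, mul_one, mul_assoc]
        rw [cancel]
        have swapmid : αr * (βc * βr) = βc * (αr * βr) := by
          rw [← mul_assoc, hcom.eq, mul_assoc]
        rw [swapmid]
        simp only [map_cons, prod_cons]
        rw [← prodc, ← prodr]
        group
      · refine ⟨by simp, by simp, ?_, ?_⟩
        · have : ((mc :: Bct) ++ (hr :: Brt)).head (by simp) = mc := rfl
          rw [this]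
          exact mem_append_right _ hmcAc
        · have h1 : ((mc :: Bct) ++ (hr :: Brt)).head (by simp) = mc := rfl
          have h2 : ((ar :: Art) ++ (ac :: Act)).head (by simp) = ar := rfl
          rw [h1, h2, hrotA, hconcA]
          simp only [Equiv.Perm.mul_apply]
          rw [formPerm_apply_of_notMem hmcAr]
          show Equiv.swap ac ar (αc mc) = ar
          rw [hinvc', Equiv.swap_apply_left]

theorem nodup_insert_after (l₁ l₂ : List α) (a z : α)
    (h : Nodup (l₁ ++ a :: l₂)) (hz : z ∉ l₁ ++ a :: l₂) :
    Nodup (l₁ ++ a :: z :: l₂) := by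
  have e : l₁ ++ a :: z :: l₂ = (l₁ ++ [a]) ++ z :: l₂ := by simp
  have e2 : l₁ ++ [a] ++ l₂ = l₁ ++ a :: l₂ := by simp
  rw [e, List.nodup_middle, nodup_cons, e2]
  refine ⟨?_, h⟩
  simp only [mem_append, mem_singleton, mem_cons, not_or] at hz ⊢
  tauto

theorem nodup_insert_before (l₁ l₂ : List α) (a z : α)
    (h : Nodup (l₁ ++ a :: l₂)) (hz : z ∉ l₁ ++ a :: l₂) :
    Nodup (l₁ ++ z :: a :: l₂) := by
  rw [show l₁ ++ z :: a :: l₂ = l₁ ++ z :: (a :: l₂) from rfl, List.nodup_middle, nodup_cons]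
  exact ⟨hz, h⟩

theorem pump_step [Fintype α] (σ : Equiv.Perm α) (w : α) (m : ℕ) (A B : List α)
    (ndA : A.Nodup) (ndB : B.Nodup) (hlA : A.length = m) (hlB : B.length = m)
    (hwA : w ∈ A) (hwB : w ∈ B)
    (hprod : formPerm A * formPerm B = σ) (hsize : m < Fintype.card α) :
    ∃ A' B' : List α, A'.Nodup ∧ B'.Nodup ∧ A'.length = m + 1 ∧ B'.length = m + 1 ∧
      w ∈ A' ∧ w ∈ B' ∧ formPerm A' * formPerm B' = σ := by
  by_cases hAB : ∀ x, x ∈ A ↔ x ∈ B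
  · -- equal as sets : use a fresh point z
    obtain ⟨z, hz⟩ : ∃ z, z ∉ A := by
      by_contra h
      push_neg at h
      have hsub : (Finset.univ : Finset α) ⊆ A.toFinset := fun z _ => mem_toFinset.mpr (h z)
      have := Finset.card_le_card hsub
      rw [Finset.card_univ, List.toFinset_card_of_nodup ndA, hlA] at this
      omega
    have hzB : z ∉ B := fun h => hz ((hAB z).mpr h)
    obtain ⟨A₁, A₂, rfl⟩ := List.append_of_mem hwA
    obtain ⟨B₁, B₂, rfl⟩ := List.append_of_mem hwB
    refine ⟨A₁ ++ w :: z :: A₂, B₁ ++ z :: w :: B₂,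
      nodup_insert_after _ _ _ _ ndA hz, nodup_insert_before _ _ _ _ ndB hzB,
      by simp only [List.length_append, length_cons] at hlA ⊢; omega,
      by simp only [List.length_append, length_cons] at hlB ⊢; omega, by simp, by simp, ?_⟩
    rw [formPerm_insert_after A₁ A₂ z w hz ndA,
      formPerm_insert_before B₁ B₂ w z hzB ndB]
    rw [mul_assoc, ← mul_assoc (Equiv.swap z w), Equiv.swap_comm z w, Equiv.swap_mul_self,
      one_mul]
    exact hprod
  · -- different sets : internal pump
    push_neg at hAB
    have hcard : A.toFinset.card = B.toFinset.card := by
      rw [List.toFinset_card_of_nodup ndA, List.toFinset_card_of_nodup ndB, hlA, hlB]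
    have hne : A.toFinset ≠ B.toFinset := by
      intro h
      obtain ⟨x, hx⟩ := hAB
      have := Finset.ext_iff.mp h x
      simp only [mem_toFinset] at this
      tauto
    have hBA : ∃ x ∈ B, x ∉ A := by
      by_contra h
      push_neg at h
      have hsub : B.toFinset ⊆ A.toFinset := by
        intro x hx; exact mem_toFinset.mpr (h x (mem_toFinset.mp hx))
      exact hne (Finset.eq_of_subset_of_card_le hsub (le_of_eq hcard)).symm
    have hABs : ∃ y ∈ A, y ∉ B := by
      by_contra h
      push_neg at h
      have hsub : A.toFinset ⊆ B.toFinset := by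
        intro x hx; exact mem_toFinset.mpr (h x (mem_toFinset.mp hx))
      exact hne (Finset.eq_of_subset_of_card_le hsub (ge_of_eq hcard))
    obtain ⟨x, hxB, hxA⟩ := hBA
    obtain ⟨y, hyA, hyB⟩ := hABs
    obtain ⟨A₁, A₂, rfl⟩ := List.append_of_mem hyA
    obtain ⟨B₁, B₂, rfl⟩ := List.append_of_mem hxB
    refine ⟨A₁ ++ y :: x :: A₂, B₁ ++ y :: x :: B₂,
      nodup_insert_after _ _ _ _ ndA hxA, nodup_insert_before _ _ _ _ ndB hyB,
      by simp only [List.length_append, length_cons] at hlA ⊢; omega,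
      by simp only [List.length_append, length_cons] at hlB ⊢; omega, ?_, ?_, ?_⟩
    · -- w ∈ A'
      rcases mem_append.mp hwA with h | h
      · exact mem_append_left _ h
      · rcases mem_cons.mp h with h' | h'
        · exact mem_append_right _ (by simp [h'])
        · exact mem_append_right _ (by simp [h'])
    · rcases mem_append.mp hwB with h | h
      · exact mem_append_left _ h
      · rcases mem_cons.mp h with h' | h'
        · exact mem_append_right _ (by simp [h'])
        · exact mem_append_right _ (by simp [h'])
    · rw [formPerm_insert_after A₁ A₂ x y hxA ndA,
        formPerm_insert_before B₁ B₂ x y hyB ndB]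
      rw [mul_assoc, ← mul_assoc (Equiv.swap x y), Equiv.swap_mul_self, one_mul]
      exact hprod

theorem pump_iter [Fintype α] (σ : Equiv.Perm α) (w : α) (k : ℕ) :
    ∀ (m : ℕ) (A B : List α), A.Nodup → B.Nodup → A.length = m → B.length = m →
    w ∈ A → w ∈ B → formPerm A * formPerm B = σ → m + k ≤ Fintype.card α →
    ∃ A' B' : List α, A'.Nodup ∧ B'.Nodup ∧ A'.length = m + k ∧ B'.length = m + k ∧
      formPerm A' * formPerm B' = σ := by
  induction k with
  | zero => exact fun m A B h1 h2 h3 h4 _ _ h7 _ => ⟨A, B, h1, h2, h3, h4, h7⟩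
  | succ k ih =>
    intro m A B h1 h2 h3 h4 h5 h6 h7 h8
    obtain ⟨A', B', g1, g2, g3, g4, g5, g6, g7⟩ :=
      pump_step σ w m A B h1 h2 h3 h4 h5 h6 h7 (by omega)
    obtain ⟨A'', B'', j1, j2, j3, j4, j7⟩ :=
      ih (m + 1) A' B' g1 g2 g3 g4 g5 g6 g7 (by omega)
    exact ⟨A'', B'', j1, j2, by omega, by omega, j7⟩

theorem exists_cycle_lists [Fintype α] [LinearOrder α] (σ : Equiv.Perm α) :
    ∃ cs : List (List α), (∀ L ∈ cs, L.Nodup) ∧ (∀ L ∈ cs, 2 ≤ L.length) ∧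
      List.Pairwise (fun L M => ∀ x ∈ L, x ∉ M) cs ∧
      (cs.map formPerm).prod = σ ∧
      (cs.map List.length).sum = σ.cycleType.sum ∧ cs.length = σ.cycleType.card := by
  classical
  set F := σ.cycleFactorsFinset with hF
  have hcyc : ∀ c ∈ F, c.IsCycle := fun c hc =>
    (Equiv.Perm.mem_cycleFactorsFinset_iff.mp hc).1
  -- pointed list for each cycle
  let pL : Equiv.Perm α → List α := fun c =>
    if h : c.support.Nonempty then c.toList (c.support.min' h) else []
  have key : ∀ c ∈ F, (pL c).Nodup ∧ formPerm (pL c) = c ∧ (pL c).length = c.support.card ∧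
      ∀ x ∈ pL c, x ∈ c.support := by
    intro c hc
    have hcy := hcyc c hc
    have hsupp : c.support.Nonempty := by
      rw [Finset.nonempty_iff_ne_empty]
      intro h
      exact hcy.ne_one (by rwa [← Equiv.Perm.support_eq_empty_iff])
    have hx : c.support.min' hsupp ∈ c.support := Finset.min'_mem _ _
    have hx' : c (c.support.min' hsupp) ≠ c.support.min' hsupp := Equiv.Perm.mem_support.mp hx
    have hpl : pL c = c.toList (c.support.min' hsupp) := by simp [pL, hsupp]
    have hco : c.cycleOf (c.support.min' hsupp) = c := hcy.cycleOf_eq hx'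
    refine ⟨?_, ?_, ?_, ?_⟩
    · rw [hpl]; exact Equiv.Perm.nodup_toList _ _
    · rw [hpl, Equiv.Perm.formPerm_toList, hco]
    · rw [hpl, Equiv.Perm.length_toList, hco]
    · intro x hxmem
      rw [hpl] at hxmem
      obtain ⟨hsc, hmem⟩ := Equiv.Perm.mem_toList_iff.mp hxmem
      obtain ⟨i, hi⟩ := hsc
      rw [← hi]
      exact (Equiv.Perm.zpow_apply_mem_support (n := i)).mpr hx
  refine ⟨F.toList.map pL, ?_, ?_, ?_, ?_, ?_, ?_⟩
  · intro L hL
    obtain ⟨c, hc, rfl⟩ := mem_map.mp hL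
    exact (key c (Finset.mem_toList.mp hc)).1
  · intro L hL
    obtain ⟨c, hc, rfl⟩ := mem_map.mp hL
    rw [(key c (Finset.mem_toList.mp hc)).2.2.1]
    exact (hcyc c (Finset.mem_toList.mp hc)).two_le_card_support
  · rw [List.pairwise_map]
    have hnd := F.nodup_toList
    refine hnd.pairwise_of_set_pairwise ?_
    intro c hc c' hc' hne x hxc hxc'
    simp only [Set.mem_setOf_eq, Finset.mem_toList] at hc hc'
    have hd : Equiv.Perm.Disjoint c c' :=
      σ.cycleFactorsFinset_pairwise_disjoint hc hc' hne
    have h1 := (key c hc).2.2.2 x hxc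
    have h2 := (key c' hc').2.2.2 x hxc'
    rw [Equiv.Perm.disjoint_iff_disjoint_support] at hd
    exact Finset.disjoint_left.mp hd h1 h2
  · have : (F.toList.map pL).map formPerm = F.toList := by
      rw [List.map_map]
      have : ∀ c ∈ F.toList, (formPerm ∘ pL) c = id c := by
        intro c hc
        exact (key c (Finset.mem_toList.mp hc)).2.1
      rw [List.map_congr_left this, List.map_id]
    rw [this]
    -- prod of toList = σ
    have h := Equiv.Perm.cycleFactorsFinset_noncommProd σ
    rw [← h, Finset.noncommProd]
    have hgen : ∀ (m : Multiset (Equiv.Perm α)) (hcomm : {x | x ∈ m}.Pairwise Commute),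
        m = (F.toList : Multiset (Equiv.Perm α)) → m.noncommProd hcomm = F.toList.prod := by
      rintro m hcomm rfl
      exact Multiset.noncommProd_coe _ _
    exact (hgen _ _ (by rw [Multiset.map_id]; exact (Finset.coe_toList F).symm)).symm
  · rw [List.map_map, Equiv.Perm.cycleType]
    have : ∀ c ∈ F.toList, (List.length ∘ pL) c = (Finset.card ∘ Equiv.Perm.support) c := by
      intro c hc
      exact (key c (Finset.mem_toList.mp hc)).2.2.1
    rw [List.map_congr_left this]
    rw [← Finset.coe_toList F, Multiset.map_coe, Multiset.sum_coe]
  · simp [Equiv.Perm.cycleType, hF]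

theorem two_mul_length_le_sum (cs : List (List α)) (h : ∀ L ∈ cs, 2 ≤ L.length) :
    2 * cs.length ≤ (cs.map List.length).sum := by
  induction cs with
  | nil => simp
  | cons L cs ih =>
    have h1 := h L (mem_cons_self)
    have h2 := ih fun M hM => h M (mem_cons_of_mem _ hM)
    simp only [map_cons, sum_cons, length_cons]
    omega

theorem prod_two_cycles (n l : ℕ) (hl2 : 2 ≤ l) (hln : l ≤ n) (σ : Equiv.Perm (Fin n))
    (hb : σ.cycleType.sum + σ.cycleType.card ≤ 2 * l)
    (heven : Even (σ.cycleType.sum + σ.cycleType.card)) :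
    ∃ A B : List (Fin n), A.Nodup ∧ B.Nodup ∧ A.length = l ∧ B.length = l ∧
      formPerm A * formPerm B = σ := by
  by_cases hσ1 : σ = 1
  · subst hσ1
    set A := (List.finRange n).take l with hA
    have ndA : A.Nodup := (List.take_sublist _ _).nodup (List.nodup_finRange n)
    have lenA : A.length = l := by
      rw [hA, List.length_take, List.length_finRange]
      omega
    refine ⟨A, A.reverse, ndA, List.nodup_reverse.mpr ndA, lenA, by simpa using lenA, ?_⟩
    rw [List.formPerm_reverse, mul_inv_cancel]
  · obtain ⟨cs, hnd, hlen2, hpw, hprod, hsum, hcard⟩ := exists_cycle_lists σ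
    have hne : ∀ L ∈ cs, L ≠ [] := by
      intro L hL h
      have := hlen2 L hL
      simp [h] at this
    have ht1 : 1 ≤ σ.cycleType.card := by
      rcases Nat.eq_zero_or_pos (Multiset.card σ.cycleType) with h | h
      · exact absurd (Equiv.Perm.card_cycleType_eq_zero.mp h) hσ1
      · exact h
    have hcsne : cs ≠ [] := by
      intro h
      rw [h] at hcard
      simp at hcard
      omega
    have h2t := two_mul_length_le_sum cs hlen2
    obtain ⟨h, hh⟩ := heven
    set s := σ.cycleType.sum
    set t := Multiset.card σ.cycleType
    have hbase := base_construction cs hnd hne hpw h (by omega) (by omega) hcsne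
    obtain ⟨A, B, ndA, ndB, lenA, lenAB, memA, memB, hAB, hAne, hBne, hw1, _⟩ := hbase
    have lenB : B.length = h := by omega
    have hw2 : B.head hBne ∈ B := List.head_mem hBne
    have hiter := pump_iter σ (B.head hBne) (l - h) h A B ndA ndB lenA lenB hw1 hw2
      (by rw [hAB, hprod]) (by simp only [Fintype.card_fin]; omega)
    obtain ⟨A', B', ndA', ndB', lenA', lenB', hAB'⟩ := hiter
    exact ⟨A', B', ndA', ndB', by omega, by omega, hAB'⟩

theorem positive_final (l : ℕ) (hl : 2 < l) (σ : Equiv.Perm (Fin (4 * l / 3 + 1)))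
    (hσ : σ ∈ alternatingGroup (Fin (4 * l / 3 + 1))) :
    IsProdOfCycles (4 * l / 3 + 1) 2 l σ := by
  have hn : Fintype.card (Fin (4 * l / 3 + 1)) = 4 * l / 3 + 1 := Fintype.card_fin _
  set s := σ.cycleType.sum with hs
  set t := Multiset.card σ.cycleType with ht
  have hsn : s ≤ 4 * l / 3 + 1 := by
    rw [hs, Equiv.Perm.sum_cycleType]
    calc σ.support.card ≤ Fintype.card (Fin (4 * l / 3 + 1)) := Finset.card_le_univ _
    _ = 4 * l / 3 + 1 := Fintype.card_fin _
  have h2t : 2 * t ≤ s := by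
    have := Multiset.card_nsmul_le_sum (s := σ.cycleType) (a := 2)
      fun x hx => Equiv.Perm.two_le_of_mem_cycleType hx
    rw [smul_eq_mul] at this
    omega
  have heven : Even (s + t) := by
    have hsign : Equiv.Perm.sign σ = 1 := Equiv.Perm.mem_alternatingGroup.mp hσ
    rw [Equiv.Perm.sign_of_cycleType] at hsign
    rcases Nat.even_or_odd (s + t) with h | h
    · exact h
    · exfalso
      rw [Odd.neg_one_pow h] at hsign
      exact absurd hsign (by decide)
  have hb : s + t ≤ 2 * l := by
    obtain ⟨r, hr⟩ := heven
    omega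
  obtain ⟨A, B, ndA, ndB, lenA, lenB, hAB⟩ :=
    prod_two_cycles (4 * l / 3 + 1) l (by omega) (by omega) σ hb heven
  have hsupp : ∀ (C : List (Fin (4 * l / 3 + 1))), C.Nodup → C.length = l →
      (formPerm C).IsCycle ∧ (formPerm C).support.card = l := by
    intro C ndC lenC
    refine ⟨List.isCycle_formPerm ndC (by omega), ?_⟩
    rw [List.support_formPerm_of_nodup C ndC (fun x h => by rw [h] at lenC; simp at lenC; omega),
      List.toFinset_card_of_nodup ndC, lenC]
  refine ⟨![formPerm A, formPerm B], ?_, ?_⟩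
  · intro i
    fin_cases i
    · exact hsupp A ndA lenA
    · exact hsupp B ndB lenB
  · have : List.ofFn ![formPerm A, formPerm B] = [formPerm A, formPerm B] := by
      simp [List.ofFn_succ]
    rw [this]
    simp only [List.prod_cons, List.prod_nil, mul_one]
    exact hAB.symm

section WithFintype
variable [Fintype α]

/-- a nonempty "invariant" subset of the support of a cycle contains the whole support -/
theorem cycle_support_subset_of_invariant (g : Equiv.Perm α) (hg : g.IsCycle)
    (S : Finset α) (hS : ∀ x ∈ S, g x ∈ S) (x0 : α) (hx0S : x0 ∈ S)
    (hx0 : x0 ∈ g.support) : g.support ⊆ S := by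
  intro y hy
  have hsc : g.SameCycle x0 y :=
    hg.sameCycle (Equiv.Perm.mem_support.mp hx0) (Equiv.Perm.mem_support.mp hy)
  obtain ⟨i, _, _, hiy⟩ := hsc.exists_pow_eq g
  have hpow : ∀ j : ℕ, (g ^ j) x0 ∈ S := by
    intro j
    induction j with
    | zero => simpa using hx0S
    | succ j ih =>
      rw [pow_succ', Equiv.Perm.mul_apply]
      exact hS _ ih
  rw [← hiy]
  exact hpow i

theorem inv_mem_support' (g : Equiv.Perm α) {y : α} (h : y ∈ g.support) :
    g⁻¹ y ∈ g.support := by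
  rw [Equiv.Perm.mem_support] at h ⊢
  rw [show g (g⁻¹ y) = y from g.apply_symm_apply y]
  intro hh
  apply h
  conv_lhs => rw [hh]
  simp

theorem neg_core (l : ℕ) (f g : Equiv.Perm α) (hf : f.IsCycle) (hg : g.IsCycle)
    (hfl : f.support.card = l) (hgl : g.support.card = l) :
    (f * g).cycleType = {l, l} ∨
      (f * g).cycleType.sum + Multiset.card (f * g).cycleType ≤ 2 * l := by
  by_cases hd : f.Disjoint g
  · left
    rw [hd.cycleType_mul, hf.cycleType, hg.cycleType, hfl, hgl]
    rfl
  · right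
    -- a common moved point
    have hz : ∃ z, f z ≠ z ∧ g z ≠ z := by
      by_contra h
      push_neg at h
      exact hd fun x => by
        rcases eq_or_ne (f x) x with h1 | h1
        · exact Or.inl h1
        · exact Or.inr (h x h1)
    obtain ⟨z, hzf, hzg⟩ := hz
    have hzfs : z ∈ f.support := Equiv.Perm.mem_support.mpr hzf
    have hzgs : z ∈ g.support := Equiv.Perm.mem_support.mpr hzg
    set σ := f * g with hσ
    set W : Finset α := g.support.filter (fun x => g x ∈ f.support) with hW
    -- W has the same cardinality as the intersection of the supports
    have hWimage : W.image g = f.support ∩ g.support := by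
      ext y
      simp only [Finset.mem_image, Finset.mem_inter, hW, Finset.mem_filter]
      constructor
      · rintro ⟨x, ⟨hx1, hx2⟩, rfl⟩
        exact ⟨hx2, (Equiv.Perm.apply_mem_support).mpr hx1⟩
      · rintro ⟨hy1, hy2⟩
        refine ⟨g⁻¹ y, ⟨inv_mem_support' g hy2, ?_⟩, by simp⟩
        simpa using hy1
    have hWcard : W.card = (f.support ∩ g.support).card := by
      rw [← hWimage, Finset.card_image_of_injective _ g.injective]
    have hU : σ.support ⊆ f.support ∪ g.support := by
      have := Equiv.Perm.support_mul_le f g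
      exact this
    set Ufix : Finset α := (f.support ∪ g.support) \ σ.support with hUfix
    -- fixed points in the union are in W
    have hfixW : Ufix ⊆ W := by
      intro x hx
      obtain ⟨hxu, hxs⟩ := Finset.mem_sdiff.mp hx
      have hσx : σ x = x := by
        by_contra h
        exact hxs (Equiv.Perm.mem_support.mpr h)
      have hgx : g x ≠ x := by
        intro h
        have hfx : f x = x := by
          rw [hσ] at hσx
          rw [Equiv.Perm.mul_apply, h] at hσx
          exact hσx
        rcases Finset.mem_union.mp hxu with h' | h'
        · exact (Equiv.Perm.mem_support.mp h') hfx
        · exact (Equiv.Perm.mem_support.mp h') h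
      have hgfx : g x ∈ f.support := by
        rw [Equiv.Perm.mem_support]
        intro h
        rw [hσ, Equiv.Perm.mul_apply, h] at hσx
        exact hgx hσx
      rw [hW, Finset.mem_filter]
      exact ⟨Equiv.Perm.mem_support.mpr hgx, hgfx⟩
    -- every cycle of σ meets W
    have hcycW : ∀ c ∈ σ.cycleFactorsFinset, ∃ x, x ∈ c.support ∧ x ∈ W := by
      intro c hc
      obtain ⟨hcc, hceq⟩ := Equiv.Perm.mem_cycleFactorsFinset_iff.mp hc
      have hCσ : c.support ⊆ σ.support := Equiv.Perm.mem_cycleFactorsFinset_support_le hc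
      have hCinv : ∀ x ∈ c.support, σ x ∈ c.support := by
        intro x hx
        rw [← hceq x hx]
        exact Equiv.Perm.apply_mem_support.mpr hx
      by_contra hno
      push_neg at hno
      by_cases hCB : ∃ x0 ∈ c.support, x0 ∈ g.support
      · obtain ⟨x0, hx0C, hx0g⟩ := hCB
        have hS : ∀ x ∈ c.support ∩ g.support, g x ∈ c.support ∩ g.support := by
          intro x hx
          obtain ⟨hx1, hx2⟩ := Finset.mem_inter.mp hx
          have hnW : x ∉ W := hno x hx1
          rw [hW, Finset.mem_filter] at hnW
          have hgnf : g x ∉ f.support := fun h => hnW ⟨hx2, h⟩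
          have hσx : σ x = g x := by
            rw [hσ, Equiv.Perm.mul_apply]
            exact Equiv.Perm.notMem_support.mp hgnf
          refine Finset.mem_inter.mpr ⟨?_, Equiv.Perm.apply_mem_support.mpr hx2⟩
          rw [← hσx]
          exact hCinv x hx1
        have hsub := cycle_support_subset_of_invariant g hg _ hS x0
          (Finset.mem_inter.mpr ⟨hx0C, hx0g⟩) hx0g
        -- now y := g⁻¹ z gives a contradiction
        have hyg : g⁻¹ z ∈ g.support := inv_mem_support' g hzgs
        have hyC : g⁻¹ z ∈ c.support := (Finset.mem_inter.mp (hsub hyg)).1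
        have := hno _ hyC
        rw [hW, Finset.mem_filter] at this
        exact this ⟨hyg, by simpa using hzfs⟩
      · push_neg at hCB
        have hSf : ∀ x ∈ c.support, f x ∈ c.support := by
          intro x hx
          have hgx : g x = x := Equiv.Perm.notMem_support.mp (hCB x hx)
          have hσx : σ x = f x := by rw [hσ, Equiv.Perm.mul_apply, hgx]
          rw [← hσx]
          exact hCinv x hx
        obtain ⟨x0, hx0⟩ := hcc.nonempty_support
        have hx0f : x0 ∈ f.support := by
          rw [Equiv.Perm.mem_support]
          intro h
          have hgx : g x0 = x0 := Equiv.Perm.notMem_support.mp (hCB x0 hx0)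
          have : σ x0 = x0 := by rw [hσ, Equiv.Perm.mul_apply, hgx, h]
          exact (Equiv.Perm.mem_support.mp (hCσ hx0)) this
        have hsub := cycle_support_subset_of_invariant f hf _ hSf x0 hx0 hx0f
        exact (hCB z (hsub hzfs)) hzgs
    -- counting
    have hcards : σ.cycleFactorsFinset.card ≤ (W \ Ufix).card := by
      have hzjunk : True := trivial
      set wit : Equiv.Perm α → α := fun c =>
        if h : ∃ x, x ∈ c.support ∧ x ∈ W then h.choose else z with hwit
      apply Finset.card_le_card_of_injOn wit
      · intro c hc
        have h := hcycW c hc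
        have hspec := h.choose_spec
        rw [hwit]
        simp only [dif_pos h]
        refine Finset.mem_sdiff.mpr ⟨hspec.2, ?_⟩
        intro hmem
        have := (Finset.mem_sdiff.mp hmem).2
        exact this (Equiv.Perm.mem_cycleFactorsFinset_support_le hc hspec.1)
      · intro c hc c' hc' heq
        by_contra hne
        have h := hcycW c (by simpa using hc)
        have h' := hcycW c' (by simpa using hc')
        have hd2 : _root_.Disjoint c.support c'.support := by
          rw [← Equiv.Perm.disjoint_iff_disjoint_support]
          exact σ.cycleFactorsFinset_pairwise_disjoint (by simpa using hc)
            (by simpa using hc') hne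
        rw [hwit] at heq
        simp only [dif_pos h, dif_pos h'] at heq
        exact Finset.disjoint_left.mp hd2 (h.choose_spec.1) (heq ▸ h'.choose_spec.1)
    have e1 : (W \ Ufix).card + Ufix.card = W.card :=
      Finset.card_sdiff_add_card_eq_card hfixW
    have e2 : Ufix.card + σ.support.card = (f.support ∪ g.support).card :=
      Finset.card_sdiff_add_card_eq_card hU
    have e3 : (f.support ∩ g.support).card + (f.support ∪ g.support).card = 2 * l := by
      rw [Finset.card_inter_add_card_union, hfl, hgl]
      omega
    have e4 : Multiset.card σ.cycleType = σ.cycleFactorsFinset.card := by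
      simp [Equiv.Perm.cycleType]
    have e5 : σ.cycleType.sum = σ.support.card := Equiv.Perm.sum_cycleType σ
    rw [e4, e5]
    omega

end WithFintype

theorem negative_main (n l : ℕ) (hl : 2 < l) (m : Multiset ℕ) (hsum : m.sum ≤ n)
    (h2 : ∀ x ∈ m, 2 ≤ x) (hsc : m.sum + Multiset.card m = 2 * l + 2) (hm2 : 2 ∈ m) :
    ∃ σ ∈ alternatingGroup (Fin n), ¬ IsProdOfCycles n 2 l σ := by
  obtain ⟨σ, hσ⟩ := (Equiv.Perm.exists_with_cycleType_iff (Fin n) (m := m)).mpr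
    ⟨by simpa using hsum, h2⟩
  refine ⟨σ, ?_, ?_⟩
  · rw [Equiv.Perm.mem_alternatingGroup, Equiv.Perm.sign_of_cycleType, hσ, hsc]
    exact Even.neg_one_pow ⟨l + 1, by ring⟩
  · rintro ⟨c, hci, hprod⟩
    have h0 := hci 0
    have h1 := hci 1
    have hσeq : σ = c 0 * c 1 := by
      rw [hprod]
      have : List.ofFn c = [c 0, c 1] := by
        simp [List.ofFn_succ]
      rw [this]
      simp
    rcases neg_core l (c 0) (c 1) h0.1 h1.1 h0.2 h1.2 with h | h
    · rw [← hσeq, hσ] at h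
      rw [h] at hm2
      have : (2 : ℕ) = l ∨ (2:ℕ) ∈ ({l} : Multiset ℕ) := by
        simpa using hm2
      rcases this with h' | h'
      · omega
      · simp at h'; omega
    · rw [← hσeq, hσ, hsc] at h
      omega

theorem negative_final (l : ℕ) (hl : 2 < l) (n : ℕ) (hn : 4 * l / 3 + 1 < n) :
    ∃ σ ∈ alternatingGroup (Fin n), ¬ IsProdOfCycles n 2 l σ := by
  by_cases hl3 : l = 3
  · subst hl3
    refine negative_main n 3 (by omega) {2, 4} (by simp; omega) ?_ (by simp) (by simp)
    intro x hx
    rcases Multiset.mem_cons.mp hx with h | h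
    · omega
    · simp at h; omega
  · -- l ≥ 4 : use a transpositions and b three-cycles
    have h3 : l % 3 = 0 ∨ l % 3 = 1 ∨ l % 3 = 2 := by omega
    obtain ⟨a, b, hab, hab2, ha1⟩ : ∃ a b : ℕ, 2 * a + 3 * b ≤ n ∧
        3 * a + 4 * b = 2 * l + 2 ∧ 1 ≤ a := by
      rcases h3 with h | h | h
      · exact ⟨2 * (l / 3) - 2, 2, by omega, by omega, by omega⟩
      · exact ⟨(2 * l - 2) / 3, 1, by omega, by omega, by omega⟩
      · exact ⟨(2 * l + 2) / 3, 0, by omega, by omega, by omega⟩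
    refine negative_main n l hl
      (Multiset.replicate a 2 + Multiset.replicate b 3) ?_ ?_ ?_ ?_
    · rw [Multiset.sum_add, Multiset.sum_replicate, Multiset.sum_replicate,
        smul_eq_mul, smul_eq_mul]
      omega
    · intro x hx
      rcases Multiset.mem_add.mp hx with h | h
      · rw [Multiset.eq_of_mem_replicate h]
      · rw [Multiset.eq_of_mem_replicate h]; omega
    · rw [Multiset.sum_add, Multiset.sum_replicate, Multiset.sum_replicate,
        Multiset.card_add, Multiset.card_replicate, Multiset.card_replicate,
        smul_eq_mul, smul_eq_mul]
      omega
    · exact Multiset.mem_add.mpr (Or.inl (Multiset.mem_replicate.mpr ⟨by omega, rfl⟩))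

end PAux

theorem n_2_l_eq_floor (l : ℕ) (hl : 2 < l) :
    (∀ σ ∈ alternatingGroup (Fin (4 * l / 3 + 1)),
      IsProdOfCycles (4 * l / 3 + 1) 2 l σ) ∧
    (∀ n : ℕ, 4 * l / 3 + 1 < n →
      ∃ σ ∈ alternatingGroup (Fin n), ¬ IsProdOfCycles n 2 l σ) :=
  ⟨fun σ hσ => PAux.positive_final l hl σ hσ, fun n hn => PAux.negative_final l hl n hn⟩
end

section
/- Let k, l be natural numbers with k ≥ 2 and l > 2, and suppose that l is odd or k is even. Set n₁ = ⌊2kl/3⌋. Then: (1) if n₁ ≡ 3 (mod 4), then n(k,l) ≤ n₁; (2) if n₁ ≡ 1 (mod 4), then n(k,l) ≤ n₁ + 1; (3) if n₁ ≡ 2 (mod 4), then n(k,l) ≤ n₁ + 1, and if moreover l > 3 and 2kl ≢ 2 (mod 3), then n(k,l) ≤ n₁; (4) if n₁ ≡ 0 (mod 4), then n(k,l) ≤ n₁ + 1. Here n(k,l) ≤ N means that for every n > N there exists an element of A_n that cannot be written as a product of k many l-cycles of S_n. -/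
open Equiv

/-- `n(k,l) ≤ N`: for every `n > N` some element of `A_n` is not a product of
`k` many `l`-cycles. -/
def NklLe (k l N : ℕ) : Prop :=
  ∀ n : ℕ, N < n → ∃ σ ∈ alternatingGroup (Fin n), ¬ IsProdOfCycles n k l σ

section NklAuxSection

open Equiv Equiv.Perm Finset
open scoped Classical

namespace NklAux


variable {α : Type*} [DecidableEq α] [Fintype α]

/-- The setoid of being in the same cycle. -/
def scS (π : Perm α) : Setoid α :=
  ⟨π.SameCycle, ⟨SameCycle.refl π, SameCycle.symm, SameCycle.trans⟩⟩

/-- number of cycles of `π`, counting fixed points as cycles -/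
noncomputable def cnt (π : Perm α) : ℕ := Nat.card (Quotient (scS π))

lemma cnt_one : cnt (1 : Perm α) = Fintype.card α := by
  rw [cnt, ← Nat.card_eq_fintype_card]
  refine (Nat.card_eq_of_bijective (Quotient.mk'' : α → Quotient (scS (1:Perm α))) ?_).symm
  constructor
  · intro x y h
    have := Quotient.exact' h
    exact Perm.sameCycle_one.mp this
  · intro q; exact Quotient.exists_rep q

lemma card_quot_le_of_imp {r s : Setoid α} (h : ∀ x y, r.r x y → s.r x y) :
    Nat.card (Quotient s) ≤ Nat.card (Quotient r) := by
  refine Nat.card_le_card_of_surjective (Quotient.map' id h) ?_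
  intro q
  obtain ⟨x, rfl⟩ := Quotient.exists_rep q
  exact ⟨Quotient.mk'' x, rfl⟩

/-- the join of `SameCycle π` with identifying `a`'s and `b`'s classes -/
def Rrel (π : Perm α) (a b : α) (x y : α) : Prop :=
  π.SameCycle x y ∨ ((π.SameCycle x a ∨ π.SameCycle x b) ∧ (π.SameCycle y a ∨ π.SameCycle y b))

lemma Rrel.symm' {π : Perm α} {a b x y : α} (h : Rrel π a b x y) : Rrel π a b y x := by
  rcases h with h | ⟨hx, hy⟩
  · exact Or.inl h.symm
  · exact Or.inr ⟨hy, hx⟩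

lemma Rrel.trans' {π : Perm α} {a b x y z : α} (h1 : Rrel π a b x y) (h2 : Rrel π a b y z) :
    Rrel π a b x z := by
  rcases h1 with hxy | ⟨hx, hy⟩ <;> rcases h2 with hyz | ⟨hy', hz⟩
  · exact Or.inl (hxy.trans hyz)
  · exact Or.inr ⟨hy'.imp hxy.trans hxy.trans, hz⟩
  · exact Or.inr ⟨hx, hy.imp hyz.symm.trans hyz.symm.trans⟩
  · exact Or.inr ⟨hx, hz⟩

def RS (π : Perm α) (a b : α) : Setoid α :=
  ⟨Rrel π a b, ⟨fun x => Or.inl (SameCycle.refl π x), Rrel.symm', Rrel.trans'⟩⟩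

def toR (π : Perm α) (a b : α) : Quotient (scS π) → Quotient (RS π a b) :=
  Quotient.map' id (fun x y h => show Rrel π a b x y from Or.inl h)

lemma toR_surjective (π : Perm α) (a b : α) : Function.Surjective (toR π a b) := by
  intro q
  obtain ⟨x, rfl⟩ := Quotient.exists_rep q
  exact ⟨Quotient.mk'' x, rfl⟩

/-- C1 : orbit containment for `swap a b * π`. -/
lemma sameCycle_swap_mul {π : Perm α} {a b x y : α}
    (h : (swap a b * π).SameCycle x y) : Rrel π a b x y := by
  obtain ⟨i, hp1, hp2, hi⟩ := Equiv.Perm.SameCycle.exists_pow_eq _ h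
  subst hi
  clear h hp1 hp2
  induction i with
  | zero => exact Or.inl (SameCycle.refl π x)
  | succ i ih =>
    set τ := swap a b * π with hτ
    set z := (τ ^ i) x with hz
    have hstep : (τ ^ (i+1)) x = swap a b (π z) := by
      rw [pow_succ']
      simp [hτ, Perm.mul_apply, hz]
    have hzπ : π.SameCycle z (π z) := ⟨1, by simp⟩
    rcases ih with hsc | ⟨hx, hy⟩
    · rcases eq_or_ne (π z) a with ha | ha
      · rw [hstep, ha, swap_apply_left]
        exact Or.inr ⟨Or.inl (hsc.trans (hzπ.trans (ha ▸ SameCycle.refl π a))),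
          Or.inr (SameCycle.refl π b)⟩
      rcases eq_or_ne (π z) b with hb | hb
      · rw [hstep, hb, swap_apply_right]
        exact Or.inr ⟨Or.inr (hsc.trans (hzπ.trans (hb ▸ SameCycle.refl π b))),
          Or.inl (SameCycle.refl π a)⟩
      · rw [hstep, swap_apply_of_ne_of_ne ha hb]
        exact Or.inl (hsc.trans hzπ)
    · rcases eq_or_ne (π z) a with ha | ha
      · rw [hstep, ha, swap_apply_left]
        exact Or.inr ⟨hx, Or.inr (SameCycle.refl π b)⟩
      rcases eq_or_ne (π z) b with hb | hb
      · rw [hstep, hb, swap_apply_right]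
        exact Or.inr ⟨hx, Or.inl (SameCycle.refl π a)⟩
      · rw [hstep, swap_apply_of_ne_of_ne ha hb]
        exact Or.inr ⟨hx, hy.imp (fun h' => (hzπ.symm.trans h')) fun h' => (hzπ.symm.trans h')⟩

/-- C2 : if `a,b` lie in different cycles of `π` then `swap a b * π` connects them. -/
lemma swap_mul_sameCycle_ab {π : Perm α} {a b : α} (h : ¬ π.SameCycle a b) :
    (swap a b * π).SameCycle b a := by
  set τ := swap a b * π with hτ
  set q := Function.minimalPeriod (⇑π) b with hq
  have hbper : b ∈ Function.periodicPts (⇑π) := by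
    refine ⟨orderOf π, orderOf_pos π, ?_⟩
    show (⇑π)^[orderOf π] b = b
    rw [Equiv.Perm.iterate_eq_pow, pow_orderOf_eq_one]; rfl
  have hqpos : 0 < q := Function.minimalPeriod_pos_of_mem_periodicPts hbper
  have hπq : (π ^ q) b = b := by
    have := Function.iterate_minimalPeriod (f := ⇑π) (x := b)
    rwa [Equiv.Perm.iterate_eq_pow] at this
  have hmin : ∀ j, 0 < j → j < q → (π ^ j) b ≠ b := by
    intro j hj hjq hcon
    have : Function.IsPeriodicPt (⇑π) j b := by
      show (⇑π)^[j] b = b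
      rw [Equiv.Perm.iterate_eq_pow]; exact hcon
    exact absurd (Function.IsPeriodicPt.minimalPeriod_le hj this) (by omega)
  clear_value q
  clear hq hbper
  have key : ∀ i, i < q → (τ ^ i) b = (π ^ i) b := by
    intro i hi
    induction i with
    | zero => simp
    | succ i ih =>
      have hi' : i < q := Nat.lt_of_succ_lt hi
      have hππ : (π ^ (i+1)) b = π ((π ^ i) b) := by
        rw [pow_succ', Perm.mul_apply]
      have h1 : (τ ^ (i+1)) b = swap a b ((π ^ (i+1)) b) := by
        rw [pow_succ', Perm.mul_apply, ih hi', hτ, Perm.mul_apply, hππ]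
      have hne_a : (π ^ (i+1)) b ≠ a := by
        intro hcon
        exact h (SameCycle.symm ⟨((i:ℤ)+1), by rw [show ((i:ℤ)+1) = ((i+1 : ℕ) : ℤ) by push_cast; ring, zpow_natCast]; exact hcon⟩)
      have hne_b : (π ^ (i+1)) b ≠ b := hmin (i+1) (Nat.succ_pos i) hi
      rw [h1, swap_apply_of_ne_of_ne hne_a hne_b]
  have hfin : (τ ^ q) b = a := by
    obtain ⟨q', hq'⟩ : ∃ q', q = q' + 1 := ⟨q - 1, by omega⟩
    have hππ : (π ^ (q'+1)) b = π ((π ^ q') b) := by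
      rw [pow_succ', Perm.mul_apply]
    have h1 : (τ ^ (q'+1)) b = swap a b ((π ^ (q'+1)) b) := by
      rw [pow_succ', Perm.mul_apply, key q' (by omega), hτ, Perm.mul_apply, hππ]
    rw [hq', h1, ← hq', hπq, swap_apply_right]
  exact ⟨(q : ℤ), by rw [zpow_natCast]; exact hfin⟩

lemma cnt_le_R (π : Perm α) (a b : α) :
    cnt π ≤ Nat.card (Quotient (RS π a b)) + 1 := by
  set cb : Quotient (scS π) := Quotient.mk'' b with hcb
  have hΦkey : ∀ c₁ c₂ : Quotient (scS π), c₁ ≠ cb → c₂ ≠ cb →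
      toR π a b c₁ = toR π a b c₂ → c₁ = c₂ := by
    intro c₁ c₂ h₁ h₂ heq
    induction c₁ using Quotient.inductionOn' with | h x =>
    induction c₂ using Quotient.inductionOn' with | h y =>
    have hr : Rrel π a b x y := Quotient.exact' heq
    rcases hr with hsc | ⟨hx, hy⟩
    · exact Quotient.sound' hsc
    · have hx' : π.SameCycle x a := by
        rcases hx with h' | h'
        · exact h'
        · exact absurd (Quotient.sound' h' : _ = cb) h₁
      have hy' : π.SameCycle y a := by
        rcases hy with h' | h'
        · exact h'
        · exact absurd (Quotient.sound' h' : _ = cb) h₂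
      exact Quotient.sound' (hx'.trans hy'.symm)
  have hinj : Function.Injective
      (fun c : {c : Quotient (scS π) // c ≠ cb} => toR π a b c.1) := by
    rintro ⟨c₁, h₁⟩ ⟨c₂, h₂⟩ h
    exact Subtype.ext (hΦkey c₁ c₂ h₁ h₂ h)
  have hle : Nat.card {c : Quotient (scS π) // c ≠ cb} ≤ Nat.card (Quotient (RS π a b)) :=
    Nat.card_le_card_of_injective _ hinj
  have hcard : Nat.card {c : Quotient (scS π) // c ≠ cb} + 1 = cnt π := by
    rw [cnt, Nat.card_eq_fintype_card, Nat.card_eq_fintype_card,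
      Fintype.card_subtype_compl (p := fun c => c = cb), Fintype.card_subtype_eq]
    have : 0 < Fintype.card (Quotient (scS π)) := Fintype.card_pos_iff.mpr ⟨cb⟩
    omega
  omega

lemma cnt_R_lt (π : Perm α) (a b : α) (hab : ¬ π.SameCycle a b) :
    Nat.card (Quotient (RS π a b)) < cnt π := by
  rw [cnt, Nat.card_eq_fintype_card, Nat.card_eq_fintype_card]
  refine Fintype.card_lt_of_surjective_not_injective
    (toR π a b) (toR_surjective π a b) ?_
  intro hinjf
  have h1 : (Quotient.mk'' a : Quotient (scS π)) = Quotient.mk'' b := by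
    apply hinjf
    exact Quotient.sound' (Or.inr ⟨Or.inl (SameCycle.refl π a), Or.inr (SameCycle.refl π b)⟩)
  exact hab (Quotient.exact' h1)

/-- P1 -/
lemma cnt_swap_mul_le (π : Perm α) (a b : α) :
    cnt (swap a b * π) ≤ cnt π + 1 := by
  set τ := swap a b * π with hτ
  have hπ : π = swap a b * τ := by
    rw [hτ, ← mul_assoc, swap_mul_self, one_mul]
  have h1 : cnt τ ≤ Nat.card (Quotient (RS τ a b)) + 1 := cnt_le_R τ a b
  have h2 : Nat.card (Quotient (RS τ a b)) ≤ cnt π := by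
    rw [cnt]
    refine card_quot_le_of_imp ?_
    intro x y h
    exact sameCycle_swap_mul (hπ ▸ h)
  omega

/-- P2 -/
lemma cnt_swap_mul_lt {π : Perm α} {a b : α} (hab : ¬ π.SameCycle a b) :
    cnt (swap a b * π) < cnt π := by
  set τ := swap a b * π with hτ
  have hπ : π = swap a b * τ := by
    rw [hτ, ← mul_assoc, swap_mul_self, one_mul]
  have hba : τ.SameCycle b a := swap_mul_sameCycle_ab hab
  have hsc : ∀ x y, π.SameCycle x y → τ.SameCycle x y := by
    intro x y h
    have h' : Rrel τ a b x y := sameCycle_swap_mul (hπ ▸ h)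
    rcases h' with h' | ⟨hx, hy⟩
    · exact h'
    · have hx' : τ.SameCycle x a := by
        rcases hx with h' | h'
        · exact h'
        · exact h'.trans hba
      have hy' : τ.SameCycle y a := by
        rcases hy with h' | h'
        · exact h'
        · exact h'.trans hba
      exact hx'.trans hy'.symm
  have h2 : cnt τ ≤ Nat.card (Quotient (RS π a b)) := by
    rw [cnt]
    refine card_quot_le_of_imp ?_
    rintro x y (h | ⟨hx, hy⟩)
    · exact hsc _ _ h
    · have hx' : τ.SameCycle x a := by
        rcases hx with h' | h'
        · exact hsc _ _ h'
        · exact (hsc _ _ h').trans hba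
      have hy' : τ.SameCycle y a := by
        rcases hy with h' | h'
        · exact hsc _ _ h'
        · exact (hsc _ _ h').trans hba
      exact hx'.trans hy'.symm
  exact lt_of_le_of_lt h2 (cnt_R_lt π a b hab)

section Walk

/-- one union-find merge step -/
def step (p : α × α) (r : α → α) : α → α := fun x => if r x = r p.1 then r p.2 else r x

def crd (r : α → α) : ℕ := (Finset.univ.image r).card

theorem walk (E : Finset α) (L : List (α × α))
    (hL : ∀ p ∈ L, p.1 ≠ p.2 ∧ p.1 ∈ E ∧ p.2 ∈ E) :
    ∀ᵉ (π : Perm α) (r : α → α), π = (L.map fun p => swap p.1 p.2).prod →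
      r = L.foldr step id →
    (∀ x, r (r x) = r x) ∧
    (∀ x y, π.SameCycle x y → r x = r y) ∧
    (∀ x y, x ≠ y → r x = r y → x ∈ E ∧ y ∈ E) ∧
    (∀ x, x ∉ E → r x = x) ∧
    (∀ p ∈ L, r p.1 = r p.2) ∧
    (cnt π + Fintype.card α ≤ 2 * crd r + L.length) := by
  induction L with
  | nil =>
    intro π r hπ hr
    simp only [List.map_nil, List.prod_nil] at hπ
    simp only [List.foldr_nil] at hr
    subst hπ; subst hr
    refine ⟨fun x => rfl, ?_, ?_, fun x _ => rfl, by simp, ?_⟩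
    · intro x y h
      rwa [Perm.sameCycle_one] at h
    · intro x y hxy h
      exact absurd h hxy
    · have : crd (id : α → α) = Fintype.card α := by
        rw [crd, Finset.image_id, Finset.card_univ]
      rw [cnt_one, this]
      omega
  | cons p L ih =>
    intro π' r' hπ' hr'
    obtain ⟨hpne, hp1E, hp2E⟩ := hL p (List.mem_cons_self (a := p) (l := L))
    have hLtail : ∀ q ∈ L, q.1 ≠ q.2 ∧ q.1 ∈ E ∧ q.2 ∈ E := fun q hq => hL q (List.mem_cons_of_mem p hq)
    obtain ⟨hidem, href, hE3, hE4, hconn, hineq⟩ :=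
      ih hLtail ((L.map fun p => swap p.1 p.2).prod) (L.foldr step id) rfl rfl
    set π := (L.map fun p => swap p.1 p.2).prod with hπ
    set r := L.foldr step id with hr
    have hπ'' : π' = swap p.1 p.2 * π := by rw [hπ']; simp; rfl
    have hr'' : r' = step p r := by rw [hr']; simp [hr]
    by_cases hcase : r p.1 = r p.2
    · -- no merge
      have hrr : r' = r := by
        funext x
        rw [hr'', step]
        split
        · rename_i hx
          rw [← hcase, ← hx]
        · rfl
      have hcnt : cnt π' ≤ cnt π + 1 := by rw [hπ'']; exact cnt_swap_mul_le π p.1 p.2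
      refine ⟨by rw [hrr]; exact hidem, ?_, by rw [hrr]; exact hE3, by rw [hrr]; exact hE4, ?_, ?_⟩
      · intro x y h
        rw [hπ''] at h
        rcases sameCycle_swap_mul h with hsc | ⟨hx, hy⟩
        · rw [hrr]; exact href _ _ hsc
        · have hxv : r x = r p.1 := by
            rcases hx with h' | h'
            · exact href _ _ h'
            · rw [href _ _ h', hcase]
          have hyv : r y = r p.1 := by
            rcases hy with h' | h'
            · exact href _ _ h'
            · rw [href _ _ h', hcase]
          rw [hrr, hxv, hyv]
      · intro q hq
        rcases List.mem_cons.mp hq with rfl | hq'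
        · rw [hrr]; exact hcase
        · rw [hrr]; exact hconn q hq'
      · rw [hrr]
        simp only [List.length_cons]
        omega
    · -- merge
      have hnsc : ¬ π.SameCycle p.1 p.2 := fun h => hcase (href _ _ h)
      have hcnt : cnt π' < cnt π := by rw [hπ'']; exact cnt_swap_mul_lt hnsc
      have himg : Finset.univ.image r' = (Finset.univ.image r).erase (r p.1) := by
        ext v
        simp only [Finset.mem_image, Finset.mem_erase, Finset.mem_univ, true_and]
        constructor
        · rintro ⟨x, hx⟩
          rw [hr'', step] at hx
          by_cases hxa : r x = r p.1
          · rw [if_pos hxa] at hx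
            refine ⟨fun hv => hcase ?_, ⟨p.2, hx⟩⟩
            rw [← hv, hx]
          · rw [if_neg hxa] at hx
            exact ⟨fun hv => hxa (hv ▸ hx), ⟨x, hx⟩⟩
        · rintro ⟨hv, x, hx⟩
          refine ⟨x, ?_⟩
          have hxa : r x ≠ r p.1 := fun h => hv (by rw [← hx, h])
          rw [hr'', step, if_neg hxa, hx]
      have hmem : r p.1 ∈ Finset.univ.image r := Finset.mem_image_of_mem r (Finset.mem_univ p.1)
      have hcrd : crd r' = crd r - 1 := by rw [crd, crd, himg, Finset.card_erase_of_mem hmem]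
      have hcrdpos : 1 ≤ crd r := Finset.card_pos.mpr ⟨r p.1, hmem⟩
      have hstepval : ∀ x, (r x = r p.1 → r' x = r p.2) ∧ (r x ≠ r p.1 → r' x = r x) := by
        intro x
        constructor
        · intro h; rw [hr'', step, if_pos h]
        · intro h; rw [hr'', step, if_neg h]
      refine ⟨?_, ?_, ?_, ?_, ?_, ?_⟩
      · -- idempotent
        intro x
        by_cases hxa : r x = r p.1
        · rw [(hstepval x).1 hxa, (hstepval (r p.2)).2 (by rw [hidem]; exact fun h => hcase h.symm)]
          exact hidem p.2
        · rw [(hstepval x).2 hxa, (hstepval (r x)).2 (by rw [hidem]; exact hxa)]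
          exact hidem x
      · -- refinement
        intro x y h
        rw [hπ''] at h
        have collapse : ∀ z, (π.SameCycle z p.1 ∨ π.SameCycle z p.2) → r' z = r p.2 := by
          rintro z (h' | h')
          · exact (hstepval z).1 (href _ _ h')
          · have : r z = r p.2 := href _ _ h'
            by_cases hza : r z = r p.1
            · exact (hstepval z).1 hza
            · rw [(hstepval z).2 hza, this]
        rcases sameCycle_swap_mul h with hsc | ⟨hx, hy⟩
        · have := href _ _ hsc
          by_cases hxa : r x = r p.1
          · rw [(hstepval x).1 hxa, (hstepval y).1 (by rw [← this]; exact hxa)]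
          · rw [(hstepval x).2 hxa, (hstepval y).2 (by rw [← this]; exact hxa), this]
        · rw [collapse x hx, collapse y hy]
      · -- E-invariant (iii)
        intro x y hxy h
        have hback : ∀ z, r' z = r z ∨ (r z = r p.1 ∧ r' z = r p.2) := by
          intro z
          by_cases hza : r z = r p.1
          · exact Or.inr ⟨hza, (hstepval z).1 hza⟩
          · exact Or.inl ((hstepval z).2 hza)
        have hEz : ∀ z w, r z = r w → z ≠ w → z ∈ E := by
          intro z w hzw hne
          exact (hE3 z w hne hzw).1
        have hxE : ∀ z, r z = r p.1 → z ∈ E := by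
          intro z hz
          by_cases hzp : z = p.1
          · rw [hzp]; exact hp1E
          · exact hEz z p.1 hz hzp
        have hyE : ∀ z, r z = r p.2 → z ∈ E := by
          intro z hz
          by_cases hzp : z = p.2
          · rw [hzp]; exact hp2E
          · exact hEz z p.2 hz hzp
        rcases hback x with hx | ⟨hx1, hx2⟩ <;> rcases hback y with hy | ⟨hy1, hy2⟩
        · rw [hx, hy] at h
          exact hE3 x y hxy h
        · rw [hx, hy2] at h
          exact ⟨hyE x h, hxE y hy1⟩
        · rw [hx2, hy] at h
          exact ⟨hxE x hx1, hyE y h.symm⟩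
        · exact ⟨hxE x hx1, hxE y hy1⟩
      · -- E-invariant (iv)
        intro x hx
        have hrx : r x = x := hE4 x hx
        have hxa : r x ≠ r p.1 := by
          intro h
          by_cases hxp : x = p.1
          · exact hx (hxp ▸ hp1E)
          · exact hx (hE3 x p.1 hxp h).1
        rw [(hstepval x).2 hxa, hrx]
      · -- connections
        intro q hq
        rcases List.mem_cons.mp hq with rfl | hq'
        · rw [(hstepval q.1).1 rfl]
          by_cases hza : r q.2 = r q.1
          · rw [(hstepval q.2).1 hza]
          · rw [(hstepval q.2).2 hza]
        · have := hconn q hq'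
          by_cases hza : r q.1 = r p.1
          · rw [(hstepval q.1).1 hza, (hstepval q.2).1 (by rw [← this]; exact hza)]
          · rw [(hstepval q.1).2 hza, (hstepval q.2).2 (by rw [← this]; exact hza), this]
      · simp only [List.length_cons]
        omega

end Walk

section Decomp

lemma map_swap_zip (l l' : List α) :
    ((l.zip l').map fun p => swap p.1 p.2) = List.zipWith swap l l' := by
  induction l generalizing l' with
  | nil => simp
  | cons x t ih =>
    cases l' with
    | nil => simp
    | cons y t' => simp [ih]

lemma zip_tail_ne {xs : List α} (h : xs.Nodup) : ∀ p ∈ xs.zip xs.tail, p.1 ≠ p.2 := by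
  induction xs with
  | nil => simp
  | cons x t ih =>
    cases t with
    | nil => simp
    | cons y t' =>
      intro p hp
      rcases List.mem_cons.mp hp with rfl | hp'
      · intro hcon
        simp only [List.nodup_cons, List.mem_cons] at h
        exact h.1 (Or.inl hcon)
      · exact ih (List.nodup_cons.mp h).2 p hp'

lemma rep_const_aux (r : α → α) :
    ∀ (t : List α) (a : α), (∀ p ∈ (a :: t).zip t, r p.1 = r p.2) →
      ∀ x ∈ a :: t, r x = r a := by
  intro t
  induction t with
  | nil =>
    intro a _ x hx
    rcases List.mem_cons.mp hx with rfl | h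
    · rfl
    · exact absurd h List.not_mem_nil
  | cons b t' ih =>
    intro a h x hx
    have hab : r a = r b := h (a, b) (by simp [List.zip])
    have htail : ∀ p ∈ (b :: t').zip t', r p.1 = r p.2 := by
      intro p hp
      exact h p (by simp [List.zip]; right; exact (by simpa [List.zip] using hp))
    rcases List.mem_cons.mp hx with rfl | hx'
    · rfl
    · rw [ih b htail x hx', hab]

lemma rep_const {r : α → α} {xs : List α} (h : ∀ p ∈ xs.zip xs.tail, r p.1 = r p.2) :
    ∀ x ∈ xs, ∀ y ∈ xs, r x = r y := by
  cases xs with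
  | nil => simp
  | cons a t =>
    intro x hx y hy
    rw [rep_const_aux r t a h x hx, rep_const_aux r t a h y hy]

lemma cycle_decomp (c : Perm α) (hc : c.IsCycle) :
    ∃ xs : List α, xs.Nodup ∧ xs.length = c.support.card ∧
      (∀ x, x ∈ xs ↔ x ∈ c.support) ∧
      ((xs.zip xs.tail).map fun p => swap p.1 p.2).prod = c := by
  obtain ⟨x₀, hx₀, -⟩ := id hc
  have hx₀' : x₀ ∈ c.support := mem_support.mpr hx₀
  have hcyc : c.cycleOf x₀ = c := hc.cycleOf_eq hx₀
  refine ⟨c.toList x₀, nodup_toList c x₀, ?_, ?_, ?_⟩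
  · exact (length_toList c x₀).trans (by rw [hcyc])
  · intro y
    rw [mem_toList_iff]
    constructor
    · rintro ⟨hsc, -⟩
      rw [mem_support]
      intro hcon
      exact hx₀ (hsc.apply_eq_self_iff.mpr hcon)
    · intro hy
      exact ⟨hc.sameCycle hx₀ (mem_support.mp hy), hx₀'⟩
  · rw [map_swap_zip]
    show (c.toList x₀).formPerm = c
    rw [formPerm_toList, hcyc]

lemma support_list_prod_le (L : List (Perm α)) (E : Finset α) (h : ∀ g ∈ L, g.support ⊆ E) :
    L.prod.support ⊆ E := by
  induction L with
  | nil =>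
    intro x hx
    simp at hx
  | cons a t ih =>
    rw [List.prod_cons]
    intro x hx
    have := support_mul_le a t.prod hx
    rcases Finset.mem_union.mp this with h' | h'
    · exact h a (List.mem_cons_self (a := a) (l := t)) h'
    · exact ih (fun g hg => h g (List.mem_cons_of_mem a hg)) h'

lemma cnt_ge (σ : Perm α) :
    Fintype.card α - σ.support.card + σ.cycleFactorsFinset.card ≤ cnt σ := by
  have hpt : ∀ d : σ.cycleFactorsFinset, ∃ x, x ∈ (d : Perm α).support := by
    intro d
    obtain ⟨x, hx, -⟩ := (mem_cycleFactorsFinset_iff.mp d.2).1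
    exact ⟨x, mem_support.mpr hx⟩
  choose pt hpt' using hpt
  have hptS : ∀ d : σ.cycleFactorsFinset, pt d ∈ σ.support := by
    intro d
    obtain ⟨hcyc, hagree⟩ := mem_cycleFactorsFinset_iff.mp d.2
    rw [mem_support, ← hagree (pt d) (hpt' d)]
    exact mem_support.mp (hpt' d)
  have hfix : ∀ x : α, x ∉ σ.support → ∀ y, σ.SameCycle x y → x = y := by
    rintro x hx y ⟨i, hi⟩
    rw [← hi, zpow_apply_eq_self_of_apply_eq_self (notMem_support.mp hx)]
  have hinj : Function.Injective (fun z : (↥(Finset.univ \ σ.support) ⊕ ↥σ.cycleFactorsFinset) =>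
      (Sum.elim (fun x : ↥(Finset.univ \ σ.support) => (Quotient.mk'' x.1 : Quotient (scS σ)))
        (fun d : ↥σ.cycleFactorsFinset => Quotient.mk'' (pt d)) z)) := by
    rintro (x | d) (y | e) heq <;> simp only [Sum.elim_inl, Sum.elim_inr] at heq
    · have hsc : σ.SameCycle x.1 y.1 := Quotient.exact' heq
      have hx : x.1 ∉ σ.support := (Finset.mem_sdiff.mp x.2).2
      exact congrArg Sum.inl (Subtype.ext (hfix x.1 hx y.1 hsc))
    · have hsc : σ.SameCycle x.1 (pt e) := Quotient.exact' heq
      have hx : x.1 ∉ σ.support := (Finset.mem_sdiff.mp x.2).2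
      exact absurd ((hfix x.1 hx (pt e) hsc) ▸ hptS e) hx
    · have hsc : σ.SameCycle y.1 (pt d) := (Quotient.exact' heq : σ.SameCycle (pt d) y.1).symm
      have hy : y.1 ∉ σ.support := (Finset.mem_sdiff.mp y.2).2
      exact absurd ((hfix y.1 hy (pt d) hsc) ▸ hptS d) hy
    · have hsc : σ.SameCycle (pt d) (pt e) := Quotient.exact' heq
      have h1 : (d : Perm α) = σ.cycleOf (pt d) := cycle_is_cycleOf (hpt' d) d.2
      have h2 : (e : Perm α) = σ.cycleOf (pt e) := cycle_is_cycleOf (hpt' e) e.2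
      have : (d : Perm α) = (e : Perm α) := by rw [h1, h2, hsc.cycleOf_eq]
      exact congrArg Sum.inr (Subtype.ext this)
  have hle := Nat.card_le_card_of_injective _ hinj
  rw [Nat.card_sum] at hle
  have e1 : Nat.card ↥(Finset.univ \ σ.support) = Fintype.card α - σ.support.card := by
    rw [Nat.card_eq_fintype_card, Fintype.card_coe, Finset.card_sdiff_of_subset (Finset.subset_univ _),
      Finset.card_univ]
  have e2 : Nat.card ↥σ.cycleFactorsFinset = σ.cycleFactorsFinset.card := by
    rw [Nat.card_eq_fintype_card, Fintype.card_coe]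
  rw [e1, e2] at hle
  exact hle

lemma map_prod_apply {k : ℕ} (f : Fin k → Perm α) (i : Fin k) (x : α)
    (hx : x ∈ (f i).support) (hdisj : ∀ j, j ≠ i → (f j).Disjoint (f i)) :
    ∀ (js : List (Fin k)), js.Nodup →
      (js.map f).prod x = if i ∈ js then f i x else x := by
  intro js
  induction js with
  | nil => simp
  | cons j t ih =>
    intro hnd
    rw [List.map_cons, List.prod_cons, Perm.mul_apply, ih (List.nodup_cons.mp hnd).2]
    by_cases hit : i ∈ t
    · rw [if_pos hit, if_pos (List.mem_cons_of_mem j hit)]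
      have hji : j ≠ i := fun h => (List.nodup_cons.mp hnd).1 (h ▸ hit)
      have hmem : f i x ∈ (f i).support := apply_mem_support.mpr hx
      have : f i x ∉ (f j).support := by
        have hd := (hdisj j hji).disjoint_support
        exact Finset.disjoint_right.mp hd hmem
      exact notMem_support.mp this
    · rw [if_neg hit]
      by_cases hji : j = i
      · subst hji
        rw [if_pos (List.mem_cons_self (a := j) (l := t))]
      · rw [if_neg (fun h => (List.mem_cons.mp h).elim (fun h' => hji h'.symm) hit)]
        have : x ∉ (f j).support := by
          have hd := (hdisj j hji).disjoint_support
          exact Finset.disjoint_right.mp hd hx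
        exact notMem_support.mp this

/-- The main combinatorial bound: if `σ` is a product of `k` cycles of support size `l`,
then either `σ` has an `l`-cycle among its cycle factors, or
`|supp σ| + #cycles(σ) ≤ k l`. -/
theorem main_bound {n k l : ℕ} (hl2 : 2 ≤ l) (c : Fin k → Perm (Fin n))
    (hc : ∀ i, (c i).IsCycle ∧ (c i).support.card = l) :
    l ∈ ((List.ofFn c).prod).cycleType ∨
      ((List.ofFn c).prod).support.card + ((List.ofFn c).prod).cycleFactorsFinset.card ≤ k * l := by
  classical
  set σ := (List.ofFn c).prod with hσ
  by_cases hiso : ∃ i, ∀ j, j ≠ i → (c j).Disjoint (c i)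
  · -- isolated cycle: c i is a cycle factor of σ
    left
    obtain ⟨i, hdisj⟩ := hiso
    have hfac : c i ∈ σ.cycleFactorsFinset := by
      rw [mem_cycleFactorsFinset_iff]
      refine ⟨(hc i).1, ?_⟩
      intro a ha
      have := map_prod_apply c i a ha hdisj (List.finRange k) (List.nodup_finRange k)
      rw [if_pos (List.mem_finRange i)] at this
      rw [hσ, List.ofFn_eq_map, this]
    rw [cycleType_def]
    have : (c i).support.card ∈ Multiset.map (Finset.card ∘ support) σ.cycleFactorsFinset.val :=
      Multiset.mem_map_of_mem _ hfac
    rwa [(hc i).2] at this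
  · right
    push_neg at hiso
    -- decompose each cycle
    have hdec := fun i => cycle_decomp (c i) (hc i).1
    choose xs hnd hlen hmemiff hprod using hdec
    set E : Finset (Fin n) := Finset.univ.biUnion (fun i => (c i).support) with hE
    set Ls : List (List (Fin n × Fin n)) := List.ofFn (fun i => (xs i).zip (xs i).tail) with hLs
    set L : List (Fin n × Fin n) := Ls.flatten with hL
    have hpairs : ∀ p ∈ L, ∃ i, p ∈ (xs i).zip (xs i).tail := by
      intro p hp
      rw [hL, List.mem_flatten] at hp
      obtain ⟨ls, hls, hpls⟩ := hp
      rw [hLs, List.mem_ofFn] at hls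
      obtain ⟨i, rfl⟩ := hls
      exact ⟨i, hpls⟩
    have hLgood : ∀ p ∈ L, p.1 ≠ p.2 ∧ p.1 ∈ E ∧ p.2 ∈ E := by
      intro p hp
      obtain ⟨i, hpi⟩ := hpairs p hp
      have h1 := zip_tail_ne (hnd i) p hpi
      obtain ⟨hm1, hm2⟩ := List.of_mem_zip hpi
      have hm2' : p.2 ∈ xs i := List.mem_of_mem_tail hm2
      refine ⟨h1, ?_, ?_⟩
      · exact Finset.mem_biUnion.mpr ⟨i, Finset.mem_univ i, (hmemiff i p.1).mp hm1⟩
      · exact Finset.mem_biUnion.mpr ⟨i, Finset.mem_univ i, (hmemiff i p.2).mp hm2'⟩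
    have hπ : σ = (L.map fun p => swap p.1 p.2).prod := by
      have h1 : (fun i => (List.map (fun p => swap p.1 p.2) ((xs i).zip (xs i).tail)).prod) = c :=
        funext fun i => hprod i
      rw [hL, List.map_flatten, List.prod_flatten, hLs, List.map_ofFn, List.map_ofFn, hσ]
      exact (congrArg (fun f : Fin k → Perm (Fin n) => (List.ofFn f).prod) h1).symm
    obtain ⟨hidem, href, hE3, hE4, hconn, hineq⟩ :=
      walk E L hLgood ((L.map fun p => swap p.1 p.2).prod) (L.foldr step id) rfl rfl
    rw [← hπ] at hineq
    set r : Fin n → Fin n := L.foldr step id with hr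
    have hLlen : L.length = k * (l - 1) := by
      rw [hL, List.length_flatten, hLs, List.map_ofFn, List.sum_ofFn]
      have heach : ∀ i : Fin k, (List.length ∘ fun i => (xs i).zip (xs i).tail) i = l - 1 := by
        intro i
        simp only [Function.comp_apply, List.length_zip, List.length_tail, hlen i, (hc i).2]
        omega
      rw [Finset.sum_congr rfl (fun i _ => heach i), Finset.sum_const, Finset.card_univ,
        Fintype.card_fin, smul_eq_mul]
    have hsuppE : σ.support ⊆ E := by
      rw [hπ]
      apply support_list_prod_le
      intro g hg
      rw [List.mem_map] at hg
      obtain ⟨p, hp, rfl⟩ := hg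
      obtain ⟨hne, h1, h2⟩ := hLgood p hp
      rw [support_swap hne]
      intro z hz
      rcases Finset.mem_insert.mp hz with rfl | hz'
      · exact h1
      · rw [Finset.mem_singleton.mp hz']; exact h2
    have hx0 : ∀ i, ∃ x, x ∈ (c i).support := by
      intro i
      obtain ⟨x, hx, -⟩ := (hc i).1
      exact ⟨x, mem_support.mpr hx⟩
    choose x0 hx0' using hx0
    have hrconst : ∀ i, ∀ x ∈ (c i).support, r x = r (x0 i) := by
      intro i x hx
      have hpairsL : ∀ p ∈ (xs i).zip (xs i).tail, r p.1 = r p.2 := by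
        intro p hp
        refine hconn p ?_
        rw [hL, List.mem_flatten]
        exact ⟨(xs i).zip (xs i).tail, by rw [hLs, List.mem_ofFn]; exact ⟨i, rfl⟩, hp⟩
      exact rep_const hpairsL x ((hmemiff i x).mpr hx) (x0 i) ((hmemiff i (x0 i)).mpr (hx0' i))
    set gfun : Fin k → Fin n := fun i => r (x0 i) with hgfun
    set T : Finset (Fin n) := Finset.univ.image gfun with hT
    have hfib : ∀ v ∈ T, 2 ≤ (Finset.univ.filter (fun i => gfun i = v)).card := by
      intro v hv
      rw [hT, Finset.mem_image] at hv
      obtain ⟨i, -, hi⟩ := hv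
      obtain ⟨j, hji, hjdis⟩ := hiso i
      rw [disjoint_iff_disjoint_support] at hjdis
      obtain ⟨w, hw1, hw2⟩ := Finset.not_disjoint_iff.mp hjdis
      have hgj : gfun j = v := by
        calc gfun j = r w := (hrconst j w hw1).symm
          _ = r (x0 i) := hrconst i w hw2
          _ = v := hi
      refine Finset.one_lt_card.mpr ⟨i, ?_, j, ?_, fun h => hji h.symm⟩
      · simp [hi]
      · simp [hgj]
    have h2T : 2 * T.card ≤ k := by
      have hcardsum : (Finset.univ : Finset (Fin k)).card
          = ∑ v ∈ T, (Finset.univ.filter (fun i => gfun i = v)).card :=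
        Finset.card_eq_sum_card_fiberwise (fun i _ => Finset.mem_image_of_mem gfun (Finset.mem_univ i))
      have hsum2 : ∑ _v ∈ T, 2 ≤ ∑ v ∈ T, (Finset.univ.filter (fun i => gfun i = v)).card :=
        Finset.sum_le_sum hfib
      rw [Finset.sum_const, smul_eq_mul] at hsum2
      rw [Finset.card_univ, Fintype.card_fin] at hcardsum
      omega
    have hcrd : crd r ≤ T.card + (Fintype.card (Fin n) - E.card) := by
      rw [crd]
      have hsub : Finset.univ.image r ⊆ T ∪ (Finset.univ \ E) := by
        intro v hv
        rw [Finset.mem_image] at hv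
        obtain ⟨x, -, rfl⟩ := hv
        by_cases hxE : x ∈ E
        · rw [Finset.mem_union]
          left
          rw [hE, Finset.mem_biUnion] at hxE
          obtain ⟨i, -, hxi⟩ := hxE
          rw [hT, Finset.mem_image]
          exact ⟨i, Finset.mem_univ i, (hrconst i x hxi).symm⟩
        · rw [Finset.mem_union]
          right
          rw [hE4 x hxE]
          exact Finset.mem_sdiff.mpr ⟨Finset.mem_univ x, hxE⟩
      calc (Finset.univ.image r).card ≤ (T ∪ (Finset.univ \ E)).card := Finset.card_le_card hsub
        _ ≤ T.card + (Finset.univ \ E).card := Finset.card_union_le _ _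
        _ = T.card + (Fintype.card (Fin n) - E.card) := by
            rw [Finset.card_sdiff_of_subset (Finset.subset_univ E), Finset.card_univ]
    have hcnt := cnt_ge σ
    have hsupp_le : σ.support.card ≤ E.card := Finset.card_le_card hsuppE
    have hE_le : E.card ≤ Fintype.card (Fin n) := Finset.card_le_univ E
    have hkl : k * (l - 1) + k = k * l := by
      obtain ⟨l', rfl⟩ : ∃ l', l = l' + 1 := ⟨l - 1, by omega⟩
      simp [Nat.mul_succ]
    rw [hLlen] at hineq
    rw [Fintype.card_fin] at hcnt hcrd hE_le hineq
    omega

end Decomp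

end NklAux

open Equiv Equiv.Perm Finset

lemma bad_exists {n k l : ℕ} (hl : 2 < l) (M : Multiset ℕ)
    (hsum : M.sum ≤ n) (h2 : ∀ a ∈ M, 2 ≤ a) (hnl : l ∉ M)
    (heven : Even (M.sum + Multiset.card M)) (hbig : k * l < M.sum + Multiset.card M) :
    ∃ σ ∈ alternatingGroup (Fin n), ¬ IsProdOfCycles n k l σ := by
  obtain ⟨σ, hσ⟩ := (Equiv.Perm.exists_with_cycleType_iff (Fin n)).mpr
    ⟨by simpa using hsum, h2⟩
  refine ⟨σ, ?_, ?_⟩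
  · rw [Equiv.Perm.mem_alternatingGroup, Equiv.Perm.sign_of_cycleType, hσ]
    exact Even.neg_one_pow heven
  · rintro ⟨c, hcs, hprod⟩
    have hmb := NklAux.main_bound (by omega) c hcs
    rw [← hprod] at hmb
    have hsupp : σ.support.card = M.sum := by rw [← Equiv.Perm.sum_cycleType, hσ]
    have hfac : σ.cycleFactorsFinset.card = Multiset.card M := by
      rw [← hσ, Equiv.Perm.cycleType_def, Multiset.card_map]
      rfl
    rcases hmb with hmem | hle
    · rw [hσ] at hmem; exact hnl hmem
    · omega

lemma mk_M (n k l m : ℕ) (extra : Multiset ℕ) (hl : 2 < l)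
    (hex2 : ∀ a ∈ extra, 2 ≤ a) (hexl : l ∉ extra)
    (hsum : 2 * m + extra.sum ≤ n)
    (heven : Even (2 * m + extra.sum + (m + Multiset.card extra)))
    (hbig : k * l < 2 * m + extra.sum + (m + Multiset.card extra)) :
    ∃ σ ∈ alternatingGroup (Fin n), ¬ IsProdOfCycles n k l σ := by
  have hsum' : (Multiset.replicate m 2 + extra).sum = 2 * m + extra.sum := by
    rw [Multiset.sum_add, Multiset.sum_replicate, smul_eq_mul]
    ring_nf
  have hcard' : Multiset.card (Multiset.replicate m 2 + extra) = m + Multiset.card extra := by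
    rw [Multiset.card_add, Multiset.card_replicate]
  refine bad_exists hl (Multiset.replicate m 2 + extra) ?_ ?_ ?_ ?_ ?_
  · rw [hsum']; exact hsum
  · intro a ha
    rcases Multiset.mem_add.mp ha with ha' | ha'
    · rw [(Multiset.eq_of_mem_replicate ha' : a = 2)]
    · exact hex2 a ha'
  · intro hmem
    rcases Multiset.mem_add.mp hmem with h' | h'
    · have := Multiset.eq_of_mem_replicate h'
      omega
    · exact hexl h'
  · rw [hsum', hcard']; exact heven
  · rw [hsum', hcard']; exact hbig

lemma nkl_master (k l N : ℕ) (hl : 2 < l) (hK : 6 ≤ k * l)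
    (H0 : ∀ n, N < n → n % 4 = 0 → 2*(k*l) + 2 ≤ 3*n)
    (H1 : ∀ n, N < n → n % 4 = 1 → 2*(k*l) + 5 ≤ 3*n)
    (H2 : ∀ n, N < n → n % 4 = 2 → 2*(k*l) + 4 ≤ 3*n)
    (H3 : ∀ n, N < n → n % 4 = 3 → (l ≠ 3 → 2*(k*l) + 3 ≤ 3*n) ∧ (l = 3 → 2*(k*l) + 7 ≤ 3*n)) :
    NklLe k l N := by
  intro n hn
  have h4 : n % 4 = 0 ∨ n % 4 = 1 ∨ n % 4 = 2 ∨ n % 4 = 3 := by omega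
  rcases h4 with h4 | h4 | h4 | h4
  · have hH := H0 n hn h4
    refine mk_M n k l (n/2) 0 hl (by simp) (by simp) ?_ ?_ ?_
    · simp; omega
    · simp only [Multiset.sum_zero, Multiset.card_zero]
      rw [Nat.even_iff]; omega
    · simp only [Multiset.sum_zero, Multiset.card_zero]
      omega
  · have hH := H1 n hn h4
    refine mk_M n k l (n/2) 0 hl (by simp) (by simp) ?_ ?_ ?_
    · simp; omega
    · simp only [Multiset.sum_zero, Multiset.card_zero]
      rw [Nat.even_iff]; omega
    · simp only [Multiset.sum_zero, Multiset.card_zero]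
      omega
  · have hH := H2 n hn h4
    by_cases hl4 : l = 4
    · refine mk_M n k l (n/2 - 3) {3, 3} hl ?_ ?_ ?_ ?_ ?_
      · intro a ha
        have : a = 3 ∨ a = 3 := by
          rcases Multiset.mem_cons.mp ha with h' | h'
          · exact Or.inl h'
          · exact Or.inl (Multiset.mem_singleton.mp h')
        omega
      · intro hmem
        have : l = 3 ∨ l = 3 := by
          rcases Multiset.mem_cons.mp hmem with h' | h'
          · exact Or.inl h'
          · exact Or.inl (Multiset.mem_singleton.mp h')
        omega
      · have hs : ({3, 3} : Multiset ℕ).sum = 6 := rfl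
        rw [hs]; omega
      · have hs : ({3, 3} : Multiset ℕ).sum = 6 := rfl
        have hcc : Multiset.card ({3, 3} : Multiset ℕ) = 2 := rfl
        rw [hs, hcc, Nat.even_iff]; omega
      · have hs : ({3, 3} : Multiset ℕ).sum = 6 := rfl
        have hcc : Multiset.card ({3, 3} : Multiset ℕ) = 2 := rfl
        rw [hs, hcc]; omega
    · refine mk_M n k l (n/2 - 2) {4} hl ?_ ?_ ?_ ?_ ?_
      · intro a ha
        have := Multiset.mem_singleton.mp ha
        omega
      · intro hmem
        exact hl4 (Multiset.mem_singleton.mp hmem)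
      · have hs : ({4} : Multiset ℕ).sum = 4 := rfl
        rw [hs]; omega
      · have hs : ({4} : Multiset ℕ).sum = 4 := rfl
        have hcc : Multiset.card ({4} : Multiset ℕ) = 1 := rfl
        rw [hs, hcc, Nat.even_iff]; omega
      · have hs : ({4} : Multiset ℕ).sum = 4 := rfl
        have hcc : Multiset.card ({4} : Multiset ℕ) = 1 := rfl
        rw [hs, hcc]; omega
  · obtain ⟨hH3a, hH3b⟩ := H3 n hn h4
    by_cases hl3 : l = 3
    · have hH := hH3b hl3
      refine mk_M n k l ((n-5)/2) {4} hl ?_ ?_ ?_ ?_ ?_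
      · intro a ha
        have := Multiset.mem_singleton.mp ha
        omega
      · intro hmem
        have := Multiset.mem_singleton.mp hmem
        omega
      · have hs : ({4} : Multiset ℕ).sum = 4 := rfl
        rw [hs]; omega
      · have hs : ({4} : Multiset ℕ).sum = 4 := rfl
        have hcc : Multiset.card ({4} : Multiset ℕ) = 1 := rfl
        rw [hs, hcc, Nat.even_iff]; omega
      · have hs : ({4} : Multiset ℕ).sum = 4 := rfl
        have hcc : Multiset.card ({4} : Multiset ℕ) = 1 := rfl
        rw [hs, hcc]; omega
    · have hH := hH3a hl3
      refine mk_M n k l ((n-3)/2) {3} hl ?_ ?_ ?_ ?_ ?_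
      · intro a ha
        have := Multiset.mem_singleton.mp ha
        omega
      · intro hmem
        exact hl3 (Multiset.mem_singleton.mp hmem)
      · have hs : ({3} : Multiset ℕ).sum = 3 := rfl
        rw [hs]; omega
      · have hs : ({3} : Multiset ℕ).sum = 3 := rfl
        have hcc : Multiset.card ({3} : Multiset ℕ) = 1 := rfl
        rw [hs, hcc, Nat.even_iff]; omega
      · have hs : ({3} : Multiset ℕ).sum = 3 := rfl
        have hcc : Multiset.card ({3} : Multiset ℕ) = 1 := rfl
        rw [hs, hcc]; omega

end NklAuxSection

theorem general_upper_bound_n_k_l (k l : ℕ) (hk : 2 ≤ k) (hl : 2 < l)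
    (h : Odd l ∨ Even k) :
    (2 * k * l / 3 % 4 = 3 → NklLe k l (2 * k * l / 3)) ∧
    (2 * k * l / 3 % 4 = 1 → NklLe k l (2 * k * l / 3 + 1)) ∧
    (2 * k * l / 3 % 4 = 2 → NklLe k l (2 * k * l / 3 + 1) ∧
      (3 < l → 2 * k * l % 3 ≠ 2 → NklLe k l (2 * k * l / 3))) ∧
    (2 * k * l / 3 % 4 = 0 → NklLe k l (2 * k * l / 3 + 1)) := by
  have hK6 : 2 * 3 ≤ k * l := Nat.mul_le_mul hk (by omega)
  have h2kl : 2 * k * l = 2 * (k * l) := by ring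
  have hl3K : l = 3 → k * l = 3 * k := by
    intro h3; rw [h3]; ring
  rw [h2kl]
  refine ⟨?_, ?_, ?_, ?_⟩
  · intro hmod
    refine nkl_master k l _ hl hK6 ?_ ?_ ?_ ?_ <;> intro n hn h4
    · omega
    · omega
    · omega
    · constructor
      · intro _; omega
      · intro h3; have := hl3K h3; omega
  · intro hmod
    refine nkl_master k l _ hl hK6 ?_ ?_ ?_ ?_ <;> intro n hn h4
    · omega
    · omega
    · omega
    · constructor
      · intro _; omega
      · intro h3; have := hl3K h3; omega
  · intro hmod
    constructor
    · refine nkl_master k l _ hl hK6 ?_ ?_ ?_ ?_ <;> intro n hn h4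
      · omega
      · omega
      · omega
      · constructor
        · intro _; omega
        · intro h3; have := hl3K h3; omega
    · intro hl4 hmod3
      refine nkl_master k l _ hl hK6 ?_ ?_ ?_ ?_ <;> intro n hn h4
      · omega
      · omega
      · omega
      · constructor
        · intro _; omega
        · intro h3; omega
  · intro hmod
    refine nkl_master k l _ hl hK6 ?_ ?_ ?_ ?_ <;> intro n hn h4
    · omega
    · omega
    · omega
    · constructor
      · intro _; omega
      · intro h3; have := hl3K h3; omega
end
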